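/- arXiv:1206.4001 — 9 statements merged into one kernel-verified Lean document; each statement's English description precedes it below -/
import Mathlib

section
/- Let N be a positive integer and suppose the edges of the complete 3-uniform hypergraph on vertex set {1,...,N} are 2-colored with no monochromatic monotone path of length n. Then N ≤ C(2n, n). Consequently, N_3(2,n) ≤ C(2n,n) + 1. -/
/-- The coloring `c` of the triples of `{0,…,N-1}` admits a monochromatic monotone
path of length `n`: vertices `x_0 < x_1 < ⋯ < x_{n+1}` all of whose `n` consecutive
triples receive the same color. -/
def HasMonoPath3 {N q : ℕ} (n : ℕ) (c : Fin N → Fin N → Fin N → Fin q) : Prop :=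
  ∃ x : Fin (n + 2) → Fin N, StrictMono x ∧ ∃ col : Fin q,
    ∀ i : ℕ, ∀ _ : i < n,
      c (x ⟨i, by omega⟩) (x ⟨i + 1, by omega⟩) (x ⟨i + 2, by omega⟩) = col

section Aux

variable {N : ℕ} (c : Fin N → Fin N → Fin N → Fin 2)

/-- There is a monotone path with `m` edges, in color `col`, whose last two vertices
are `i` and `j`. -/
def IsPathEnd (col : Fin 2) (m : ℕ) (i j : Fin N) : Prop :=
  ∃ x : Fin (m + 2) → Fin N, StrictMono x ∧ x ⟨m, by omega⟩ = i ∧ x ⟨m + 1, by omega⟩ = j ∧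
    ∀ t : ℕ, ∀ _ : t < m,
      c (x ⟨t, by omega⟩) (x ⟨t + 1, by omega⟩) (x ⟨t + 2, by omega⟩) = col

lemma isPathEnd_zero (col : Fin 2) {i j : Fin N} (hij : i < j) : IsPathEnd c col 0 i j := by
  refine ⟨fun t => if (t : ℕ) = 0 then i else j, ?_, by simp, by simp, ?_⟩
  · intro a b hab
    have hab' : (a : ℕ) < b := hab
    have hb : (b : ℕ) = 1 := by omega
    have ha : (a : ℕ) = 0 := by omega
    simp only [ha, hb]
    simpa using hij
  · intro t ht; omega

lemma isPathEnd_succ (col : Fin 2) {m : ℕ} {i j k : Fin N} (h : IsPathEnd c col m i j)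
    (hjk : j < k) (hc : c i j k = col) : IsPathEnd c col (m + 1) j k := by
  obtain ⟨x, hx, hxi, hxj, hxt⟩ := h
  refine ⟨fun t => if h : (t : ℕ) < m + 2 then x ⟨t, h⟩ else k, ?_, ?_, ?_, ?_⟩
  · intro a b hab
    have hab' : (a : ℕ) < b := hab
    have ha : (a : ℕ) < m + 2 := by omega
    by_cases hb : (b : ℕ) < m + 2
    · simp only [dif_pos ha, dif_pos hb]
      exact hx (show ((⟨(a : ℕ), ha⟩ : Fin (m + 2)) : ℕ) < (⟨(b : ℕ), hb⟩ : Fin (m + 2)) from hab')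
    · simp only [dif_pos ha, dif_neg hb]
      calc x ⟨(a : ℕ), ha⟩ ≤ x ⟨m + 1, by omega⟩ := hx.monotone (by
            show (a : ℕ) ≤ m + 1; omega)
        _ = j := hxj
        _ < k := hjk
  · simp only [dif_pos (show m + 1 < m + 2 by omega)]
    exact hxj
  · simp only [dif_neg (show ¬ (m + 1 + 1 < m + 2) by omega)]
  · intro t ht
    by_cases htm : t < m
    · simp only [dif_pos (show t < m + 2 by omega), dif_pos (show t + 1 < m + 2 by omega),
        dif_pos (show t + 2 < m + 2 by omega)]
      exact hxt t htm
    · have htm' : t = m := by omega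
      subst htm'
      simp only [dif_pos (show t < t + 2 by omega), dif_pos (show t + 1 < t + 2 by omega),
        dif_neg (show ¬ (t + 2 < t + 2) by omega)]
      rw [hxi, hxj]
      exact hc

lemma isPathEnd_hasMono {n m : ℕ} (col : Fin 2) {i j : Fin N} (h : IsPathEnd c col m i j)
    (hnm : n ≤ m) : HasMonoPath3 n c := by
  obtain ⟨x, hx, -, -, hxt⟩ := h
  refine ⟨fun t => x (Fin.castLE (by omega) t), ?_, col, ?_⟩
  · intro a b hab
    exact hx (show (a : ℕ) < (b : ℕ) from hab)
  · intro t ht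
    exact hxt t (by omega)

variable {n : ℕ} (hn : 1 ≤ n) (hno : ¬ HasMonoPath3 n c)

include hn hno in
lemma isPathEnd_le {col : Fin 2} {m : ℕ} {i j : Fin N} (h : IsPathEnd c col m i j) :
    m ≤ n - 1 := by
  by_contra hm
  exact hno (isPathEnd_hasMono c col h (by omega))

/-- The length of the longest monotone path of color `col` ending with `i, j`. -/
noncomputable def rr (col : Fin 2) (i j : Fin N) : ℕ := sSup {m | IsPathEnd c col m i j}

include hn hno in
lemma rr_bddAbove (col : Fin 2) (i j : Fin N) : BddAbove {m | IsPathEnd c col m i j} :=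
  ⟨n - 1, fun m hm => isPathEnd_le c hn hno hm⟩

include hn hno in
lemma rr_mem {col : Fin 2} {i j : Fin N} (hij : i < j) : IsPathEnd c col (rr c col i j) i j :=
  Nat.sSup_mem ⟨0, isPathEnd_zero c col hij⟩ (rr_bddAbove c hn hno col i j)

include hn hno in
lemma rr_le (col : Fin 2) (i j : Fin N) : rr c col i j ≤ n - 1 := by
  rcases Set.eq_empty_or_nonempty {m | IsPathEnd c col m i j} with he | hne
  · simp [rr, he]
  · exact csSup_le hne fun m hm => isPathEnd_le c hn hno hm

include hn hno in
lemma rr_succ_le {col : Fin 2} {i j k : Fin N} (hij : i < j) (hjk : j < k)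
    (hc : c i j k = col) : rr c col i j + 1 ≤ rr c col j k :=
  le_csSup (rr_bddAbove c hn hno col j k)
    (isPathEnd_succ c col (rr_mem c hn hno hij) hjk hc)

/-- `gfun j a` is the height at abscissa `a` of the staircase associated to vertex `j`. -/
noncomputable def gfun (j : Fin N) (a : ℕ) : ℕ :=
  sSup {m | ∃ i, i < j ∧ a ≤ rr c 0 i j ∧ m ≤ rr c 1 i j + 1}

include hn hno in
lemma gfun_bddAbove (j : Fin N) (a : ℕ) :
    BddAbove {m | ∃ i, i < j ∧ a ≤ rr c 0 i j ∧ m ≤ rr c 1 i j + 1} := by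
  refine ⟨n, fun m hm => ?_⟩
  obtain ⟨i, _, _, hle⟩ := hm
  have := rr_le c hn hno 1 i j
  omega

include hn hno in
lemma gfun_le (j : Fin N) (a : ℕ) : gfun c j a ≤ n := by
  rcases Set.eq_empty_or_nonempty {m | ∃ i, i < j ∧ a ≤ rr c 0 i j ∧ m ≤ rr c 1 i j + 1}
    with he | hne
  · simp [gfun, he]
  · refine csSup_le hne fun m hm => ?_
    obtain ⟨i, _, _, hle⟩ := hm
    have := rr_le c hn hno 1 i j
    omega

include hn hno in
lemma gfun_char (j : Fin N) (a b : ℕ) :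
    (∃ i, i < j ∧ a ≤ rr c 0 i j ∧ b ≤ rr c 1 i j) ↔ b < gfun c j a := by
  constructor
  · rintro ⟨i, hij, hai, hbi⟩
    have hmem : b + 1 ∈ {m | ∃ i, i < j ∧ a ≤ rr c 0 i j ∧ m ≤ rr c 1 i j + 1} :=
      ⟨i, hij, hai, by omega⟩
    have := le_csSup (gfun_bddAbove c hn hno j a) hmem
    unfold gfun
    omega
  · intro hb
    have hne : {m | ∃ i, i < j ∧ a ≤ rr c 0 i j ∧ m ≤ rr c 1 i j + 1}.Nonempty := by
      by_contra hemp
      rw [Set.not_nonempty_iff_eq_empty] at hemp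
      simp [gfun, hemp] at hb
    have hmem := Nat.sSup_mem hne (gfun_bddAbove c hn hno j a)
    obtain ⟨i, hij, hai, hle⟩ := hmem
    unfold gfun at hb
    exact ⟨i, hij, hai, by omega⟩

include hn hno in
lemma gfun_anti (j : Fin N) {a a' : ℕ} (h : a ≤ a') : gfun c j a' ≤ gfun c j a := by
  rcases Set.eq_empty_or_nonempty {m | ∃ i, i < j ∧ a' ≤ rr c 0 i j ∧ m ≤ rr c 1 i j + 1}
    with he | hne
  · simp [gfun, he]
  · exact csSup_le_csSup (gfun_bddAbove c hn hno j a) hne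
      (fun m hm => by obtain ⟨i, hij, hai, hle⟩ := hm; exact ⟨i, hij, by omega, hle⟩)

include hn hno in
lemma key_ne {j k : Fin N} (hjk : j < k) :
    (Finset.univ.image (fun a : Fin n => (n - gfun c j a) + (a : ℕ))) ≠
    (Finset.univ.image (fun a : Fin n => (n - gfun c k a) + (a : ℕ))) := by
  intro hFF
  -- the two staircase functions are strictly monotone with equal images, hence equal
  have hsmono : ∀ l : Fin N, StrictMono (fun a : Fin n => (n - gfun c l a) + (a : ℕ)) := by
    intro l a b hab
    have h1 : gfun c l b ≤ gfun c l a := gfun_anti c hn hno l (le_of_lt hab)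
    have h2 : gfun c l a ≤ n := gfun_le c hn hno l a
    have hab' : (a : ℕ) < b := hab
    simp only
    omega
  have hcard : (Finset.univ.image (fun a : Fin n => (n - gfun c j a) + (a : ℕ))).card = n := by
    rw [Finset.card_image_of_injective _ (hsmono j).injective, Finset.card_univ,
      Fintype.card_fin]
  have hj := Finset.orderEmbOfFin_unique hcard
    (f := fun a : Fin n => (n - gfun c j a) + (a : ℕ))
    (fun x => Finset.mem_image_of_mem _ (Finset.mem_univ x)) (hsmono j)
  have hk := Finset.orderEmbOfFin_unique hcard
    (f := fun a : Fin n => (n - gfun c k a) + (a : ℕ))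
    (fun x => by rw [hFF]; exact Finset.mem_image_of_mem _ (Finset.mem_univ x)) (hsmono k)
  have hfun : (fun a : Fin n => (n - gfun c j a) + (a : ℕ)) =
      (fun a : Fin n => (n - gfun c k a) + (a : ℕ)) := by rw [hj, hk]
  have hg : ∀ a : Fin n, gfun c j (a : ℕ) = gfun c k (a : ℕ) := by
    intro a
    have := congrFun hfun a
    have h2 : gfun c j a ≤ n := gfun_le c hn hno j a
    have h3 : gfun c k a ≤ n := gfun_le c hn hno k a
    omega
  -- now derive the contradiction using the pair (j, k)
  set a := rr c 0 j k with ha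
  set b := rr c 1 j k with hb
  have han : a ≤ n - 1 := rr_le c hn hno 0 j k
  have hbn : b ≤ n - 1 := rr_le c hn hno 1 j k
  have h1 : b < gfun c k a := (gfun_char c hn hno k a b).mp ⟨j, hjk, le_refl _, le_refl _⟩
  have h2 : gfun c j a = gfun c k a := hg ⟨a, by omega⟩
  have h3 : ∃ i, i < j ∧ a ≤ rr c 0 i j ∧ b ≤ rr c 1 i j :=
    (gfun_char c hn hno j a b).mpr (by omega)
  obtain ⟨i, hij, hai, hbi⟩ := h3
  have hv2 := (c i j k).isLt
  by_cases h0 : ((c i j k : ℕ) = 0)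
  · have hc0 : c i j k = 0 := Fin.ext h0
    have := rr_succ_le c hn hno hij hjk hc0
    omega
  · have hc1 : c i j k = 1 := Fin.ext (by omega)
    have := rr_succ_le c hn hno hij hjk hc1
    omega

include hn hno in
lemma main_bound : N ≤ Nat.choose (2 * n) n := by
  classical
  set F : Fin N → Finset ℕ :=
    fun j => Finset.univ.image (fun a : Fin n => (n - gfun c j a) + (a : ℕ)) with hF
  have hsmono : ∀ l : Fin N, StrictMono (fun a : Fin n => (n - gfun c l a) + (a : ℕ)) := by
    intro l a b hab
    have h1 : gfun c l b ≤ gfun c l a := gfun_anti c hn hno l (le_of_lt hab)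
    have h2 : gfun c l a ≤ n := gfun_le c hn hno l a
    have hab' : (a : ℕ) < b := hab
    simp only
    omega
  have hmem : ∀ j : Fin N, F j ∈ Finset.powersetCard n (Finset.range (2 * n)) := by
    intro j
    rw [Finset.mem_powersetCard]
    constructor
    · intro x hx
      rw [hF] at hx
      simp only [Finset.mem_image, Finset.mem_univ, true_and] at hx
      obtain ⟨a, rfl⟩ := hx
      have h1 : (a : ℕ) < n := a.isLt
      rw [Finset.mem_range]
      omega
    · rw [hF]
      rw [Finset.card_image_of_injective _ (hsmono j).injective, Finset.card_univ,
        Fintype.card_fin]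
  have hinj : Set.InjOn F (Finset.univ : Finset (Fin N)) := by
    intro j _ k _ hFF
    by_contra hne
    rcases lt_trichotomy j k with h | h | h
    · exact key_ne c hn hno h hFF
    · exact hne h
    · exact key_ne c hn hno h hFF.symm
  have := Finset.card_le_card_of_injOn F (fun j _ => hmem j) hinj
  rw [Finset.card_univ, Fintype.card_fin, Finset.card_powersetCard, Finset.card_range] at this
  exact this

end Aux

/-- If the triples of `{1,…,N}` (`N ≥ 1`) are `2`-colored with no monochromatic monotone
path of length `n`, then `N ≤ C(2n,n)`; consequently `N_3(2,n) ≤ C(2n,n) + 1`. -/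
theorem stmt4 (n : ℕ) :
    (∀ N : ℕ, 1 ≤ N → ∀ c : Fin N → Fin N → Fin N → Fin 2,
        ¬ HasMonoPath3 n c → N ≤ Nat.choose (2 * n) n) ∧
    sInf {N : ℕ | ∀ c : Fin N → Fin N → Fin N → Fin 2, HasMonoPath3 n c}
      ≤ Nat.choose (2 * n) n + 1 := by
  have key : ∀ N : ℕ, 1 ≤ N → ∀ c : Fin N → Fin N → Fin N → Fin 2,
      ¬ HasMonoPath3 n c → N ≤ Nat.choose (2 * n) n := by
    intro N hN c hno
    by_cases hn : n = 0
    · subst hn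
      simp only [Nat.choose_self]
      by_contra hN2
      apply hno
      refine ⟨fun t => ⟨(t : ℕ), by omega⟩, ?_, 0, ?_⟩
      · intro a b hab
        exact (show ((a : ℕ) : ℕ) < ((b : ℕ) : ℕ) from hab)
      · intro i hi; omega
    · exact main_bound c (by omega) hno
  refine ⟨key, ?_⟩
  apply Nat.sInf_le
  intro c
  by_contra hno
  have hpos : 1 ≤ Nat.choose (2 * n) n := Nat.choose_pos (by omega)
  have := key (Nat.choose (2 * n) n + 1) (by omega) c hno
  omega
end

section
/- Let q ≥ 2, n ≥ 2, and let P_{q-1}(n) denote the number of down-sets of the poset [n]^q with the coordinatewise order. If the edges of the complete 3-uniform hypergraph on vertex set {1,...,N} are q-colored with no monochromatic monotone path of length n, then N ≤ P_{q-1}(n). That is, N_3(q,n) ≤ P_{q-1}(n) + 1. -/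
/-- `S ⊆ [n]^q` is a down-set (w.r.t. the coordinatewise order). -/
def IsDownSet {d n : ℕ} (S : Set (Fin d → Fin n)) : Prop :=
  ∀ ⦃x y : Fin d → Fin n⦄, x ≤ y → y ∈ S → x ∈ S

/-- `P_{q-1}(n)`: the number of down-sets of `[n]^q`. -/
noncomputable def Pnum (q n : ℕ) : ℕ := Nat.card {S : Set (Fin q → Fin n) // IsDownSet S}

/-- A monochromatic (color `k`) monotone path of length `m` ending in the pair `(a, b)`. -/
def PathEnd {N q : ℕ} (c : Fin N → Fin N → Fin N → Fin q) (k : Fin q)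
    (a b : Fin N) (m : ℕ) : Prop :=
  ∃ x : Fin (m + 2) → Fin N, StrictMono x ∧
    x ⟨m, by omega⟩ = a ∧ x ⟨m + 1, by omega⟩ = b ∧
    ∀ i : ℕ, ∀ _ : i < m,
      c (x ⟨i, by omega⟩) (x ⟨i + 1, by omega⟩) (x ⟨i + 2, by omega⟩) = k

lemma pathEnd_zero {N q : ℕ} (c : Fin N → Fin N → Fin N → Fin q) (k : Fin q)
    {a b : Fin N} (hab : a < b) : PathEnd c k a b 0 := by
  refine ⟨fun i => if i.1 = 0 then a else b, ?_, by simp, by simp, ?_⟩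
  · intro i j hij
    have hi := i.2; have hj := j.2
    have h1 : i.1 < j.1 := hij
    have : i.1 = 0 ∧ j.1 = 1 := by omega
    simp [this.1, this.2, hab]
  · intro i hi; omega

lemma pathEnd_lt {N q n : ℕ} {c : Fin N → Fin N → Fin N → Fin q}
    (hnp : ¬ HasMonoPath3 n c) {k : Fin q} {a b : Fin N} {m : ℕ}
    (h : PathEnd c k a b m) : m < n := by
  by_contra hmn
  push_neg at hmn
  obtain ⟨x, hmono, -, -, htr⟩ := h
  refine hnp ⟨fun i => x ⟨i.1, by have := i.2; omega⟩, ?_, k, ?_⟩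
  · intro i j hij
    exact hmono (show (⟨i.1, by have := i.2; omega⟩ : Fin (m + 2)) <
      ⟨j.1, by have := j.2; omega⟩ from hij)
  · intro i hi
    exact htr i (lt_of_lt_of_le hi hmn)

lemma pathEnd_bddAbove {N q n : ℕ} {c : Fin N → Fin N → Fin N → Fin q}
    (hnp : ¬ HasMonoPath3 n c) (k : Fin q) (a b : Fin N) :
    BddAbove {m | PathEnd c k a b m} :=
  ⟨n, fun m hm => (pathEnd_lt hnp hm).le⟩

/-- The length of a longest color-`k` monotone path ending in `(a, b)`. -/
noncomputable def Llen {N q : ℕ} (c : Fin N → Fin N → Fin N → Fin q) (k : Fin q)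
    (a b : Fin N) : ℕ := sSup {m | PathEnd c k a b m}

lemma llen_mem {N q n : ℕ} {c : Fin N → Fin N → Fin N → Fin q}
    (hnp : ¬ HasMonoPath3 n c) (k : Fin q) {a b : Fin N} (hab : a < b) :
    PathEnd c k a b (Llen c k a b) :=
  Nat.sSup_mem ⟨0, by exact pathEnd_zero c k hab⟩ (pathEnd_bddAbove hnp k a b)

lemma llen_lt {N q n : ℕ} {c : Fin N → Fin N → Fin N → Fin q}
    (hnp : ¬ HasMonoPath3 n c) (k : Fin q) {a b : Fin N} (hab : a < b) :
    Llen c k a b < n :=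
  pathEnd_lt hnp (llen_mem hnp k hab)

lemma llen_succ {N q n : ℕ} {c : Fin N → Fin N → Fin N → Fin q}
    (hnp : ¬ HasMonoPath3 n c) {a b b' : Fin N} (hab : a < b) (hbb : b < b') :
    Llen c (c a b b') a b + 1 ≤ Llen c (c a b b') b b' := by
  set k := c a b b' with hk
  set m := Llen c k a b with hm
  obtain ⟨x, hmono, hxa, hxb, htr⟩ := llen_mem hnp k hab
  have key : PathEnd c k b b' (m + 1) := by
    refine ⟨fun i => if h : i.1 < m + 2 then x ⟨i.1, h⟩ else b', ?_, ?_, ?_, ?_⟩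
    · intro i j hij
      have hi := i.2; have hj := j.2
      have h1 : i.1 < j.1 := hij
      by_cases hjc : j.1 < m + 2
      · have hic : i.1 < m + 2 := by omega
        simp only [dif_pos hjc, dif_pos hic]
        exact hmono (show (⟨i.1, hic⟩ : Fin (m + 2)) < ⟨j.1, hjc⟩ from h1)
      · by_cases hic : i.1 < m + 2
        · simp only [dif_pos hic, dif_neg hjc]
          calc x ⟨i.1, hic⟩ ≤ x ⟨m + 1, by omega⟩ := by
                apply hmono.monotone
                show i.1 ≤ m + 1
                omega
            _ = b := hxb
            _ < b' := hbb
        · omega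
    · exact (dif_pos (show m + 1 < m + 2 by omega)).trans hxb
    · exact dif_neg (show ¬(m + 1 + 1 < m + 2) by omega)
    · intro i hi
      by_cases him : i < m
      · have h0 : i < m + 2 := by omega
        have h1 : i + 1 < m + 2 := by omega
        have h2 : i + 2 < m + 2 := by omega
        simp only [dif_pos h0, dif_pos h1, dif_pos h2]
        exact htr i him
      · have hieq : i = m := by omega
        have h0 : i < m + 2 := by omega
        have h1 : i + 1 < m + 2 := by omega
        simp only [dif_pos h0, dif_pos h1, dif_neg (show ¬ (i + 2 < m + 2) by omega)]
        have e0 : x ⟨i, h0⟩ = a := by subst hieq; exact hxa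
        have e1 : x ⟨i + 1, h1⟩ = b := by subst hieq; exact hxb
        rw [e0, e1]
  exact le_csSup (pathEnd_bddAbove hnp k b b') (by exact key)

/-- The vector of longest-path lengths, truncated into `Fin n`. -/
noncomputable def Lvec {N q n : ℕ} (hn : 0 < n) (c : Fin N → Fin N → Fin N → Fin q)
    (a b : Fin N) : Fin q → Fin n :=
  fun k => ⟨min (Llen c k a b) (n - 1), by omega⟩

/-- The down-set associated to a vertex `v`. -/
noncomputable def vertexSet {N q n : ℕ} (hn : 0 < n) (c : Fin N → Fin N → Fin N → Fin q)
    (v : Fin N) : Set (Fin q → Fin n) :=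
  {z | ∃ a : Fin N, a < v ∧ z ≤ Lvec hn c a v}

lemma vertexSet_isDownSet {N q n : ℕ} (hn : 0 < n) (c : Fin N → Fin N → Fin N → Fin q)
    (v : Fin N) : IsDownSet (vertexSet hn c v) := by
  rintro x y hxy ⟨a, hav, hy⟩
  exact ⟨a, hav, le_trans hxy hy⟩

lemma vertexSet_ne {N q n : ℕ} (hn : 0 < n) {c : Fin N → Fin N → Fin N → Fin q}
    (hnp : ¬ HasMonoPath3 n c) {a b : Fin N} (hab : a < b) :
    vertexSet hn c a ≠ vertexSet hn c b := by
  intro heq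
  have hmem : Lvec hn c a b ∈ vertexSet hn c b := ⟨a, hab, le_refl _⟩
  rw [← heq] at hmem
  obtain ⟨x, hxa, hle⟩ := hmem
  have hxb : x < b := lt_trans hxa hab
  set k := c x a b with hk
  have h1 : Llen c k x a + 1 ≤ Llen c k a b := llen_succ hnp hxa hab
  have h2 : (Lvec hn c a b k : ℕ) ≤ (Lvec hn c x a k : ℕ) := hle k
  have hb1 : Llen c k a b < n := llen_lt hnp k hab
  have hb2 : Llen c k x a < n := llen_lt hnp k hxa
  simp only [Lvec] at h2
  omega

/-- If the triples of `{1,…,N}` are `q`-colored with no monochromatic monotone path of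
length `n`, then `N ≤ P_{q-1}(n)`; that is, `N_3(q,n) ≤ P_{q-1}(n) + 1`. -/
theorem stmt5 (q n : ℕ) (hq : 2 ≤ q) (hn : 2 ≤ n) :
    (∀ N : ℕ, ∀ c : Fin N → Fin N → Fin N → Fin q,
        ¬ HasMonoPath3 n c → N ≤ Pnum q n) ∧
    sInf {N : ℕ | ∀ c : Fin N → Fin N → Fin N → Fin q, HasMonoPath3 n c}
      ≤ Pnum q n + 1 := by
  have hn0 : 0 < n := by omega
  have main : ∀ N : ℕ, ∀ c : Fin N → Fin N → Fin N → Fin q,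
      ¬ HasMonoPath3 n c → N ≤ Pnum q n := by
    intro N c hnp
    have hinj : Function.Injective
        (fun v : Fin N => (⟨vertexSet hn0 c v, vertexSet_isDownSet hn0 c v⟩ :
          {S : Set (Fin q → Fin n) // IsDownSet S})) := by
      intro a b hab
      simp only [Subtype.mk.injEq] at hab
      by_contra hne
      rcases lt_or_gt_of_ne hne with h | h
      · exact vertexSet_ne hn0 hnp h hab
      · exact vertexSet_ne hn0 hnp h hab.symm
    calc N = Nat.card (Fin N) := (Nat.card_eq_fintype_card.trans (Fintype.card_fin N)).symm
      _ ≤ Pnum q n := Nat.card_le_card_of_injective _ hinj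
  refine ⟨main, ?_⟩
  apply Nat.sInf_le
  intro c
  by_contra hnp
  have := main (Pnum q n + 1) c hnp
  omega
end

section
/- Let n ≥ 2 and N = C(2n,n). There exists a 2-coloring of the triples of a linearly ordered N-element set with no monochromatic monotone path of length n. That is, N_3(2,n) > C(2n,n). -/
noncomputable instance lexLinear (n m : ℕ) : LinearOrder (Lex (Fin n → Fin m)) :=
  @Pi.Lex.linearOrder (Fin n) (fun _ => Fin m)
    (Fin.instLinearOrder) (Finite.to_wellFoundedLT) (fun _ => inferInstance)

instance (n m : ℕ) : DecidablePred (fun a : Lex (Fin n → Fin m) => Antitone (ofLex a)) :=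
  fun a => decidable_of_iff (∀ i j : Fin n, i ≤ j → ofLex a j ≤ ofLex a i)
    ⟨fun h _ _ hij => h _ _ hij, fun h _ _ hij => h hij⟩

/-- vertex set: antitone sequences, ordered lexicographically -/
def Vtype (n : ℕ) : Type := {a : Lex (Fin n → Fin (n+1)) // Antitone (ofLex a)}

noncomputable instance (n : ℕ) : LinearOrder (Vtype n) := Subtype.instLinearOrder _
instance (n : ℕ) : Fintype (Vtype n) := Subtype.fintype _

lemma vlt_iff {n : ℕ} (A B : Vtype n) : A < B ↔
    ∃ i, (∀ j, j < i → ofLex A.1 j = ofLex B.1 j) ∧ ofLex A.1 i < ofLex B.1 i :=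
  ⟨fun h => h, fun h => h⟩

/-- value of the sequence at a natural index (0 outside range) -/
def av {n : ℕ} (A : Vtype n) (i : ℕ) : ℕ :=
  if h : i < n then (ofLex A.1 ⟨i, h⟩ : ℕ) else 0

lemma av_le {n : ℕ} (A : Vtype n) (i : ℕ) : av A i ≤ n := by
  rw [av]
  split
  · exact Nat.lt_succ_iff.mp (ofLex A.1 ⟨i, by assumption⟩).isLt
  · omega

lemma av_anti {n : ℕ} (A : Vtype n) {i j : ℕ} (hij : i ≤ j) (hj : j < n) :
    av A j ≤ av A i := by
  have hi : i < n := by omega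
  rw [av, dif_pos hj, av, dif_pos hi]
  exact A.2 (show (⟨i, hi⟩ : Fin n) ≤ ⟨j, hj⟩ from hij)

/-- first differing index, as a natural number -/
noncomputable def dd {n : ℕ} (A B : Vtype n) : ℕ :=
  sInf {i : ℕ | av A i ≠ av B i}

lemma dd_spec {n : ℕ} {A B : Vtype n} (hAB : A < B) :
    dd A B < n ∧ av A (dd A B) < av B (dd A B) := by
  obtain ⟨i, hpre, hi⟩ := (vlt_iff A B).1 hAB
  have hval : av A (i : ℕ) < av B (i : ℕ) := by
    simp only [av, dif_pos i.isLt]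
    exact_mod_cast (by simpa [Fin.eta] using hi : ofLex A.1 ⟨(i : ℕ), i.isLt⟩ < ofLex B.1 ⟨(i : ℕ), i.isLt⟩)
  have hmem : (i : ℕ) ∈ {j : ℕ | av A j ≠ av B j} := Nat.ne_of_lt hval
  have hne : {j : ℕ | av A j ≠ av B j}.Nonempty := ⟨i, hmem⟩
  have hdne : av A (dd A B) ≠ av B (dd A B) := Nat.sInf_mem hne
  have hle : dd A B ≤ i := Nat.sInf_le hmem
  have heq : dd A B = (i : ℕ) := by
    rcases lt_or_eq_of_le hle with h | h
    · exfalso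
      apply hdne
      have hdn : dd A B < n := lt_of_lt_of_le h (Nat.le_of_lt_succ (Nat.lt_succ_of_lt i.isLt))
      have := hpre ⟨dd A B, by omega⟩ (by simpa [Fin.lt_def] using h)
      simp only [av, dif_pos hdn]
      exact_mod_cast congrArg Fin.val this
    · exact h
  rw [heq]
  exact ⟨i.isLt, hval⟩

/-- the coloring on `Vtype n` -/
noncomputable def colV {n : ℕ} (A B C : Vtype n) : Fin 2 :=
  if dd A B < dd B C then 0 else 1

lemma colV_eq_zero {n : ℕ} {A B C : Vtype n} (h : colV A B C = 0) : dd A B < dd B C := by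
  by_contra hc
  rw [colV, if_neg hc] at h
  exact absurd h (by decide)

lemma colV_eq_one {n : ℕ} {A B C : Vtype n} (h : colV A B C = 1) : dd B C ≤ dd A B := by
  by_contra hc
  rw [colV, if_pos (by omega)] at h
  exact absurd h (by decide)

lemma steps {g : ℕ → ℕ} {m : ℕ} (h : ∀ i < m, g i < g (i + 1)) :
    ∀ i ≤ m, g 0 + i ≤ g i := by
  intro i
  induction i with
  | zero => omega
  | succ k ih =>
      intro hk
      have h1 := ih (by omega)
      have h2 := h k (by omega)
      omega

lemma noPathV (n : ℕ) (hn : 1 ≤ n) (v : Fin (n + 2) → Vtype n) (hv : StrictMono v)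
    (col : Fin 2)
    (hcol : ∀ i : ℕ, ∀ h : i < n,
      colV (v ⟨i, by omega⟩) (v ⟨i + 1, by omega⟩) (v ⟨i + 2, by omega⟩) = col) : False := by
  set vv : ℕ → Vtype n := fun i => v ⟨min i (n + 1), by omega⟩ with hvvdef
  have hvv : ∀ i : ℕ, ∀ h : i ≤ n + 1, vv i = v ⟨i, by omega⟩ := by
    intro i h
    simp only [hvvdef]
    congr 1
    exact Fin.ext (by simpa using Nat.min_eq_left h)
  have hvlt : ∀ i : ℕ, i ≤ n → vv i < vv (i + 1) := by
    intro i h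
    rw [hvv i (by omega), hvv (i + 1) (by omega)]
    exact hv (by simp [Fin.lt_def])
  have hcol' : ∀ i : ℕ, i < n → colV (vv i) (vv (i + 1)) (vv (i + 2)) = col := by
    intro i hi
    rw [hvv i (by omega), hvv (i + 1) (by omega), hvv (i + 2) (by omega)]
    exact hcol i hi
  set d : ℕ → ℕ := fun i => dd (vv i) (vv (i + 1)) with hd
  have hdlt : ∀ i : ℕ, i ≤ n → d i < n := fun i h => (dd_spec (hvlt i h)).1
  have hcases : col = 0 ∨ col = 1 := by omega
  rcases hcases with rfl | rfl
  · have hstep : ∀ i < n, d i < d (i + 1) := fun i hi => colV_eq_zero (hcol' i hi)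
    have := steps hstep n le_rfl
    have := hdlt n le_rfl
    omega
  · have hstep : ∀ i < n, d (i + 1) ≤ d i := fun i hi => colV_eq_one (hcol' i hi)
    set w : ℕ → ℕ := fun i => av (vv (i + 1)) (d i) with hw
    have hw1 : 1 ≤ w 0 := by
      have := (dd_spec (hvlt 0 (by omega))).2
      simp only [hw, hd]
      omega
    have hwub : w n ≤ n := av_le _ _
    have hwstep : ∀ i < n, w i < w (i + 1) := by
      intro i hi
      have h1 : av (vv (i + 1)) (d (i + 1)) < av (vv (i + 2)) (d (i + 1)) :=
        (dd_spec (hvlt (i + 1) (by omega))).2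
      have h2 : av (vv (i + 1)) (d i) ≤ av (vv (i + 1)) (d (i + 1)) :=
        av_anti _ (hstep i hi) (hdlt i (by omega))
      simp only [hw, hd, show i + 1 + 1 = i + 2 from rfl] at h1 h2 ⊢
      omega
    have := steps hwstep n le_rfl
    omega

lemma smono_add {n m : ℕ} {F : Fin n → Fin m} (hF : StrictMono F) :
    ∀ k j : ℕ, ∀ h : j + k < n, (F ⟨j, by omega⟩ : ℕ) + k ≤ (F ⟨j + k, h⟩ : ℕ) := by
  intro k
  induction k with
  | zero => intro j h; simp
  | succ l ih =>
      intro j h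
      have h1 := ih j (by omega)
      have h2 : (F ⟨j + l, by omega⟩ : ℕ) < (F ⟨j + (l + 1), h⟩ : ℕ) := by
        have := hF (show (⟨j + l, by omega⟩ : Fin n) < ⟨j + (l + 1), h⟩ from by
          simp [Fin.lt_def])
        exact this
      omega

lemma smono_lb {n m : ℕ} {F : Fin n → Fin m} (hF : StrictMono F) (j : Fin n) :
    (j : ℕ) ≤ (F j : ℕ) := by
  rcases Nat.eq_zero_or_pos (j : ℕ) with h | h
  · omega
  · have := smono_add hF (j : ℕ) 0 (by omega)
    have he : (⟨0 + (j : ℕ), by omega⟩ : Fin n) = j := Fin.ext (by simp)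
    rw [he] at this
    omega

lemma smono_ub {n : ℕ} {F : Fin n → Fin (2 * n)} (hF : StrictMono F) (j : Fin n) :
    (F j : ℕ) ≤ n + j := by
  have hn : 1 ≤ n := by have := j.isLt; omega
  have h1 := smono_add hF (n - 1 - (j : ℕ)) (j : ℕ) (by have := j.isLt; omega)
  have h2 : (F ⟨(j : ℕ) + (n - 1 - (j : ℕ)), by have := j.isLt; omega⟩ : ℕ) < 2 * n :=
    Fin.isLt _
  have hj : (⟨(j : ℕ), j.isLt⟩ : Fin n) = j := Fin.ext rfl
  rw [hj] at h1
  have := j.isLt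
  omega

/-- the injection from `n`-subsets of `Fin (2n)` into antitone sequences -/
noncomputable def subToV (n : ℕ) (s : {s : Finset (Fin (2 * n)) // s.card = n}) : Vtype n :=
  ⟨toLex (fun i : Fin n =>
    (⟨((s.1.orderEmbOfFin s.2) i.rev : ℕ) - (i.rev : ℕ), by
      have h1 := smono_ub (s.1.orderEmbOfFin s.2).strictMono i.rev
      omega⟩ : Fin (n + 1))), by
    intro i j hij
    have hrev : j.rev ≤ i.rev := Fin.rev_le_rev.mpr hij
    have h1 := smono_lb (s.1.orderEmbOfFin s.2).strictMono j.rev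
    have h2 := smono_lb (s.1.orderEmbOfFin s.2).strictMono i.rev
    rcases eq_or_lt_of_le hrev with he | hlt
    · simp only [ofLex_toLex]
      have hji : j = i := Fin.rev_injective he
      subst hji
      exact le_rfl
    · have h3 := smono_add (s.1.orderEmbOfFin s.2).strictMono
        ((i.rev : ℕ) - (j.rev : ℕ)) (j.rev : ℕ) (by
          have := i.rev.isLt
          have : (j.rev : ℕ) < (i.rev : ℕ) := hlt
          omega)
      have he : (⟨(j.rev : ℕ) + ((i.rev : ℕ) - (j.rev : ℕ)), by
          have := i.rev.isLt
          have : (j.rev : ℕ) < (i.rev : ℕ) := hlt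
          omega⟩ : Fin n) = i.rev := Fin.ext (by
        simp only []
        have : (j.rev : ℕ) < (i.rev : ℕ) := hlt
        omega)
      rw [he] at h3
      have hje : (⟨(j.rev : ℕ), j.rev.isLt⟩ : Fin n) = j.rev := Fin.ext rfl
      rw [hje] at h3
      simp only [ofLex_toLex, Fin.mk_le_mk]
      have : (j.rev : ℕ) < (i.rev : ℕ) := hlt
      omega⟩

lemma subToV_inj (n : ℕ) : Function.Injective (subToV n) := by
  intro s t hst
  have hfun : ∀ i : Fin n,
      ((s.1.orderEmbOfFin s.2) i.rev : ℕ) - (i.rev : ℕ) =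
      ((t.1.orderEmbOfFin t.2) i.rev : ℕ) - (i.rev : ℕ) := by
    intro i
    have := congrArg (fun A : Vtype n => (ofLex A.1 i : ℕ)) hst
    simpa [subToV] using this
  have hfun2 : ∀ k : Fin n, (s.1.orderEmbOfFin s.2) k = (t.1.orderEmbOfFin t.2) k := by
    intro k
    have h1 := hfun k.rev
    rw [Fin.rev_rev] at h1
    have h2 := smono_lb (s.1.orderEmbOfFin s.2).strictMono k
    have h3 := smono_lb (t.1.orderEmbOfFin t.2).strictMono k
    exact Fin.ext (by omega)
  have hr1 : (s.1 : Set (Fin (2 * n))) = (t.1 : Set (Fin (2 * n))) := by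
    have hco : ⇑(s.1.orderEmbOfFin s.2) = ⇑(t.1.orderEmbOfFin t.2) := funext hfun2
    rw [← Finset.range_orderEmbOfFin s.1 s.2, ← Finset.range_orderEmbOfFin t.1 t.2, hco]
  exact Subtype.ext (Finset.coe_injective hr1)

lemma choose_le_cardV (n : ℕ) : Nat.choose (2 * n) n ≤ Fintype.card (Vtype n) := by
  classical
  have h := Fintype.card_le_of_injective _ (subToV_inj n)
  rwa [Fintype.card_finset_len, Fintype.card_fin] at h

/-- length of the longest monochromatic tight path of color `col` ending with pair `(x,y)` -/
def FP (c' : ℕ → ℕ → ℕ → Fin 2) (col : Fin 2) (x y : ℕ) : ℕ :=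
  (Finset.range x).attach.sup fun w =>
    if c' w.1 x y = col then FP c' col w.1 x + 1 else 0
termination_by x
decreasing_by exact Finset.mem_range.mp w.2

lemma FP_succ_le (c' : ℕ → ℕ → ℕ → Fin 2) (col : Fin 2) {x y z : ℕ} (hxy : x < y)
    (h : c' x y z = col) : FP c' col x y + 1 ≤ FP c' col y z := by
  conv_rhs => rw [FP]
  have hmem : (⟨x, Finset.mem_range.mpr hxy⟩ : {w // w ∈ Finset.range y}) ∈
      (Finset.range y).attach := Finset.mem_attach _ _
  have := Finset.le_sup (f := fun w : {w // w ∈ Finset.range y} =>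
    if c' w.1 y z = col then FP c' col w.1 y + 1 else 0) hmem
  simp only [if_pos h] at this
  exact this

lemma FP_chain (c' : ℕ → ℕ → ℕ → Fin 2) (col : Fin 2) :
    ∀ x y : ℕ, x < y → ∃ g : ℕ → ℕ,
      g (FP c' col x y) = x ∧ g (FP c' col x y + 1) = y ∧
      (∀ i ≤ FP c' col x y, g i < g (i + 1)) ∧
      (∀ i < FP c' col x y, c' (g i) (g (i + 1)) (g (i + 2)) = col) := by
  intro x
  induction x using Nat.strong_induction_on with
  | _ x ih =>
    intro y hxy
    rcases Nat.eq_zero_or_pos (FP c' col x y) with h0 | hpos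
    · refine ⟨fun i => if i = 0 then x else y, by simp [h0], by simp [h0], ?_, by omega⟩
      intro i hi
      have : i = 0 := by omega
      subst this
      simpa using hxy
    · have hne : ((Finset.range x).attach).Nonempty := by
        by_contra hc
        rw [Finset.not_nonempty_iff_eq_empty] at hc
        rw [FP, hc] at hpos
        simp at hpos
      obtain ⟨w, _, hw⟩ := Finset.exists_mem_eq_sup ((Finset.range x).attach) hne
        (fun w : {w // w ∈ Finset.range x} =>
          if c' w.1 x y = col then FP c' col w.1 x + 1 else 0)
      have hfp : FP c' col x y =
          if c' w.1 x y = col then FP c' col w.1 x + 1 else 0 := by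
        rw [FP]; exact hw
      have hcw : c' w.1 x y = col := by
        by_contra hc
        rw [if_neg hc] at hfp
        omega
      rw [if_pos hcw] at hfp
      have hwx : w.1 < x := Finset.mem_range.mp w.2
      obtain ⟨g, hg1, hg2, hg3, hg4⟩ := ih w.1 hwx x hwx
      set m := FP c' col w.1 x with hm
      refine ⟨fun i => if i ≤ m + 1 then g i else y, ?_, ?_, ?_, ?_⟩
      · rw [hfp]
        show (if m + 1 ≤ m + 1 then g (m + 1) else y) = x
        rw [if_pos (le_refl (m + 1))]
        exact hg2
      · rw [hfp]
        show (if m + 1 + 1 ≤ m + 1 then g (m + 1 + 1) else y) = y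
        rw [if_neg (by omega)]
      · intro i hi
        rw [hfp] at hi
        show (if i ≤ m + 1 then g i else y) < (if i + 1 ≤ m + 1 then g (i + 1) else y)
        rcases Nat.lt_or_ge i (m + 1) with h | h
        · rw [if_pos (by omega), if_pos (by omega)]
          exact hg3 i (by omega)
        · have : i = m + 1 := by omega
          subst this
          rw [if_pos (le_refl _), if_neg (by omega), hg2]
          exact hxy
      · intro i hi
        rw [hfp] at hi
        show c' (if i ≤ m + 1 then g i else y) (if i + 1 ≤ m + 1 then g (i + 1) else y)
          (if i + 2 ≤ m + 1 then g (i + 2) else y) = col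
        rcases Nat.lt_or_ge i m with h | h
        · rw [if_pos (by omega), if_pos (by omega), if_pos (by omega)]
          exact hg4 i h
        · have : i = m := by omega
          subst this
          rw [if_pos (by omega), if_pos (by omega), if_neg (by omega), hg1, hg2]
          exact hcw

lemma steps_lt {g : ℕ → ℕ} {m : ℕ} (h : ∀ i ≤ m, g i < g (i + 1)) :
    ∀ j, j ≤ m + 1 → ∀ i, i < j → g i < g j := by
  intro j
  induction j with
  | zero => omega
  | succ k ihk =>
      intro hk i hi
      rcases Nat.lt_or_ge i k with h2 | h2
      · exact lt_trans (ihk (by omega) i h2) (h k (by omega))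
      · have : i = k := by omega
        subst this
        exact h i (by omega)

lemma pairBound : ∀ (q : ℕ) (S : Finset ℕ) (χ : ℕ → ℕ → ℕ),
    (∀ x ∈ S, ∀ y ∈ S, x < y → χ x y < q) →
    (∀ x ∈ S, ∀ y ∈ S, ∀ z ∈ S, x < y → y < z → χ x y ≠ χ y z) →
    S.card ≤ 2 ^ q := by
  intro q
  induction q with
  | zero =>
      intro S χ hb _
      rw [pow_zero]
      rw [Finset.card_le_one]
      intro a ha b hb'
      by_contra hab
      rcases lt_trichotomy a b with h | h | h
      · exact absurd (hb a ha b hb' h) (by omega)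
      · exact hab h
      · exact absurd (hb b hb' a ha h) (by omega)
  | succ q ih =>
      intro S χ hb hpath
      classical
      set T := S.filter (fun v => ∀ z ∈ S, v < z → χ v z ≠ q) with hT
      set U := S.filter (fun v => ¬(∀ z ∈ S, v < z → χ v z ≠ q)) with hU
      have hcard : T.card + U.card = S.card := Finset.card_filter_add_card_filter_not _
      have hTb : T.card ≤ 2 ^ q := by
        apply ih T χ
        · intro x hx y hy hxy
          have hxS := Finset.mem_filter.mp hx
          have hyS := Finset.mem_filter.mp hy
          have h1 := hb x hxS.1 y hyS.1 hxy
          have h2 := hxS.2 y hyS.1 hxy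
          omega
        · intro x hx y hy z hz hxy hyz
          exact hpath x (Finset.mem_filter.mp hx).1 y (Finset.mem_filter.mp hy).1
            z (Finset.mem_filter.mp hz).1 hxy hyz
      have hUb : U.card ≤ 2 ^ q := by
        apply ih U χ
        · intro x hx y hy hxy
          have hxS := Finset.mem_filter.mp hx
          have hyS := Finset.mem_filter.mp hy
          have h1 := hb x hxS.1 y hyS.1 hxy
          have h2 : χ x y ≠ q := by
            intro hq
            have := hyS.2
            push_neg at this
            obtain ⟨z, hzS, hyz, hzq⟩ := this
            exact hpath x hxS.1 y hyS.1 z hzS hxy hyz (by rw [hq, hzq])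
          omega
        · intro x hx y hy z hz hxy hyz
          exact hpath x (Finset.mem_filter.mp hx).1 y (Finset.mem_filter.mp hy).1
            z (Finset.mem_filter.mp hz).1 hxy hyz
      calc S.card = T.card + U.card := hcard.symm
        _ ≤ 2 ^ q + 2 ^ q := by omega
        _ = 2 ^ (q + 1) := by ring

/-- extend a coloring of `Fin N` to all of `ℕ` -/
def cExt (N : ℕ) (c : Fin N → Fin N → Fin N → Fin 2) : ℕ → ℕ → ℕ → Fin 2 :=
  fun x y z => if h : x < N ∧ y < N ∧ z < N then c ⟨x, h.1⟩ ⟨y, h.2.1⟩ ⟨z, h.2.2⟩ else 0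

lemma fin2_cases (a : Fin 2) : a = 0 ∨ a = 1 := by
  fin_cases a
  · exact Or.inl rfl
  · exact Or.inr rfl

lemma FP_lt_of_noPath {n N : ℕ} (hn : 1 ≤ n) (c : Fin N → Fin N → Fin N → Fin 2)
    (hno : ¬ HasMonoPath3 n c) (col : Fin 2) :
    ∀ x y : ℕ, x < y → y < N → FP (cExt N c) col x y < n := by
  intro x y hxy hyN
  by_contra hge
  push_neg at hge
  set m := FP (cExt N c) col x y with hm
  obtain ⟨g, hg1, hg2, hg3, hg4⟩ := FP_chain (cExt N c) col x y hxy
  rw [← hm] at hg1 hg2 hg3 hg4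
  have gbound : ∀ i ≤ m + 1, g i < N := by
    intro i hi
    rcases Nat.lt_or_ge i (m + 1) with h | h
    · have := steps_lt hg3 (m + 1) le_rfl i h
      omega
    · have : i = m + 1 := by omega
      subst this
      omega
  apply hno
  refine ⟨fun i => ⟨g (m - n + (i : ℕ)), gbound _ (by have := i.isLt; omega)⟩, ?_, col, ?_⟩
  · intro a b hab
    have hab' : (a : ℕ) < (b : ℕ) := hab
    have := steps_lt hg3 (m - n + (b : ℕ)) (by have := b.isLt; omega)
      (m - n + (a : ℕ)) (by omega)
    exact this
  · intro i hi
    have htr := hg4 (m - n + i) (by omega)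
    have hb1 : g (m - n + i) < N := gbound _ (by omega)
    have hb2 : g (m - n + i + 1) < N := gbound _ (by omega)
    have hb3 : g (m - n + i + 2) < N := gbound _ (by omega)
    have hb2' : g (m - n + (i + 1)) < N := gbound _ (by omega)
    have hb3' : g (m - n + (i + 2)) < N := gbound _ (by omega)
    have htr' : cExt N c (g (m - n + i)) (g (m - n + (i + 1))) (g (m - n + (i + 2))) = col := by
      rw [show m - n + (i + 1) = m - n + i + 1 from by omega,
          show m - n + (i + 2) = m - n + i + 2 from by omega]
      exact htr
    rw [cExt, dif_pos ⟨hb1, hb2', hb3'⟩] at htr'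
    exact htr'

lemma exists_path (n : ℕ) (hn : 1 ≤ n) (N : ℕ) (hN : 2 ^ (n * n) < N)
    (c : Fin N → Fin N → Fin N → Fin 2) : HasMonoPath3 n c := by
  by_contra hno
  have hFP := FP_lt_of_noPath hn c hno
  set c' := cExt N c with hc'
  set χ : ℕ → ℕ → ℕ := fun x y => n * FP c' 0 x y + FP c' 1 x y with hχ
  have key : ∀ x ∈ Finset.range N, ∀ y ∈ Finset.range N, x < y →
      FP c' 0 x y < n ∧ FP c' 1 x y < n := by
    intro x hx y hy hxy
    exact ⟨hFP 0 x y hxy (Finset.mem_range.mp hy), hFP 1 x y hxy (Finset.mem_range.mp hy)⟩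
  have hb : ∀ x ∈ Finset.range N, ∀ y ∈ Finset.range N, x < y → χ x y < n * n := by
    intro x hx y hy hxy
    obtain ⟨h0, h1⟩ := key x hx y hy hxy
    have hmul : n * FP c' 0 x y ≤ n * (n - 1) := Nat.mul_le_mul_left n (by omega)
    have : n * (n - 1) + n = n * n := by
      cases n with
      | zero => omega
      | succ k => simp [Nat.mul_succ]
    simp only [hχ]
    omega
  have hpath : ∀ x ∈ Finset.range N, ∀ y ∈ Finset.range N, ∀ z ∈ Finset.range N,
      x < y → y < z → χ x y ≠ χ y z := by
    intro x hx y hy z hz hxy hyz heq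
    obtain ⟨ha, hb1⟩ := key x hx y hy hxy
    obtain ⟨ha', hb1'⟩ := key y hy z hz hyz
    simp only [hχ] at heq
    have heq0 : FP c' 0 x y = FP c' 0 y z := by
      rcases lt_trichotomy (FP c' 0 x y) (FP c' 0 y z) with h | h | h
      · have h2 := Nat.mul_le_mul_left n (show FP c' 0 x y + 1 ≤ FP c' 0 y z from h)
        have h3 : n * (FP c' 0 x y + 1) = n * FP c' 0 x y + n := by ring
        omega
      · exact h
      · have h2 := Nat.mul_le_mul_left n (show FP c' 0 y z + 1 ≤ FP c' 0 x y from h)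
        have h3 : n * (FP c' 0 y z + 1) = n * FP c' 0 y z + n := by ring
        omega
    rw [heq0] at heq
    have heq1 : FP c' 1 x y = FP c' 1 y z := by omega
    rcases fin2_cases (c' x y z) with h | h
    · have := FP_succ_le c' 0 hxy h
      omega
    · have := FP_succ_le c' 1 hxy h
      omega
  have hfin := pairBound (n * n) (Finset.range N) χ hb hpath
  rw [Finset.card_range] at hfin
  omega

noncomputable def embV (n : ℕ) : Fin (Nat.choose (2 * n) n) → Vtype n :=
  fun k => (monoEquivOfFin (Vtype n) rfl) (Fin.castLE (choose_le_cardV n) k)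

lemma embV_strictMono (n : ℕ) : StrictMono (embV n) := by
  intro a b h
  exact (monoEquivOfFin (Vtype n) rfl).strictMono
    (show Fin.castLE (choose_le_cardV n) a < Fin.castLE (choose_le_cardV n) b from h)

noncomputable def cGood (n : ℕ) : Fin (Nat.choose (2 * n) n) → Fin (Nat.choose (2 * n) n) →
    Fin (Nat.choose (2 * n) n) → Fin 2 :=
  fun x y z => colV (embV n x) (embV n y) (embV n z)

lemma cGood_noPath (n : ℕ) (hn : 1 ≤ n) : ¬ HasMonoPath3 n (cGood n) := by
  rintro ⟨x, hx, col, hcol⟩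
  exact noPathV n hn (fun i => embV n (x i)) ((embV_strictMono n).comp hx) col
    (fun i h => hcol i h)

/-- For `n ≥ 2` there exists a 2-coloring of the triples of a linearly ordered set of
size `C(2n,n)` with no monochromatic monotone path of length `n`; that is,
`N_3(2,n) > C(2n,n)`. -/
theorem stmt6 (n : ℕ) (hn : 2 ≤ n) :
    (∃ c : Fin (Nat.choose (2 * n) n) → Fin (Nat.choose (2 * n) n) →
        Fin (Nat.choose (2 * n) n) → Fin 2, ¬ HasMonoPath3 n c) ∧
    Nat.choose (2 * n) n
      < sInf {N : ℕ | ∀ c : Fin N → Fin N → Fin N → Fin 2, HasMonoPath3 n c} := by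
  constructor
  · exact ⟨cGood n, cGood_noPath n (by omega)⟩
  · set S := {N : ℕ | ∀ c : Fin N → Fin N → Fin N → Fin 2, HasMonoPath3 n c} with hS
    have hmem : (2 ^ (n * n) + 1) ∈ S := by
      intro c
      exact exists_path n (by omega) _ (by omega) c
    have hinf : sInf S ∈ S := Nat.sInf_mem ⟨_, hmem⟩
    by_contra hle
    push_neg at hle
    obtain ⟨x, hx, col, hcol⟩ :=
      hinf (fun x y z => cGood n (Fin.castLE hle x) (Fin.castLE hle y) (Fin.castLE hle z))
    apply cGood_noPath n (by omega)
    refine ⟨fun i => Fin.castLE hle (x i), ?_, col, fun i h => hcol i h⟩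
    intro a b h
    exact (show Fin.castLE hle (x a) < Fin.castLE hle (x b) from hx h)
end

section
/- Let q ≥ 2, n ≥ 2, and let P_{q-1}(n) be the number of down-sets of [n]^q under the coordinatewise order. Then there exists a q-coloring of the triples of a linearly ordered set of size P_{q-1}(n) with no monochromatic monotone path of length n. That is, N_3(q,n) > P_{q-1}(n). -/
namespace Stmt7Aux

/-! ### Upper bound: any coloring of more than `Pnum q n` vertices has a path -/

/-- The set of lengths `m` of monochromatic (color `k`) monotone paths
ending with the pair `(x, y)`. -/
def PathSet {N q : ℕ} (c : Fin N → Fin N → Fin N → Fin q) (k : Fin q) (x y : Fin N) :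
    Set ℕ :=
  {m | ∃ f : Fin (m + 2) → Fin N, StrictMono f ∧ f ⟨m, by omega⟩ = x ∧
      f ⟨m + 1, by omega⟩ = y ∧
      ∀ i : ℕ, ∀ _ : i < m,
        c (f ⟨i, by omega⟩) (f ⟨i + 1, by omega⟩) (f ⟨i + 2, by omega⟩) = k}

lemma zero_mem_pathSet {N q : ℕ} (c : Fin N → Fin N → Fin N → Fin q) (k : Fin q)
    {x y : Fin N} (hxy : x < y) : 0 ∈ PathSet c k x y := by
  refine ⟨fun i => if (i : ℕ) = 0 then x else y, ?_, ?_, ?_, ?_⟩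
  · intro a b hab
    have ha2 := a.2
    have hb2 := b.2
    have hab' : (a : ℕ) < (b : ℕ) := hab
    have ha : (a : ℕ) = 0 := by omega
    have hb : (b : ℕ) = 1 := by omega
    simp [ha, hb, hxy]
  · simp
  · simp
  · intro i hi
    exact absurd hi (Nat.not_lt_zero i)

lemma lt_of_mem_pathSet {N q n : ℕ} {c : Fin N → Fin N → Fin N → Fin q} {k : Fin q}
    {x y : Fin N} (hc : ¬ HasMonoPath3 n c) {m : ℕ} (hm : m ∈ PathSet c k x y) : m < n := by
  by_contra hle
  push_neg at hle
  obtain ⟨f, hf, -, -, hcol⟩ := hm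
  refine hc ⟨fun i => f ⟨(i : ℕ), by have := i.isLt; omega⟩, ?_, k, ?_⟩
  · intro a b hab
    apply hf
    rw [Fin.lt_def] at hab ⊢
    exact hab
  · intro i hi
    exact hcol i (by omega)

/-- The longest length of a monochromatic (color `k`) monotone path ending at `(x, y)`. -/
noncomputable def L {N q : ℕ} (c : Fin N → Fin N → Fin N → Fin q) (k : Fin q)
    (x y : Fin N) : ℕ :=
  sSup (PathSet c k x y)

lemma L_mem {N q n : ℕ} {c : Fin N → Fin N → Fin N → Fin q} (k : Fin q)
    {x y : Fin N} (hxy : x < y) (hc : ¬ HasMonoPath3 n c) :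
    L c k x y ∈ PathSet c k x y :=
  Nat.sSup_mem ⟨0, zero_mem_pathSet c k hxy⟩
    ⟨n, fun _ hm => (lt_of_mem_pathSet hc hm).le⟩

lemma L_lt {N q n : ℕ} {c : Fin N → Fin N → Fin N → Fin q} (k : Fin q)
    {x y : Fin N} (hxy : x < y) (hc : ¬ HasMonoPath3 n c) : L c k x y < n :=
  lt_of_mem_pathSet hc (L_mem k hxy hc)

lemma L_succ_le {N q n : ℕ} {c : Fin N → Fin N → Fin N → Fin q}
    {x y z : Fin N} (hc : ¬ HasMonoPath3 n c) (hxy : x < y) (hyz : y < z) :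
    L c (c x y z) x y + 1 ≤ L c (c x y z) y z := by
  set k := c x y z with hk
  have hLmem := L_mem (n := n) k hxy hc
  set m := L c k x y with hm
  obtain ⟨f, hf, hx, hy, hcol⟩ := hLmem
  have hBdd : BddAbove (PathSet c k y z) :=
    ⟨n, fun _ hm' => (lt_of_mem_pathSet hc hm').le⟩
  refine le_csSup hBdd ?_
  set g : Fin (m + 1 + 2) → Fin N :=
    fun i => if h : (i : ℕ) < m + 2 then f ⟨i, h⟩ else z with hg
  have hg_lt : ∀ (j : ℕ) (h1 : j < m + 1 + 2) (h2 : j < m + 2),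
      g ⟨j, h1⟩ = f ⟨j, h2⟩ := by
    intro j h1 h2
    simp only [hg]
    rw [dif_pos h2]
  have hg_last : ∀ (j : ℕ) (h1 : j < m + 1 + 2), ¬ (j < m + 2) → g ⟨j, h1⟩ = z := by
    intro j h1 h2
    simp only [hg]
    rw [dif_neg h2]
  refine ⟨g, ?_, ?_, ?_, ?_⟩
  · intro a b hab
    have hab' : (a : ℕ) < (b : ℕ) := hab
    by_cases hb : (b : ℕ) < m + 2
    · have ha : (a : ℕ) < m + 2 := by omega
      have e1 : g a = f ⟨a, ha⟩ := hg_lt a a.2 ha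
      have e2 : g b = f ⟨b, hb⟩ := hg_lt b b.2 hb
      rw [e1, e2]
      exact hf (Fin.mk_lt_mk.mpr hab')
    · have ha : (a : ℕ) < m + 2 := by omega
      have e1 : g a = f ⟨a, ha⟩ := hg_lt a a.2 ha
      have e2 : g b = z := hg_last b b.2 hb
      rw [e1, e2]
      have h3 : f ⟨a, ha⟩ ≤ f ⟨m + 1, by omega⟩ :=
        hf.monotone (Fin.mk_le_mk.mpr (by omega))
      rw [hy] at h3
      exact lt_of_le_of_lt h3 hyz
  · rw [hg_lt (m + 1) (by omega) (by omega)]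
    exact hy
  · rw [hg_last (m + 1 + 1) (by omega) (by omega)]
  · intro i hi
    by_cases him : i < m
    · rw [hg_lt i (by omega) (by omega), hg_lt (i + 1) (by omega) (by omega),
        hg_lt (i + 2) (by omega) (by omega)]
      exact hcol i him
    · have hieq : i = m := by omega
      subst hieq
      rw [hg_lt m (by omega) (by omega), hg_lt (m + 1) (by omega) (by omega),
        hg_last (m + 2) (by omega) (by omega)]
      rw [hx, hy]

/-- The label of a pair: the vector of longest path lengths per color. -/
noncomputable def Lam {N q : ℕ} (n : ℕ) (c : Fin N → Fin N → Fin N → Fin q)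
    (hn : 0 < n) (x y : Fin N) : Fin q → Fin n :=
  fun k => ⟨min (L c k x y) (n - 1), by omega⟩

/-- The down-set associated to a vertex. -/
def DSet {N q : ℕ} (n : ℕ) (c : Fin N → Fin N → Fin N → Fin q) (hn : 0 < n)
    (x : Fin N) : Set (Fin q → Fin n) :=
  {v | ∀ z, x < z → ¬ Lam n c hn x z ≤ v}

lemma forced {q n : ℕ} (hn : 0 < n) {N : ℕ} (hN : Pnum q n < N)
    (c : Fin N → Fin N → Fin N → Fin q) : HasMonoPath3 n c := by
  by_contra hc
  have hD : ∀ x : Fin N, IsDownSet (DSet n c hn x) := by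
    intro x v w hvw hw z hz hle
    exact hw z hz (hle.trans hvw)
  have hmem : ∀ x y : Fin N, x < y → Lam n c hn x y ∈ DSet n c hn y := by
    intro x y hxy z hyz hle
    have h1 := L_succ_le hc hxy hyz
    have h2 := hle (c x y z)
    rw [Fin.le_def] at h2
    simp only [Lam] at h2
    have hx' := L_lt (n := n) (c x y z) hxy hc
    have hz' := L_lt (n := n) (c x y z) hyz hc
    omega
  have hnot : ∀ x y : Fin N, x < y → Lam n c hn x y ∉ DSet n c hn x := by
    intro x y hxy h
    exact h y hxy le_rfl
  have hinj : Function.Injective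
      (fun x : Fin N => (⟨DSet n c hn x, hD x⟩ : {S : Set (Fin q → Fin n) // IsDownSet S})) := by
    intro a b hab
    have hab' : DSet n c hn a = DSet n c hn b := congrArg Subtype.val hab
    by_contra hne
    rcases Ne.lt_or_gt hne with h | h
    · have h1 := hmem a b h
      rw [← hab'] at h1
      exact hnot a b h h1
    · have h1 := hmem b a h
      rw [hab'] at h1
      exact hnot b a h h1
  have hle := Nat.card_le_card_of_injective _ hinj
  rw [Nat.card_eq_fintype_card, Fintype.card_fin] at hle
  have : N ≤ Pnum q n := hle
  omega

/-! ### Lower bound: the construction on down-sets -/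

/-- An equivalence between down-sets and `Fin (Pnum q n)`. -/
noncomputable def eD (q n : ℕ) :
    {S : Set (Fin q → Fin n) // IsDownSet S} ≃ Fin (Pnum q n) :=
  Finite.equivFin _

/-- Enumeration of all down-sets in order of non-decreasing cardinality. -/
noncomputable def dEnum (q n : ℕ) (i : Fin (Pnum q n)) :
    {S : Set (Fin q → Fin n) // IsDownSet S} :=
  (eD q n).symm (Tuple.sort (fun j => (((eD q n).symm j).1).ncard) i)

lemma dEnum_injective (q n : ℕ) : Function.Injective (dEnum q n) :=
  (eD q n).symm.injective.comp (Tuple.sort _).injective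

lemma dEnum_mono (q n : ℕ) : Monotone (fun i => ((dEnum q n i).1).ncard) :=
  Tuple.monotone_sort (fun j => (((eD q n).symm j).1).ncard)

lemma dEnum_diff {q n : ℕ} {i j : Fin (Pnum q n)} (hij : i < j) :
    ((dEnum q n j).1 \ (dEnum q n i).1).Nonempty := by
  by_contra h
  rw [Set.not_nonempty_iff_eq_empty, Set.diff_eq_empty] at h
  have hcard := dEnum_mono q n hij.le
  have heq : (dEnum q n j).1 = (dEnum q n i).1 :=
    Set.eq_of_subset_of_ncard_le h hcard (Set.toFinite _)
  exact hij.ne' (dEnum_injective q n (Subtype.ext heq))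

open Classical in
/-- A point of `B \ A`, when it exists. -/
noncomputable def Psi (q n : ℕ) (hn : 0 < n)
    (A B : {S : Set (Fin q → Fin n) // IsDownSet S}) : Fin q → Fin n :=
  if h : (B.1 \ A.1).Nonempty then h.some else fun _ => ⟨0, hn⟩

lemma Psi_mem {q n : ℕ} (hn : 0 < n) {i j : Fin (Pnum q n)} (hij : i < j) :
    Psi q n hn (dEnum q n i) (dEnum q n j) ∈ (dEnum q n j).1 \ (dEnum q n i).1 := by
  have h := dEnum_diff hij
  simp only [Psi]
  rw [dif_pos h]
  exact h.some_mem

open Classical in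
/-- The coloring: color a triple by a coordinate where the pair labels increase. -/
noncomputable def cLow (q n : ℕ) (hn : 0 < n) (hq : 0 < q) :
    Fin (Pnum q n) → Fin (Pnum q n) → Fin (Pnum q n) → Fin q :=
  fun i j l =>
    if h : ∃ k : Fin q, Psi q n hn (dEnum q n i) (dEnum q n j) k
        < Psi q n hn (dEnum q n j) (dEnum q n l) k then h.choose
    else ⟨0, hq⟩

lemma cLow_spec {q n : ℕ} (hn : 0 < n) (hq : 0 < q) {i j l : Fin (Pnum q n)}
    (hij : i < j) (hjl : j < l) :
    Psi q n hn (dEnum q n i) (dEnum q n j) (cLow q n hn hq i j l)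
      < Psi q n hn (dEnum q n j) (dEnum q n l) (cLow q n hn hq i j l) := by
  have hex : ∃ k : Fin q, Psi q n hn (dEnum q n i) (dEnum q n j) k
      < Psi q n hn (dEnum q n j) (dEnum q n l) k := by
    by_contra hno
    push_neg at hno
    have hle : Psi q n hn (dEnum q n j) (dEnum q n l)
        ≤ Psi q n hn (dEnum q n i) (dEnum q n j) := fun k => hno k
    have h1 : Psi q n hn (dEnum q n i) (dEnum q n j) ∈ (dEnum q n j).1 :=
      (Psi_mem hn hij).1
    have h2 : Psi q n hn (dEnum q n j) (dEnum q n l) ∉ (dEnum q n j).1 :=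
      (Psi_mem hn hjl).2
    exact h2 ((dEnum q n j).2 hle h1)
  simp only [cLow]
  rw [dif_pos hex]
  exact hex.choose_spec

lemma cLow_no_path {q n : ℕ} (hn : 0 < n) (hq : 0 < q) :
    ¬ HasMonoPath3 n (cLow q n hn hq) := by
  rintro ⟨x, hx, col, hcol⟩
  have key : ∀ t : ℕ, ∀ ht : t < n,
      (Psi q n hn (dEnum q n (x ⟨t, by omega⟩)) (dEnum q n (x ⟨t + 1, by omega⟩)) col : ℕ)
        < (Psi q n hn (dEnum q n (x ⟨t + 1, by omega⟩))
            (dEnum q n (x ⟨t + 2, by omega⟩)) col : ℕ) := by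
    intro t ht
    have hij : x ⟨t, by omega⟩ < x ⟨t + 1, by omega⟩ := hx (Fin.mk_lt_mk.mpr (by omega))
    have hjl : x ⟨t + 1, by omega⟩ < x ⟨t + 2, by omega⟩ := hx (Fin.mk_lt_mk.mpr (by omega))
    have h := cLow_spec hn hq hij hjl
    rw [hcol t ht] at h
    exact h
  have chain : ∀ t : ℕ, ∀ _ : t ≤ n,
      t ≤ (Psi q n hn (dEnum q n (x ⟨t, by omega⟩))
            (dEnum q n (x ⟨t + 1, by omega⟩)) col : ℕ) := by
    intro t
    induction t with
    | zero => intro _; exact Nat.zero_le _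
    | succ s ih =>
        intro hs
        have h1 := ih (by omega)
        have h2 := key s (by omega)
        show s + 1 ≤ (Psi q n hn (dEnum q n (x ⟨s + 1, by omega⟩))
          (dEnum q n (x ⟨s + 2, by omega⟩)) col : ℕ)
        omega
  have h1 := chain n le_rfl
  have h2 : (Psi q n hn (dEnum q n (x ⟨n, by omega⟩))
      (dEnum q n (x ⟨n + 1, by omega⟩)) col : ℕ) < n :=
    (Psi q n hn _ _ col).2
  omega

end Stmt7Aux

/-- For `q ≥ 2`, `n ≥ 2` there is a `q`-coloring of the triples of a linearly ordered
set of size `P_{q-1}(n)` with no monochromatic monotone path of length `n`; that is,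
`N_3(q,n) > P_{q-1}(n)`. -/
theorem stmt7 (q n : ℕ) (hq : 2 ≤ q) (hn : 2 ≤ n) :
    (∃ c : Fin (Pnum q n) → Fin (Pnum q n) → Fin (Pnum q n) → Fin q,
        ¬ HasMonoPath3 n c) ∧
    Pnum q n < sInf {N : ℕ | ∀ c : Fin N → Fin N → Fin N → Fin q, HasMonoPath3 n c} := by
  have hn0 : 0 < n := by omega
  have hq0 : 0 < q := by omega
  constructor
  · exact ⟨Stmt7Aux.cLow q n hn0 hq0, Stmt7Aux.cLow_no_path hn0 hq0⟩
  · have hmem : (Pnum q n + 1) ∈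
        {N : ℕ | ∀ c : Fin N → Fin N → Fin N → Fin q, HasMonoPath3 n c} :=
      fun c => Stmt7Aux.forced hn0 (by omega) c
    have hlb : ∀ N ∈ {N : ℕ | ∀ c : Fin N → Fin N → Fin N → Fin q, HasMonoPath3 n c},
        Pnum q n < N := by
      intro N hN
      by_contra h
      push_neg at h
      have hpath := hN (fun a b c' =>
        Stmt7Aux.cLow q n hn0 hq0 (Fin.castLE h a) (Fin.castLE h b) (Fin.castLE h c'))
      obtain ⟨x, hx, col, hcol⟩ := hpath
      refine Stmt7Aux.cLow_no_path hn0 hq0 ⟨fun i => Fin.castLE h (x i), ?_, col, ?_⟩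
      · intro a b hab
        have := hx hab
        rw [Fin.lt_def] at this ⊢
        exact this
      · intro i hi
        exact hcol i hi
    exact hlb _ (Nat.sInf_mem ⟨_, hmem⟩)
end

section
/- For every q ≥ 2 and n ≥ 2, N_3(q,n) = P_{q-1}(n) + 1, where N_3(q,n) is the smallest N such that every q-coloring of the triples of {1,...,N} contains a monochromatic monotone path of length n, and P_{q-1}(n) is the number of down-sets of [n]^q under the coordinatewise order. -/
section Upper

variable {N q n : ℕ} (c : Fin N → Fin N → Fin N → Fin q)

/-- There is a monochromatic (color `col`) tight path of length `m` ending with the pair `(i,j)`. -/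
def EndsAt (col : Fin q) (i j : Fin N) (m : ℕ) : Prop :=
  ∃ x : Fin (m + 2) → Fin N, StrictMono x ∧ x ⟨m, by omega⟩ = i ∧ x ⟨m + 1, by omega⟩ = j ∧
    ∀ t : ℕ, ∀ _ : t < m, c (x ⟨t, by omega⟩) (x ⟨t + 1, by omega⟩) (x ⟨t + 2, by omega⟩) = col

lemma endsAt_zero {col : Fin q} {i j : Fin N} (hij : i < j) : EndsAt c col i j 0 := by
  refine ⟨![i, j], ?_, rfl, rfl, fun t ht => absurd ht (by omega)⟩
  intro a b hab
  fin_cases a <;> fin_cases b <;> simp_all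

lemma endsAt_le {col : Fin q} {i j : Fin N} {m : ℕ} (h : EndsAt c col i j m) : m ≤ N := by
  obtain ⟨x, hx, -⟩ := h
  have h2 := Fintype.card_le_of_injective x hx.injective
  simp only [Fintype.card_fin] at h2
  omega

lemma endsAt_path {col : Fin q} {i j : Fin N} {m : ℕ} (h : EndsAt c col i j m)
    (hnm : n ≤ m) : HasMonoPath3 n c := by
  obtain ⟨x, hx, -, -, hcol⟩ := h
  refine ⟨x ∘ Fin.castLE (by omega), hx.comp (Fin.strictMono_castLE _), col, ?_⟩
  intro t ht
  exact hcol t (by omega)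

lemma endsAt_succ {col : Fin q} {i j k : Fin N} {m : ℕ} (h : EndsAt c col i j m)
    (hjk : j < k) (hc : c i j k = col) : EndsAt c col j k (m + 1) := by
  obtain ⟨x, hx, hxi, hxj, hcol⟩ := h
  refine ⟨fun t => if h : (t : ℕ) < m + 2 then x ⟨t, h⟩ else k, ?_, ?_, ?_, ?_⟩
  · intro a b hab
    by_cases hb : (b : ℕ) < m + 2
    · have ha : (a : ℕ) < m + 2 := by omega
      simp only [dif_pos ha, dif_pos hb]
      exact hx (by simpa using hab)
    · have ha : (a : ℕ) < m + 2 := by omega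
      simp only [dif_pos ha, dif_neg hb]
      calc x ⟨a, ha⟩ ≤ x ⟨m + 1, by omega⟩ := hx.monotone (by simp; omega)
        _ = j := hxj
        _ < k := hjk
  · simp only [dif_pos (by omega : m + 1 < m + 2)]
    exact hxj
  · simp only [dif_neg (by omega : ¬ (m + 2 < m + 2))]
  · intro t ht
    by_cases htm : t < m
    · simp only [dif_pos (by omega : t < m + 2), dif_pos (by omega : t + 1 < m + 2),
        dif_pos (by omega : t + 2 < m + 2)]
      exact hcol t htm
    · obtain rfl : t = m := by omega
      show c (if h : t < t + 2 then x ⟨t, h⟩ else k) (if h : t + 1 < t + 2 then x ⟨t + 1, h⟩ else k)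
        (if h : t + 2 < t + 2 then x ⟨t + 2, h⟩ else k) = col
      rw [dif_pos (by omega : t < t + 2), dif_pos (by omega : t + 1 < t + 2),
        dif_neg (by omega : ¬ (t + 2 < t + 2)), hxi, hxj, hc]

end Upper

lemma upper_bound {N q n : ℕ} (hn : 1 ≤ n) (c : Fin N → Fin N → Fin N → Fin q)
    (hno : ¬ HasMonoPath3 n c) : N ≤ Pnum q n := by
  classical
  -- longest path length ending at a pair
  set L : Fin q → Fin N → Fin N → ℕ := fun col i j => sSup {m | EndsAt c col i j m} with hL
  have hbdd : ∀ col i j, BddAbove {m | EndsAt c col i j m} :=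
    fun col i j => ⟨N, fun m hm => endsAt_le c hm⟩
  have hmem : ∀ (col : Fin q) (i j : Fin N), i < j → EndsAt c col i j (L col i j) :=
    fun col i j hij => Nat.sSup_mem ⟨0, by exact endsAt_zero c hij⟩ (hbdd col i j)
  have hlt : ∀ (col : Fin q) (i j : Fin N), i < j → L col i j < n := by
    intro col i j hij
    by_contra hcon
    exact hno (endsAt_path c (hmem col i j hij) (le_of_not_gt hcon))
  have key : ∀ (h i j : Fin N), h < i → i < j →
      L (c h i j) h i + 1 ≤ L (c h i j) i j := by
    intro h i j hhi hij
    exact le_csSup (hbdd _ i j) (endsAt_succ c (hmem _ h i hhi) hij rfl)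
  -- the vector of longest path lengths
  set g : Fin N → Fin N → (Fin q → Fin n) := fun i j col =>
    if hij : i < j then ⟨L col i j, hlt col i j hij⟩ else ⟨0, by omega⟩ with hg
  set F : Fin N → {S : Set (Fin q → Fin n) // IsDownSet S} := fun j =>
    ⟨{v | ∃ i, i < j ∧ v ≤ g i j}, by
      intro x y hxy ⟨i, hij, hy⟩
      exact ⟨i, hij, le_trans hxy hy⟩⟩ with hF
  have hgin : ∀ i j : Fin N, i < j → g i j ∈ (F j).val := fun i j hij => ⟨i, hij, le_refl _⟩
  have hgout : ∀ i j : Fin N, i < j → g i j ∉ (F i).val := by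
    rintro i j hij ⟨h, hhi, hle⟩
    have h1 := hle (c h i j)
    have h2 := key h i j hhi hij
    simp only [hg, dif_pos hij, dif_pos hhi] at h1
    rw [Fin.mk_le_mk] at h1
    omega
  have Finj : Function.Injective F := by
    intro a b hab
    by_contra hne
    rcases lt_or_gt_of_ne (fun h : a = b => hne h) with h | h
    · exact hgout a b h (hab ▸ hgin a b h)
    · exact hgout b a h (hab ▸ hgin b a h)
  have := Nat.card_le_card_of_injective F Finj
  simpa [Pnum] using this

lemma lower_bound {q n : ℕ} (hq : 1 ≤ q) (hn : 1 ≤ n) :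
    ∃ c : Fin (Pnum q n) → Fin (Pnum q n) → Fin (Pnum q n) → Fin q,
      ¬ HasMonoPath3 n c := by
  classical
  set D := {S : Set (Fin q → Fin n) // IsDownSet S} with hD
  haveI : Fintype D := Fintype.ofFinite D
  set P := Pnum q n with hP
  have hcard : Fintype.card D = P := by rw [hP, Pnum, Nat.card_eq_fintype_card]
  haveI : Nonempty D := ⟨⟨∅, fun x y _ h => h⟩⟩
  have hPpos : 0 < P := by rw [← hcard]; exact Fintype.card_pos
  set r : D → ℕ := fun S => (S.val.toFinite.toFinset).card with hr
  have hrmono : ∀ S T : D, S.val ⊂ T.val → r S < r T := by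
    intro S T hST
    exact Finset.card_lt_card (Set.Finite.toFinset_ssubset_toFinset.2 hST)
  obtain ⟨φ⟩ : Nonempty (D ≃ Fin P) := ⟨Finite.equivFinOfCardEq (by rw [hP, Pnum])⟩
  set ψ : D → ℕ := fun S => r S * P + (φ S).val with hψ
  have hψmod : ∀ S : D, ψ S % P = (φ S).val := by
    intro S
    rw [hψ]
    simp only []
    rw [Nat.add_comm, Nat.add_mul_mod_self_right, Nat.mod_eq_of_lt (φ S).isLt]
  have hψinj : Function.Injective ψ := by
    intro S T hST
    apply φ.injective
    apply Fin.ext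
    rw [← hψmod S, ← hψmod T, hST]
  have hψmono : ∀ S T : D, S.val ⊂ T.val → ψ S < ψ T := by
    intro S T hST
    have h1 := hrmono S T hST
    have h2 : (φ S).val < P := (φ S).isLt
    have h3 : r S * P + P ≤ r T * P := by
      have h4 : (r S + 1) * P ≤ r T * P := Nat.mul_le_mul_right P h1
      rw [Nat.add_mul, one_mul] at h4
      omega
    rw [hψ]
    simp only []
    omega
  -- enumerate `D` sorted by `ψ`
  set s : Finset ℕ := Finset.image ψ Finset.univ with hs
  have hscard : s.card = P := by
    rw [hs, Finset.card_image_of_injective _ hψinj, Finset.card_univ, hcard]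
  set oi := s.orderIsoOfFin hscard with hoi
  set e : Fin P → D := fun a => Function.invFun ψ ((oi a).val) with he
  have heψ : ∀ a : Fin P, ψ (e a) = (oi a).val := by
    intro a
    apply Function.invFun_eq
    obtain ⟨S, -, hS⟩ := Finset.mem_image.1 (oi a).2
    exact ⟨S, hS⟩
  have hemono : ∀ a b : Fin P, a < b → ψ (e a) < ψ (e b) := by
    intro a b hab
    rw [heψ a, heψ b]
    exact oi.strictMono hab
  have hdiff : ∀ a b : Fin P, a < b → ∃ v, v ∈ (e b).val ∧ v ∉ (e a).val := by
    intro a b hab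
    by_contra hcon
    push_neg at hcon
    have hsub : (e b).val ⊆ (e a).val := fun v hv => hcon v hv
    have hmono := hemono a b hab
    rcases eq_or_ne (e b).val (e a).val with h | h
    · have : ψ (e b) = ψ (e a) := by rw [Subtype.ext h]
      omega
    · have := hψmono _ _ (ssubset_of_subset_of_ne hsub h)
      omega
  -- the assignment of witnesses to pairs
  set gl : Fin P → Fin P → (Fin q → Fin n) := fun a b =>
    if h : a < b then (hdiff a b h).choose else fun _ => ⟨0, hn⟩ with hgl
  have hglspec : ∀ a b : Fin P, (h : a < b) →
      gl a b ∈ (e b).val ∧ gl a b ∉ (e a).val := by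
    intro a b h
    rw [hgl]
    simp only [dif_pos h]
    exact (hdiff a b h).choose_spec
  have hglkey : ∀ a b x : Fin P, a < b → b < x → ¬ (gl b x ≤ gl a b) := by
    intro a b x hab hbx hle
    have h1 := (hglspec a b hab).1
    have h2 := (hglspec b x hbx).2
    exact h2 ((e b).2 hle h1)
  -- the coloring
  have hcolex : ∀ a b x : Fin P, a < b → b < x →
      ∃ col : Fin q, (gl a b col : ℕ) < gl b x col := by
    intro a b x hab hbx
    have := hglkey a b x hab hbx
    rw [Pi.le_def, not_forall] at this
    obtain ⟨col, hcol⟩ := this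
    exact ⟨col, by omega⟩
  set c : Fin P → Fin P → Fin P → Fin q := fun a b x =>
    if h : a < b ∧ b < x then (hcolex a b x h.1 h.2).choose else ⟨0, hq⟩ with hc
  have hcspec : ∀ a b x : Fin P, (h1 : a < b) → (h2 : b < x) →
      (gl a b (c a b x) : ℕ) < gl b x (c a b x) := by
    intro a b x h1 h2
    rw [hc]
    simp only [dif_pos (⟨h1, h2⟩ : a < b ∧ b < x)]
    exact (hcolex a b x h1 h2).choose_spec
  refine ⟨c, ?_⟩
  rintro ⟨x, hx, col, hcol⟩
  -- extract a strictly increasing sequence of n+1 values in Fin n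
  have step : ∀ i : ℕ, (hi : i < n) →
      (gl (x ⟨i, by omega⟩) (x ⟨i + 1, by omega⟩) col : ℕ) <
        gl (x ⟨i + 1, by omega⟩) (x ⟨i + 2, by omega⟩) col := by
    intro i hi
    have h1 : x ⟨i, by omega⟩ < x ⟨i + 1, by omega⟩ := hx (by simp [Fin.lt_def])
    have h2 : x ⟨i + 1, by omega⟩ < x ⟨i + 2, by omega⟩ := hx (by simp [Fin.lt_def])
    have h3 := hcspec _ _ _ h1 h2
    rwa [hcol i hi] at h3
  have grow : ∀ i : ℕ, (hi : i ≤ n) →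
      i ≤ (gl (x ⟨i, by omega⟩) (x ⟨i + 1, by omega⟩) col : ℕ) := by
    intro i
    induction i with
    | zero => omega
    | succ k ih =>
      intro hk
      have h1 := ih (by omega)
      have h2 := step k (by omega)
      show k + 1 ≤ (gl (x ⟨k + 1, by omega⟩) (x ⟨k + 2, by omega⟩) col : ℕ)
      omega
  have hfin : (gl (x ⟨n, by omega⟩) (x ⟨n + 1, by omega⟩) col : ℕ) < n :=
    (gl _ _ col).isLt
  have := grow n le_rfl
  omega

/-- For every `q ≥ 2` and `n ≥ 2`, `N_3(q,n) = P_{q-1}(n) + 1`. -/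
theorem stmt8 (q n : ℕ) (hq : 2 ≤ q) (hn : 2 ≤ n) :
    sInf {N : ℕ | ∀ c : Fin N → Fin N → Fin N → Fin q, HasMonoPath3 n c}
      = Pnum q n + 1 := by
  set P := Pnum q n with hP
  have h1 : (P + 1) ∈ {N : ℕ | ∀ c : Fin N → Fin N → Fin N → Fin q, HasMonoPath3 n c} := by
    intro c
    by_contra h
    have := upper_bound (by omega) c h
    omega
  obtain ⟨c0, hc0⟩ := lower_bound (q := q) (n := n) (by omega) (by omega)
  have h2 : ∀ m : ℕ, m ≤ P → ∃ c : Fin m → Fin m → Fin m → Fin q, ¬ HasMonoPath3 n c := by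
    intro m hm
    refine ⟨fun a b x => c0 (Fin.castLE hm a) (Fin.castLE hm b) (Fin.castLE hm x), ?_⟩
    rintro ⟨y, hy, col, h⟩
    exact hc0 ⟨Fin.castLE hm ∘ y, (Fin.strictMono_castLE hm).comp hy, col, h⟩
  apply le_antisymm
  · exact Nat.sInf_le h1
  · apply le_csInf ⟨P + 1, h1⟩
    intro m hm
    by_contra hcon
    push_neg at hcon
    obtain ⟨c, hc⟩ := h2 m (by omega)
    exact hc (hm c)
end

section
/- For all d ≥ 2 and k with d ≤ k ≤ dn, let S_n(k,d) be the number of d-tuples (x_1,...,x_d) ∈ [n]^d with x_1 + ... + x_d = k. Then max_k S_n(k,d) ≥ (2/3) · n^{d-1} / √d. -/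
set_option maxHeartbeats 1000000
open Finset

private lemma sum1R (n : ℕ) : ∑ a : Fin n, ((a : ℝ) + 1) = n * (n + 1) / 2 := by
  induction n with
  | zero => simp
  | succ m ih =>
    rw [Fin.sum_univ_castSucc]
    simp only [Fin.coe_castSucc, Fin.val_last]
    rw [ih]; push_cast; ring

private lemma sum2R (n : ℕ) :
    ∑ a : Fin n, ((a : ℝ) + 1) ^ 2 = (n : ℝ) * (n + 1) * (2 * n + 1) / 6 := by
  induction n with
  | zero => simp
  | succ m ih =>
    rw [Fin.sum_univ_castSucc]
    simp only [Fin.coe_castSucc, Fin.val_last]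
    rw [ih]; push_cast; ring

private lemma sumCR (n : ℕ) :
    ∑ a : Fin n, (((a : ℝ) + 1) - (n + 1) / 2) ^ 2 = n * ((n:ℝ) ^ 2 - 1) / 12 := by
  have h1 := sum1R n
  have h2 := sum2R n
  have e : ∀ a : Fin n, (((a : ℝ) + 1) - (n + 1) / 2) ^ 2
      = ((a : ℝ) + 1) ^ 2 - (n + 1) * ((a : ℝ) + 1) + ((n + 1) / 2) ^ 2 := by
    intro a; ring
  rw [Finset.sum_congr rfl fun a _ => e a]
  rw [Finset.sum_add_distrib, Finset.sum_sub_distrib, h2, ← Finset.mul_sum, h1,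
    Finset.sum_const, Finset.card_univ, Fintype.card_fin, nsmul_eq_mul]
  ring

private lemma cardPow (m n : ℕ) (c : ℝ) :
    ∑ _y : Fin m → Fin n, c = (n : ℝ) ^ m * c := by
  rw [Finset.sum_const, Finset.card_univ, Fintype.card_fun, Fintype.card_fin,
    Fintype.card_fin, nsmul_eq_mul]
  push_cast; ring

private lemma momT1 (d n : ℕ) :
    ∑ x : Fin d → Fin n, (∑ i, ((x i : ℝ) + 1)) = (n : ℝ) ^ d * (d * (n + 1) / 2) := by
  induction d with
  | zero => simp
  | succ m ih =>
    rw [← (Fin.consEquiv (fun _ : Fin (m+1) => Fin n)).sum_comp, Fintype.sum_prod_type]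
    simp only [Fin.consEquiv_apply, Fin.sum_univ_succ, Fin.cons_zero, Fin.cons_succ]
    have inner : ∀ a : Fin n, ∑ y : Fin m → Fin n, (((a:ℝ)+1) + ∑ i, ((y i : ℝ)+1))
        = (n:ℝ)^m * ((a:ℝ)+1) + (n:ℝ)^m * (m*((n:ℝ)+1)/2) := by
      intro a
      rw [Finset.sum_add_distrib, ih, cardPow]
    rw [Finset.sum_congr rfl fun a _ => inner a, Finset.sum_add_distrib, ← Finset.mul_sum,
      sum1R, Finset.sum_const, Finset.card_univ, Fintype.card_fin, nsmul_eq_mul]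
    push_cast; ring

private lemma momT2 (d n : ℕ) :
    ∑ x : Fin d → Fin n, ((∑ i, ((x i : ℝ) + 1)) - d * (n + 1) / 2) ^ 2
      = (n : ℝ) ^ d * (d * ((n:ℝ) ^ 2 - 1) / 12) := by
  induction d with
  | zero => simp
  | succ m ih =>
    rw [← (Fin.consEquiv (fun _ : Fin (m+1) => Fin n)).sum_comp, Fintype.sum_prod_type]
    simp only [Fin.consEquiv_apply, Fin.sum_univ_succ, Fin.cons_zero, Fin.cons_succ]
    have hB : ∑ y : Fin m → Fin n, ((∑ i, ((y i : ℝ) + 1)) - m * ((n:ℝ) + 1) / 2) = 0 := by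
      rw [Finset.sum_sub_distrib, momT1, cardPow]; ring
    have inner : ∀ a : Fin n, ∑ y : Fin m → Fin n,
        (((a:ℝ)+1) + (∑ i, ((y i : ℝ)+1)) - (↑(m+1)) * ((n:ℝ)+1)/2) ^ 2
        = (n:ℝ)^m * ((((a:ℝ)+1) - ((n:ℝ)+1)/2)^2 + (m * ((n:ℝ)^2-1)/12)) := by
      intro a
      have e : ∀ y : Fin m → Fin n,
          (((a:ℝ)+1) + (∑ i, ((y i : ℝ)+1)) - (↑(m+1)) * ((n:ℝ)+1)/2) ^ 2
          = ((((a:ℝ)+1) - ((n:ℝ)+1)/2))^2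
            + 2 * (((a:ℝ)+1) - ((n:ℝ)+1)/2) * ((∑ i, ((y i : ℝ)+1)) - m * ((n:ℝ)+1)/2)
            + ((∑ i, ((y i : ℝ)+1)) - m * ((n:ℝ)+1)/2)^2 := by
        intro y; push_cast; ring
      rw [Finset.sum_congr rfl fun y _ => e y, Finset.sum_add_distrib,
        Finset.sum_add_distrib, ← Finset.mul_sum, hB, ih, cardPow]
      ring
    rw [Finset.sum_congr rfl fun a _ => inner a, ← Finset.mul_sum, Finset.sum_add_distrib,
      sumCR, Finset.sum_const, Finset.card_univ, Fintype.card_fin, nsmul_eq_mul]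
    push_cast; ring

private lemma le_of_sq_le_sq' {a b : ℝ} (ha : 0 ≤ a) (hb : 0 ≤ b) (h : a ^ 2 ≤ b ^ 2) :
    a ≤ b := by nlinarith

private lemma coreIneq (d n : ℕ) (hd : 2 ≤ d) (hn : 2 ≤ n) :
    2 * ((if ((Nat.sqrt (d * (n ^ 2 - 1))) + d * (n + 1)) % 2 = 1 then (Nat.sqrt (d * (n ^ 2 - 1))) else (Nat.sqrt (d * (n ^ 2 - 1))) + 1 : ℕ) : ℝ)
      * (((if ((Nat.sqrt (d * (n ^ 2 - 1))) + d * (n + 1)) % 2 = 1 then (Nat.sqrt (d * (n ^ 2 - 1))) else (Nat.sqrt (d * (n ^ 2 - 1))) + 1 : ℕ) : ℝ) + 1) ^ 2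
      ≤ (n:ℝ) * Real.sqrt d *
        (3 * (((if ((Nat.sqrt (d * (n ^ 2 - 1))) + d * (n + 1)) % 2 = 1 then (Nat.sqrt (d * (n ^ 2 - 1))) else (Nat.sqrt (d * (n ^ 2 - 1))) + 1 : ℕ) : ℝ) + 1) ^ 2
          - ((d * (n ^ 2 - 1) : ℕ) : ℝ)) := by
  set E : ℕ := d * (n ^ 2 - 1) with hEdef
  set t : ℕ := Nat.sqrt E with htdef
  have hn2 : 4 ≤ n ^ 2 := by nlinarith
  have hE6 : 6 ≤ E := by
    have h3 : 3 ≤ n ^ 2 - 1 := by omega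
    calc 6 = 2 * 3 := rfl
    _ ≤ d * (n ^ 2 - 1) := Nat.mul_le_mul hd h3
  have ht2 : t ^ 2 ≤ E := Nat.sqrt_le' E
  have htE : E < (t + 1) ^ 2 := Nat.lt_succ_sqrt' E
  have ht : 2 ≤ t := by rw [htdef, Nat.le_sqrt']; omega
  have hEd : E + d = d * n ^ 2 := by
    have h1 : 1 ≤ n ^ 2 := by omega
    calc d * (n ^ 2 - 1) + d = d * ((n ^ 2 - 1) + 1) := by ring
    _ = d * n ^ 2 := by rw [Nat.sub_add_cancel h1]
  set T : ℝ := (t : ℝ) with hT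
  have hT2 : (2:ℝ) ≤ T := by rw [hT]; exact_mod_cast ht
  have hT0 : (0:ℝ) ≤ T := by linarith
  have hEr : (E : ℝ) ≤ T ^ 2 + 2 * T := by
    have h : E ≤ t ^ 2 + 2 * t := by nlinarith
    rw [hT]
    calc (E:ℝ) ≤ ((t ^ 2 + 2 * t : ℕ) : ℝ) := by exact_mod_cast h
    _ = (t:ℝ) ^ 2 + 2 * t := by push_cast; ring
  have hEr2 : T ^ 2 ≤ (E : ℝ) := by rw [hT]; exact_mod_cast ht2
  set r : ℝ := Real.sqrt d with hr
  have hr0 : (0:ℝ) ≤ r := Real.sqrt_nonneg _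
  have hnr : ((n:ℝ) * r) ^ 2 = (E : ℝ) + d := by
    have h1 : ((n:ℝ) * r) ^ 2 = (n:ℝ)^2 * d := by
      rw [mul_pow, hr, Real.sq_sqrt (by positivity)]
    have h2 : ((E:ℝ) + d) = ((E + d : ℕ) : ℝ) := by push_cast; ring
    rw [h1, h2, hEd]; push_cast; ring
  have hnr0 : (0:ℝ) ≤ (n:ℝ) * r := by positivity
  by_cases hpar : (t + d * (n + 1)) % 2 = 1
  · rw [if_pos hpar]
    have h1 : T ≤ (n:ℝ) * r := by
      apply le_of_sq_le_sq' hT0 hnr0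
      rw [hnr]
      have : (0:ℝ) ≤ d := by positivity
      linarith
    have h2 : 2 * T ^ 2 + 4 * T + 3 ≤ 3 * (T + 1) ^ 2 - (E:ℝ) := by nlinarith
    calc 2 * T * (T + 1) ^ 2 ≤ T * (2 * T ^ 2 + 4 * T + 3) := by nlinarith
    _ ≤ ((n:ℝ) * r) * (3 * (T + 1) ^ 2 - (E:ℝ)) :=
        mul_le_mul h1 h2 (by nlinarith) hnr0
  · rw [if_neg hpar]
    push_cast
    rw [show (T + 1 + 1 : ℝ) = T + 2 by ring]
    by_cases hB : (t + 1) ^ 2 ≤ E + d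
    · have h1 : T + 1 ≤ (n:ℝ) * r := by
        apply le_of_sq_le_sq' (by linarith) hnr0
        rw [hnr]
        have h : (((t+1)^2 : ℕ) : ℝ) ≤ ((E + d : ℕ) : ℝ) := by exact_mod_cast hB
        push_cast at h
        rw [hT]; linarith
      have h2 : 2 * T ^ 2 + 10 * T + 12 ≤ 3 * (T + 2) ^ 2 - (E:ℝ) := by nlinarith [hEr]
      calc 2 * (T + 1) * (T + 2) ^ 2 ≤ (T + 1) * (2 * T ^ 2 + 10 * T + 12) := by nlinarith [mul_nonneg (by linarith : (0:ℝ) ≤ T + 1) (by linarith : (0:ℝ) ≤ 2 * T + 4)]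
      _ ≤ ((n:ℝ) * r) * (3 * (T + 2) ^ 2 - (E:ℝ)) :=
          mul_le_mul h1 h2 (by nlinarith) hnr0
    · push_neg at hB
      have hB' : (E : ℝ) + d ≤ T ^ 2 + 2 * T := by
        have h : E + d ≤ t ^ 2 + 2 * t := by nlinarith
        have h' : ((E + d : ℕ) : ℝ) ≤ ((t ^ 2 + 2 * t : ℕ) : ℝ) := by exact_mod_cast h
        push_cast at h'
        rw [hT]; linarith
      have hd2 : (2:ℝ) ≤ (d:ℝ) := by exact_mod_cast hd
      set w : ℝ := T + 1 / (T + 1) with hw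
      have hT1 : (0:ℝ) < T + 1 := by linarith
      have hw0 : (0:ℝ) < w := by positivity
      have hwnr : w ≤ (n:ℝ) * r := by
        apply le_of_sq_le_sq' (le_of_lt hw0) hnr0
        rw [hnr]
        have hwT : w * (T + 1) = T ^ 2 + T + 1 := by
          rw [hw]; field_simp
        have e1 : w ^ 2 * (T + 1) ^ 2 = (T ^ 2 + T + 1) ^ 2 := by
          rw [← mul_pow, hwT]
        have hsq : w ^ 2 ≤ T ^ 2 + 2 := by
          refine le_of_mul_le_mul_right ?_ (by positivity : (0:ℝ) < (T + 1) ^ 2)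
          rw [e1]; nlinarith
        linarith
      have h2 : 2 * (T + 2) * (T + 3) + 2 ≤ 3 * (T + 2) ^ 2 - (E:ℝ) := by nlinarith
      have h1 : 2 * (T + 1) * (T + 2) ^ 2 ≤ w * (2 * (T + 2) * (T + 3) + 2) := by
        have key2 : (2 * (T + 1) * (T + 2) ^ 2) * (T + 1)
            ≤ (w * (2 * (T + 2) * (T + 3) + 2)) * (T + 1) := by
          have e : (w * (2 * (T + 2) * (T + 3) + 2)) * (T + 1)
              = (2 * (T + 2) * (T + 3) + 2) * (T^2 + T + 1) := by
            rw [hw]; field_simp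
          rw [e]; nlinarith
        exact le_of_mul_le_mul_right key2 hT1
      calc 2 * (T + 1) * (T + 2) ^ 2 ≤ w * (2 * (T + 2) * (T + 3) + 2) := h1
      _ ≤ ((n:ℝ) * r) * (3 * (T + 2) ^ 2 - (E:ℝ)) :=
          mul_le_mul hwnr h2 (by nlinarith) hnr0

open Finset in
/-- For `d ≥ 2`, `n ≥ 1`, the maximal level `max_k S_n(k,d)` of the coordinate-sum
function on `[n]^d` is at least `(2/3)·n^{d-1}/√d`. Here `S_n(k,d)` is the number of
tuples `x ∈ [n]^d` with `x_1 + ⋯ + x_d = k` (and the maximum is attained for some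
`d ≤ k ≤ dn`). -/
theorem stmt9 (d n : ℕ) (hd : 2 ≤ d) (hn : 1 ≤ n) :
    ∃ k : ℕ, d ≤ k ∧ k ≤ d * n ∧
      (2 / 3 : ℝ) * (n : ℝ) ^ (d - 1) / Real.sqrt d ≤
        ((univ.filter fun x : Fin d → Fin n => (∑ i, ((x i : ℕ) + 1)) = k).card : ℝ) := by
  have hrpos : (0:ℝ) < Real.sqrt d := Real.sqrt_pos.2 (by positivity)
  have hr1 : (1:ℝ) ≤ Real.sqrt d := by
    rw [show (1:ℝ) = Real.sqrt 1 by simp]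
    exact Real.sqrt_le_sqrt (by exact_mod_cast Nat.one_le_of_lt hd)
  rcases eq_or_lt_of_le hn with h1 | hn2
  · -- n = 1
    refine ⟨d, le_refl d, Nat.le_mul_of_pos_right d (by omega), ?_⟩
    subst h1
    have hall : ∀ x ∈ (univ : Finset (Fin d → Fin 1)), (∑ i, ((x i : ℕ) + 1)) = d := by
      intro x _
      have h : ∀ i : Fin d, ((x i : ℕ) + 1) = 1 := fun i => by omega
      simp [h]
    rw [Finset.filter_true_of_mem hall, Finset.card_univ, Fintype.card_fun]
    simp only [Fintype.card_fin, Nat.cast_one, one_pow, Nat.cast_pow]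
    rw [div_le_iff₀ hrpos]
    push_cast
    nlinarith
  · -- n ≥ 2
    have hn' : 2 ≤ n := hn2
    set D : ℕ := d * (n + 1) with hDdef
    set E : ℕ := d * (n ^ 2 - 1) with hEdef
    set t : ℕ := Nat.sqrt E with htdef
    set c : ℕ := if (t + D) % 2 = 1 then t else t + 1 with hcdef
    have hn2' : 4 ≤ n ^ 2 := by nlinarith
    have hE6 : 6 ≤ E := by
      have h3 : 3 ≤ n ^ 2 - 1 := by omega
      calc 6 = 2 * 3 := rfl
      _ ≤ d * (n ^ 2 - 1) := Nat.mul_le_mul hd h3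
    have ht2 : t ^ 2 ≤ E := Nat.sqrt_le' E
    have htE : E < (t + 1) ^ 2 := Nat.lt_succ_sqrt' E
    have ht : 2 ≤ t := by rw [htdef, Nat.le_sqrt']; omega
    have hc2 : 2 ≤ c := by rw [hcdef]; split <;> omega
    have hparC : (c + D) % 2 = 1 := by rw [hcdef]; split <;> omega
    have htdn : t < d * n := by
      rw [htdef, Nat.sqrt_lt', hEdef]
      calc d * (n ^ 2 - 1) < d * n ^ 2 :=
            (Nat.mul_lt_mul_left (show 0 < d by omega)).2 (show n ^ 2 - 1 < n ^ 2 by omega)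
      _ ≤ (d * n) ^ 2 := by nlinarith
    have hcD : c < D := by
      have hc1 : c ≤ t + 1 := by rw [hcdef]; split <;> omega
      have : t + 1 ≤ d * n := htdn
      calc c ≤ t + 1 := hc1
      _ ≤ d * n := this
      _ < d * n + d := by omega
      _ = D := by rw [hDdef]; ring
    have hEQ : E < (c + 1) ^ 2 := by
      have hc1 : t ≤ c := by rw [hcdef]; split <;> omega
      calc E < (t + 1) ^ 2 := htE
      _ ≤ (c + 1) ^ 2 := Nat.pow_le_pow_left (by omega) 2
    -- the level-set counting function
    set cnt : ℕ → ℕ := fun k => (univ.filter fun x : Fin d → Fin n => (∑ i, ((x i : ℕ) + 1)) = k).card with hcnt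
    have hSlow : ∀ x : Fin d → Fin n, d ≤ ∑ i, ((x i : ℕ) + 1) := by
      intro x
      calc d = ∑ _i : Fin d, 1 := by simp
      _ ≤ ∑ i, ((x i : ℕ) + 1) := Finset.sum_le_sum fun i _ => by omega
    have hShigh : ∀ x : Fin d → Fin n, (∑ i, ((x i : ℕ) + 1)) ≤ d * n := by
      intro x
      calc (∑ i, ((x i : ℕ) + 1)) ≤ ∑ _i : Fin d, n :=
            Finset.sum_le_sum fun i _ => (x i).isLt
      _ = d * n := by simp [mul_comm]
    set A : Finset (Fin d → Fin n) :=
      univ.filter (fun x => 2 * (∑ i, ((x i : ℕ) + 1)) ≤ D + c ∧ D ≤ 2 * (∑ i, ((x i : ℕ) + 1)) + c) with hA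
    set Ac : Finset (Fin d → Fin n) :=
      univ.filter (fun x => ¬(2 * (∑ i, ((x i : ℕ) + 1)) ≤ D + c ∧ D ≤ 2 * (∑ i, ((x i : ℕ) + 1)) + c)) with hAc
    have hsplit : A.card + Ac.card = n ^ d := by
      rw [hA, hAc, Finset.card_filter_add_card_filter_not, Finset.card_univ,
        Fintype.card_fun, Fintype.card_fin, Fintype.card_fin]
    have hEcast : (E : ℝ) = d * ((n:ℝ) ^ 2 - 1) := by
      rw [hEdef, Nat.cast_mul, Nat.cast_sub (by omega : 1 ≤ n ^ 2)]
      push_cast; ring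
    have hmom : ∑ x : Fin d → Fin n, (((∑ i, ((x i : ℕ) + 1) : ℕ) : ℝ) - (D:ℝ)/2) ^ 2
        = (n : ℝ) ^ d * ((E:ℝ) / 12) := by
      have e : ∀ x : Fin d → Fin n, (((∑ i, ((x i : ℕ) + 1) : ℕ) : ℝ) - (D:ℝ)/2) ^ 2
          = ((∑ i, ((x i : ℝ) + 1)) - d * ((n:ℝ) + 1) / 2) ^ 2 := by
        intro x
        rw [hDdef]
        push_cast
        try ring
      rw [Finset.sum_congr rfl fun x _ => e x, momT2, hEcast]
      try ring
    -- Chebyshev tail bound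
    have htail : ∀ x ∈ Ac, (((c:ℝ) + 1)/2) ^ 2 ≤ (((∑ i, ((x i : ℕ) + 1) : ℕ) : ℝ) - (D:ℝ)/2) ^ 2 := by
      intro x hx
      rw [hAc, Finset.mem_filter] at hx
      have hx' := hx.2
      set s : ℕ := ∑ i, ((x i : ℕ) + 1) with hs
      have hcase : 2 * s ≥ D + c + 1 ∨ 2 * s + c + 1 ≤ D := by omega
      rcases hcase with h | h
      · have hR : (D:ℝ) + c + 1 ≤ 2 * (s:ℝ) := by exact_mod_cast h
        nlinarith
      · have hR : 2 * (s:ℝ) + c + 1 ≤ (D:ℝ) := by exact_mod_cast h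
        nlinarith
    have hAcbound : (Ac.card : ℝ) * (((c:ℝ) + 1)/2) ^ 2 ≤ (n : ℝ) ^ d * ((E:ℝ) / 12) := by
      calc (Ac.card : ℝ) * (((c:ℝ) + 1)/2) ^ 2
          = ∑ _x ∈ Ac, (((c:ℝ) + 1)/2) ^ 2 := by rw [Finset.sum_const, nsmul_eq_mul]
      _ ≤ ∑ x ∈ Ac, (((∑ i, ((x i : ℕ) + 1) : ℕ) : ℝ) - (D:ℝ)/2) ^ 2 :=
          Finset.sum_le_sum htail
      _ ≤ ∑ x : Fin d → Fin n, (((∑ i, ((x i : ℕ) + 1) : ℕ) : ℝ) - (D:ℝ)/2) ^ 2 := by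
          apply Finset.sum_le_sum_of_subset_of_nonneg (Finset.filter_subset _ _)
          intro x _ _; positivity
      _ = (n : ℝ) ^ d * ((E:ℝ) / 12) := hmom
    have hsplitR : (A.card : ℝ) + (Ac.card : ℝ) = (n:ℝ) ^ d := by
      exact_mod_cast hsplit
    have hcardA : (n:ℝ) ^ d * (3 * ((c:ℝ) + 1) ^ 2 - (E:ℝ)) ≤ (A.card : ℝ) * (3 * ((c:ℝ) + 1) ^ 2) := by
      nlinarith [hAcbound, hsplitR, sq_nonneg ((c:ℝ)+1)]
    -- the value window
    set V : Finset ℕ := (Finset.Icc d (d * n)).filter (fun k => 2 * k ≤ D + c ∧ D ≤ 2 * k + c) with hV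
    have hAsub : A ⊆ V.biUnion (fun k => univ.filter fun x : Fin d → Fin n => (∑ i, ((x i : ℕ) + 1)) = k) := by
      intro x hx
      rw [hA, Finset.mem_filter] at hx
      rw [Finset.mem_biUnion]
      exact ⟨∑ i, ((x i : ℕ) + 1),
        Finset.mem_filter.2 ⟨Finset.mem_Icc.2 ⟨hSlow x, hShigh x⟩, hx.2⟩,
        Finset.mem_filter.2 ⟨Finset.mem_univ _, rfl⟩⟩
    have hAle : A.card ≤ ∑ k ∈ V, cnt k :=
      le_trans (Finset.card_le_card hAsub) Finset.card_biUnion_le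
    have hVsub : V ⊆ Finset.Icc ((D - c)/2 + 1) ((D + c - 1)/2) := by
      intro k hk
      rw [hV, Finset.mem_filter, Finset.mem_Icc] at hk
      rw [Finset.mem_Icc]
      omega
    have hVcard : V.card ≤ c := by
      calc V.card ≤ (Finset.Icc ((D - c)/2 + 1) ((D + c - 1)/2)).card :=
            Finset.card_le_card hVsub
      _ = (D + c - 1)/2 + 1 - ((D - c)/2 + 1) := Nat.card_Icc _ _
      _ ≤ c := by omega
    -- A is nonempty
    have hApos : 0 < A.card := by
      by_contra h
      push_neg at h
      have h0 : A.card = 0 := by omega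
      rw [h0] at hcardA
      push_cast at hcardA
      have hEQ' : (E:ℝ) < ((c:ℝ) + 1) ^ 2 := by exact_mod_cast hEQ
      have hnp : (0:ℝ) < (n:ℝ) ^ d := by positivity
      have hpos2 : (0:ℝ) < 3 * ((c:ℝ) + 1) ^ 2 - (E:ℝ) := by nlinarith [sq_nonneg ((c:ℝ)+1)]
      nlinarith [mul_pos hnp hpos2]
    have hVne : V.Nonempty := by
      obtain ⟨x, hx⟩ := Finset.card_pos.1 hApos
      rw [hA, Finset.mem_filter] at hx
      exact ⟨∑ i, ((x i : ℕ) + 1), Finset.mem_filter.2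
        ⟨Finset.mem_Icc.2 ⟨hSlow x, hShigh x⟩, hx.2⟩⟩
    obtain ⟨k, hkV, hkmax⟩ := Finset.exists_max_image V cnt hVne
    have hkV' := hkV
    rw [hV, Finset.mem_filter, Finset.mem_Icc] at hkV'
    have hkIcc := hkV'.1
    refine ⟨k, hkIcc.1, hkIcc.2, ?_⟩
    have hAcnt : A.card ≤ c * cnt k := by
      calc A.card ≤ ∑ k' ∈ V, cnt k' := hAle
      _ ≤ V.card • cnt k := Finset.sum_le_card_nsmul V cnt (cnt k) hkmax
      _ = V.card * cnt k := by rw [smul_eq_mul]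
      _ ≤ c * cnt k := Nat.mul_le_mul_right _ hVcard
    -- final assembly
    have hAcntR : (A.card : ℝ) ≤ (c:ℝ) * (cnt k : ℝ) := by exact_mod_cast hAcnt
    have key := coreIneq d n hd hn'
    rw [← htdef, ← hcdef, ← hEdef] at key
    set r : ℝ := Real.sqrt d with hr
    have hpow : (n:ℝ) ^ d = (n:ℝ) ^ (d - 1) * n := by
      rw [← pow_succ]
      congr 1
      omega
    have hQpos : (0:ℝ) < 3 * (c:ℝ) * ((c:ℝ) + 1) ^ 2 := by positivity
    have hc2R : (2:ℝ) ≤ (c:ℝ) := by exact_mod_cast hc2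
    rw [div_le_iff₀ hrpos]
    refine le_of_mul_le_mul_right ?_ hQpos
    have hnd1 : (0:ℝ) ≤ (n:ℝ) ^ (d - 1) := by positivity
    calc 2 / 3 * (n:ℝ) ^ (d - 1) * (3 * (c:ℝ) * ((c:ℝ) + 1) ^ 2)
        = (2 * (c:ℝ) * ((c:ℝ) + 1) ^ 2) * (n:ℝ) ^ (d - 1) := by ring
    _ ≤ ((n:ℝ) * r * (3 * ((c:ℝ) + 1) ^ 2 - (E:ℝ))) * (n:ℝ) ^ (d - 1) :=
        mul_le_mul_of_nonneg_right key hnd1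
    _ = r * ((n:ℝ) ^ d * (3 * ((c:ℝ) + 1) ^ 2 - (E:ℝ))) := by rw [hpow]; ring
    _ ≤ r * ((A.card : ℝ) * (3 * ((c:ℝ) + 1) ^ 2)) :=
        mul_le_mul_of_nonneg_left hcardA (le_of_lt hrpos)
    _ ≤ r * (((c:ℝ) * (cnt k : ℝ)) * (3 * ((c:ℝ) + 1) ^ 2)) := by
        have h5 : (A.card : ℝ) * (3 * ((c:ℝ) + 1) ^ 2) ≤ ((c:ℝ) * (cnt k : ℝ)) * (3 * ((c:ℝ) + 1) ^ 2) :=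
          mul_le_mul_of_nonneg_right hAcntR (by positivity)
        exact mul_le_mul_of_nonneg_left h5 (le_of_lt hrpos)
    _ = (cnt k : ℝ) * r * (3 * (c:ℝ) * ((c:ℝ) + 1) ^ 2) := by ring
end

section
/- For every q ≥ 2 and n ≥ 2, 2^{(2/3)·n^{q-1}/√q} ≤ N_3(q,n) ≤ 2^{2n^{q-1}}, where N_3(q,n) is the smallest N such that every q-coloring of the triples of {1,...,N} contains a monochromatic monotone path of length n. -/
/-- `N_3(q,n)`: the least `N` such that every `q`-coloring of the triples of `{1,…,N}`
contains a monochromatic monotone path of length `n`. -/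
noncomputable def N3 (q n : ℕ) : ℕ :=
  sInf {N : ℕ | ∀ c : Fin N → Fin N → Fin N → Fin q, HasMonoPath3 n c}

open Finset

namespace P13

variable (q n : ℕ)

/-- sum of coordinates -/
def sV (x : Fin q → Fin n) : ℕ := ∑ i, (x i : ℕ)

/-- layer counts -/
def cnts (t : ℕ) : ℕ := (univ.filter (fun x : Fin q → Fin n => sV q n x = t)).card

/-- max layer size -/
def Mx : ℕ := (Finset.range (q * (n-1) + 1)).sup (cnts q n)

lemma sV_le (x : Fin q → Fin n) : sV q n x ≤ q * (n-1) := by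
  calc sV q n x ≤ ∑ _i : Fin q, (n-1) := Finset.sum_le_sum (fun i _ => by
        have := (x i).isLt; omega)
    _ = q * (n-1) := by simp [mul_comm]

lemma sum_range_id_z (m : ℕ) : 2 * ∑ t ∈ Finset.range m, (t:ℤ) = m * (m - 1) := by
  induction m with
  | zero => simp
  | succ k ih => rw [Finset.sum_range_succ]; push_cast [mul_add] at ih ⊢; ring_nf at ih ⊢; linarith

lemma sum_range_sq_z (m : ℕ) : 6 * ∑ t ∈ Finset.range m, (t:ℤ)^2 = m * (m - 1) * (2*m - 1) := by
  induction m with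
  | zero => simp
  | succ k ih => rw [Finset.sum_range_succ]; push_cast [mul_add] at ih ⊢; ring_nf at ih ⊢; linarith

lemma sum_range_sq_aux (m : ℕ) :
    3 * ∑ t ∈ Finset.range m, ((2 * t : ℤ) - ((m:ℤ) - 1))^2 = (m:ℤ) * ((m:ℤ)^2 - 1) := by
  have e : ∀ t : ℕ, ((2 * t : ℤ) - ((m:ℤ) - 1))^2
      = 4*(t:ℤ)^2 - 4*((m:ℤ)-1)*t + ((m:ℤ)-1)^2 := fun t => by ring
  rw [Finset.sum_congr rfl fun t _ => e t]
  rw [Finset.sum_add_distrib, Finset.sum_sub_distrib, ← Finset.mul_sum, ← Finset.mul_sum,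
    Finset.sum_const, Finset.card_range, nsmul_eq_mul]
  have h1 := sum_range_id_z m
  have h2 := sum_range_sq_z m
  linear_combination 2 * h2 - 6*((m:ℤ) - 1) * h1

lemma sum_range_lin_aux (m : ℕ) :
    ∑ t ∈ Finset.range m, ((2 * t : ℤ) - ((m:ℤ) - 1)) = 0 := by
  rw [Finset.sum_sub_distrib, Finset.sum_const, Finset.card_range, nsmul_eq_mul, ← Finset.mul_sum]
  have h1 := sum_range_id_z m
  linear_combination h1

lemma fin_sum_sq (m : ℕ) :
    3 * ∑ t : Fin m, ((2 * (t:ℕ) : ℤ) - ((m:ℤ) - 1))^2 = (m:ℤ) * ((m:ℤ)^2 - 1) := by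
  rw [Fin.sum_univ_eq_sum_range (fun t => ((2 * (t:ℕ) : ℤ) - ((m:ℤ)-1))^2)]
  exact sum_range_sq_aux m

lemma fin_sum_lin (m : ℕ) :
    ∑ t : Fin m, ((2 * (t:ℕ) : ℤ) - ((m:ℤ) - 1)) = 0 := by
  rw [Fin.sum_univ_eq_sum_range (fun t => ((2 * (t:ℕ) : ℤ) - ((m:ℤ)-1)))]
  exact sum_range_lin_aux m

lemma pi_sum_split {β : Type*} [AddCommMonoid β] (p : ℕ) (f : (Fin (p+1) → Fin n) → β) :
    ∑ x : Fin (p+1) → Fin n, f x = ∑ a : Fin n, ∑ y : Fin p → Fin n, f (Fin.cons a y) := by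
  have h := Fintype.sum_equiv (Fin.consEquiv fun _ => Fin n)
    (fun pr : Fin n × (Fin p → Fin n) => f (Fin.cons pr.1 pr.2)) f
    (fun pr => by simp [Fin.consEquiv])
  rw [← h, Fintype.sum_prod_type]

lemma sV_cons (p : ℕ) (a : Fin n) (y : Fin p → Fin n) :
    sV (p+1) n (Fin.cons a y) = (a:ℕ) + sV p n y := by
  unfold sV
  rw [Fin.sum_univ_succ]
  simp

lemma lin_sum_z :
    ∑ x : Fin q → Fin n, ((2 * sV q n x : ℤ) - q * ((n:ℤ)-1)) = 0 := by
  induction q with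
  | zero =>
    simp [sV]
  | succ p ih =>
    rw [pi_sum_split]
    simp only [Nat.cast_add, Nat.cast_one]
    have e : ∀ a : Fin n, ∀ y : Fin p → Fin n,
        ((2 * sV (p+1) n (Fin.cons a y) : ℤ) - ((p:ℤ)+1) * ((n:ℤ)-1))
        = ((2 * sV p n y : ℤ) - p * ((n:ℤ)-1)) + ((2 * (a:ℕ) : ℤ) - ((n:ℤ)-1)) := by
      intro a y; rw [sV_cons]; push_cast; ring
    calc ∑ a : Fin n, ∑ y : Fin p → Fin n, ((2 * sV (p+1) n (Fin.cons a y) : ℤ) - ((p:ℤ)+1) * ((n:ℤ)-1))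
        = ∑ a : Fin n, ((∑ y : Fin p → Fin n, ((2 * sV p n y : ℤ) - p * ((n:ℤ)-1)))
            + (Fintype.card (Fin p → Fin n)) * ((2 * (a:ℕ) : ℤ) - ((n:ℤ)-1))) := by
          refine Finset.sum_congr rfl fun a _ => ?_
          rw [Finset.sum_congr rfl fun y _ => e a y, Finset.sum_add_distrib, Finset.sum_const,
            nsmul_eq_mul, Finset.card_univ]
      _ = 0 := by
          rw [ih]
          simp only [zero_add, ← Finset.mul_sum]
          rw [fin_sum_lin n]; ring

lemma var_sum_z :
    3 * ∑ x : Fin q → Fin n, ((2 * sV q n x : ℤ) - q * ((n:ℤ)-1))^2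
      = (q : ℤ) * (n:ℤ)^q * ((n:ℤ)^2 - 1) := by
  induction q with
  | zero => simp [sV]
  | succ p ih =>
    rw [pi_sum_split]
    simp only [Nat.cast_add, Nat.cast_one]
    have e : ∀ a : Fin n, ∀ y : Fin p → Fin n,
        ((2 * sV (p+1) n (Fin.cons a y) : ℤ) - ((p:ℤ)+1) * ((n:ℤ)-1))^2
        = ((2 * sV p n y : ℤ) - p * ((n:ℤ)-1))^2
          + 2 * ((2 * (a:ℕ) : ℤ) - ((n:ℤ)-1)) * ((2 * sV p n y : ℤ) - p * ((n:ℤ)-1))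
          + ((2 * (a:ℕ) : ℤ) - ((n:ℤ)-1))^2 := by
      intro a y; rw [sV_cons]; push_cast; ring
    have inner : ∀ a : Fin n,
        ∑ y : Fin p → Fin n, ((2 * sV (p+1) n (Fin.cons a y) : ℤ) - ((p:ℤ)+1) * ((n:ℤ)-1))^2
        = (∑ y : Fin p → Fin n, ((2 * sV p n y : ℤ) - p * ((n:ℤ)-1))^2)
          + (Fintype.card (Fin p → Fin n)) * ((2 * (a:ℕ) : ℤ) - ((n:ℤ)-1))^2 := by
      intro a
      rw [Finset.sum_congr rfl fun y _ => e a y]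
      rw [Finset.sum_add_distrib, Finset.sum_add_distrib, Finset.sum_const, nsmul_eq_mul,
        Finset.card_univ, ← Finset.mul_sum, lin_sum_z, mul_zero, add_zero]
    rw [Finset.sum_congr rfl fun a _ => inner a]
    rw [Finset.sum_add_distrib, Finset.sum_const, nsmul_eq_mul, Finset.card_univ, ← Finset.mul_sum]
    have hc : (Fintype.card (Fin n) : ℤ) = n := by simp
    have hcp : (Fintype.card (Fin p → Fin n) : ℤ) = (n:ℤ)^p := by
      simp [Fintype.card_fun]
    rw [hc, hcp]
    have h2 := fin_sum_sq n
    linear_combination (n:ℤ) * ih + (n:ℤ)^p * h2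
namespace Shell

variable (q n : ℕ)

/-- distance to center (doubled), as a natural number -/
noncomputable def ad (t : ℕ) : ℕ := ((2 * t : ℤ) - (q:ℤ) * ((n:ℤ)-1)).natAbs

noncomputable def cntt (j : ℕ) : ℕ :=
  ((Finset.range (q * (n-1) + 1)).filter (fun t => ad q n t ≤ j)).card

lemma sum_odd (r : ℕ) : ∑ j ∈ Finset.range r, (2*j+1) = r^2 := by
  induction r with
  | zero => simp
  | succ k ih => rw [Finset.sum_range_succ, ih]; ring

lemma min_sq (m K : ℕ) :
    (min m K)^2 = ∑ j ∈ Finset.range K, if j < m then 2*j+1 else 0 := by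
  rw [← Finset.sum_filter]
  have h : (Finset.range K).filter (fun j => j < m) = Finset.range (min m K) := by
    ext j; simp; omega
  rw [h, sum_odd]

/-- F j : number of x with ad > j -/
noncomputable def Fj (j : ℕ) : ℕ :=
  (univ.filter (fun x : Fin q → Fin n => j < ad q n (sV q n x))).card

lemma D2_ge (A : ℕ) :
    ∑ j ∈ Finset.range (2*A), (2*j+1) * Fj q n j
      ≤ ∑ x : Fin q → Fin n, (ad q n (sV q n x))^2 := by
  have step1 : ∀ x : Fin q → Fin n,
      ∑ j ∈ Finset.range (2*A), (if j < ad q n (sV q n x) then 2*j+1 else 0)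
        ≤ (ad q n (sV q n x))^2 := by
    intro x
    rw [← min_sq]
    exact Nat.pow_le_pow_left (min_le_left _ _) 2
  calc ∑ j ∈ Finset.range (2*A), (2*j+1) * Fj q n j
      = ∑ j ∈ Finset.range (2*A), ∑ x : Fin q → Fin n,
          (if j < ad q n (sV q n x) then 2*j+1 else 0) := by
        refine Finset.sum_congr rfl fun j _ => ?_
        rw [Finset.sum_ite, Finset.sum_const, Finset.sum_const]
        simp [Fj, mul_comm]
    _ = ∑ x : Fin q → Fin n, ∑ j ∈ Finset.range (2*A),
          (if j < ad q n (sV q n x) then 2*j+1 else 0) := Finset.sum_comm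
    _ ≤ _ := Finset.sum_le_sum fun x _ => step1 x

lemma Fj_ge (j : ℕ) (hn : 1 ≤ n) :
    n^q ≤ Fj q n j + Mx q n * cntt q n j := by
  classical
  have hsplit : Fj q n j + (univ.filter (fun x : Fin q → Fin n => ¬ (j < ad q n (sV q n x)))).card
      = n^q := by
    rw [Fj, Finset.card_filter_add_card_filter_not]
    simp [Fintype.card_fun]
  set G := (univ.filter (fun x : Fin q → Fin n => ¬ (j < ad q n (sV q n x)))).card with hG
  have hGle : G ≤ Mx q n * cntt q n j := by
    have hmap : ∀ x ∈ (univ.filter (fun x : Fin q → Fin n => ¬ (j < ad q n (sV q n x)))),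
        sV q n x ∈ (Finset.range (q * (n-1) + 1)).filter (fun t => ad q n t ≤ j) := by
      intro x hx
      simp only [Finset.mem_filter, Finset.mem_univ, true_and, not_lt] at hx ⊢
      exact ⟨Finset.mem_range.mpr (by have := sV_le q n x; omega), hx⟩
    rw [hG, Finset.card_eq_sum_card_fiberwise hmap]
    calc ∑ t ∈ (Finset.range (q * (n-1) + 1)).filter (fun t => ad q n t ≤ j),
          ((univ.filter (fun x : Fin q → Fin n => ¬ (j < ad q n (sV q n x)))).filter
            (fun x => sV q n x = t)).card
        ≤ ∑ _t ∈ (Finset.range (q * (n-1) + 1)).filter (fun t => ad q n t ≤ j), Mx q n := by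
          refine Finset.sum_le_sum fun t ht => ?_
          have h1 : ((univ.filter (fun x : Fin q → Fin n => ¬ (j < ad q n (sV q n x)))).filter
              (fun x => sV q n x = t)).card ≤ cnts q n t := by
            apply Finset.card_le_card
            intro x hx
            simp only [Finset.mem_filter] at hx ⊢
            exact ⟨Finset.mem_univ x, hx.2⟩
          have h2 : cnts q n t ≤ Mx q n := by
            apply Finset.le_sup
            simp only [Finset.mem_filter] at ht
            exact ht.1
          omega
      _ = cntt q n j * Mx q n := by rw [Finset.sum_const, smul_eq_mul, cntt]
      _ = Mx q n * cntt q n j := mul_comm _ _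
  omega

lemma card_filter_le_Icc (S : Finset ℕ) (p : ℕ → Prop) [DecidablePred p] (lo hi : ℕ)
    (h : ∀ t ∈ S.filter p, lo ≤ t ∧ t ≤ hi) : (S.filter p).card ≤ hi + 1 - lo := by
  calc (S.filter p).card ≤ (Finset.Icc lo hi).card :=
        Finset.card_le_card (fun t ht => Finset.mem_Icc.mpr (h t ht))
    _ = hi + 1 - lo := Nat.card_Icc lo hi

lemma ad_le_iff (hn : 1 ≤ n) (t j : ℕ) : ad q n t ≤ j ↔
    (q * (n-1) : ℕ) ≤ 2*t + j ∧ 2*t ≤ (q * (n-1) : ℕ) + j := by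
  have hc : ((q * (n-1) : ℕ) : ℤ) = (q:ℤ) * ((n:ℤ)-1) := by
    rw [Nat.cast_mul, Nat.cast_sub hn]; norm_num
  rw [ad, ← hc]
  omega

lemma cntt_le2 (hn : 1 ≤ n) (a : ℕ) : cntt q n (2*a+1) ≤ 2*a+2 := by
  set μ := q * (n-1) with hμ
  have h : cntt q n (2*a+1) ≤ ((μ + (2*a+1)) / 2) + 1 - ((μ + 1 - (2*a+1)) / 2) := by
    rw [cntt]
    apply card_filter_le_Icc
    intro t ht
    simp only [Finset.mem_filter, Finset.mem_range, ad_le_iff q n hn] at ht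
    omega
  omega

lemma cntt_pair (hn : 1 ≤ n) (a : ℕ) : cntt q n (2*a) + cntt q n (2*a+1) ≤ 4*a+2 := by
  set μ := q * (n-1) with hμ
  have h1 : cntt q n (2*a) ≤ (μ + 2*a)/2 + 1 - (μ + 1 - 2*a) / 2 := by
    rw [cntt]
    apply card_filter_le_Icc
    intro t ht
    simp only [Finset.mem_filter, Finset.mem_range, ad_le_iff q n hn] at ht
    omega
  have h2 : cntt q n (2*a+1) ≤ (μ + (2*a+1))/2 + 1 - (μ + 1 - (2*a+1)) / 2 := by
    rw [cntt]
    apply card_filter_le_Icc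
    intro t ht
    simp only [Finset.mem_filter, Finset.mem_range, ad_le_iff q n hn] at ht
    omega
  omega

lemma shell_sum (hn : 1 ≤ n) (A : ℕ) :
    3 * ∑ j ∈ Finset.range (2*A), (2*j+1) * cntt q n j ≤ 16*A^3 + 2*A := by
  induction A with
  | zero => simp
  | succ B ih =>
    have h2 : 2*(B+1) = 2*B + 1 + 1 := by ring
    rw [h2, Finset.sum_range_succ, Finset.sum_range_succ]
    have hp1 := cntt_pair q n hn B
    have hp2 := cntt_le2 q n hn B
    have key : (2*(2*B)+1) * cntt q n (2*B) + (2*(2*B+1)+1) * cntt q n (2*B+1)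
        ≤ 16*B^2 + 16*B + 6 := by
      have e1 : (2*(2*B)+1) * cntt q n (2*B) + (2*(2*B+1)+1) * cntt q n (2*B+1)
          = (4*B+1) * (cntt q n (2*B) + cntt q n (2*B+1)) + 2 * cntt q n (2*B+1) := by ring
      rw [e1]
      have e2 : (4*B+1) * (cntt q n (2*B) + cntt q n (2*B+1)) ≤ (4*B+1) * (4*B+2) :=
        Nat.mul_le_mul_left _ hp1
      nlinarith
    nlinarith [ih]

/-- total variance in natural numbers -/
lemma var_sum_n (h1 : 1 ≤ n) :
    3 * ∑ x : Fin q → Fin n, (ad q n (sV q n x))^2 = q * n^q * (n^2 - 1) := by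
  have hz := var_sum_z q n
  have hcast : ((3 * ∑ x : Fin q → Fin n, (ad q n (sV q n x))^2 : ℕ) : ℤ)
      = 3 * ∑ x : Fin q → Fin n, ((2 * sV q n x : ℤ) - q * ((n:ℤ)-1))^2 := by
    push_cast
    refine congrArg _ (Finset.sum_congr rfl fun x _ => ?_)
    rw [ad]
    exact_mod_cast Int.natAbs_sq ((2 * sV q n x : ℤ) - q * ((n:ℤ)-1))
  have : ((q * n^q * (n^2 - 1) : ℕ) : ℤ) = (q : ℤ) * (n:ℤ)^q * ((n:ℤ)^2 - 1) := by
    have h2 : 1 ≤ n^2 := Nat.one_le_pow _ _ h1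
    push_cast [Nat.cast_sub h2]
    ring
  omega

/-- the central shell estimate, for all A -/
lemma shell_main (hn : 1 ≤ n) (A : ℕ) :
    12 * n^q * A^2 ≤ q * n^q * (n^2-1) + Mx q n * (16*A^3 + 2*A) := by
  have h1 : ∑ j ∈ Finset.range (2*A), (2*j+1) * n^q
      ≤ ∑ j ∈ Finset.range (2*A), (2*j+1) * (Fj q n j + Mx q n * cntt q n j) :=
    Finset.sum_le_sum fun j _ => Nat.mul_le_mul_left _ (Fj_ge q n j hn)
  have h2 : ∑ j ∈ Finset.range (2*A), (2*j+1) * n^q = 4*A^2 * n^q := by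
    rw [← Finset.sum_mul, sum_odd]; ring
  have h3 : ∑ j ∈ Finset.range (2*A), (2*j+1) * (Fj q n j + Mx q n * cntt q n j)
      = (∑ j ∈ Finset.range (2*A), (2*j+1) * Fj q n j)
        + Mx q n * ∑ j ∈ Finset.range (2*A), (2*j+1) * cntt q n j := by
    rw [Finset.mul_sum, ← Finset.sum_add_distrib]
    exact Finset.sum_congr rfl fun j _ => by ring
  have h4 := D2_ge q n A
  have h5 := var_sum_n q n hn
  have h6 := shell_sum q n hn A
  nlinarith [Nat.mul_le_mul_left (Mx q n) h6]

lemma Mx_pos (hq : 1 ≤ q) (hn : 1 ≤ n) : 1 ≤ Mx q n := by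
  have h0 : 1 ≤ cnts q n 0 := by
    rw [cnts]
    apply Finset.card_pos.mpr
    refine ⟨fun _ => ⟨0, hn⟩, ?_⟩
    simp [sV]
  calc 1 ≤ cnts q n 0 := h0
    _ ≤ Mx q n := Finset.le_sup (Finset.mem_range.mpr (by omega))

lemma Mx_le (t : ℕ) : cnts q n t ≤ Mx q n := by
  rcases Nat.lt_or_ge t (q*(n-1)+1) with h | h
  · exact Finset.le_sup (Finset.mem_range.mpr h)
  · have : cnts q n t = 0 := by
      rw [cnts, Finset.card_eq_zero]
      apply Finset.filter_eq_empty_iff.mpr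
      intro x _
      have := sV_le q n x
      omega
    omega

lemma exists_layer : ∃ t, cnts q n t = Mx q n := by
  obtain ⟨t, _, ht⟩ := Finset.exists_mem_eq_sup (Finset.range (q*(n-1)+1))
    ⟨0, Finset.mem_range.mpr (by omega)⟩ (cnts q n)
  exact ⟨t, ht.symm⟩

/-- MAIN part B result -/
lemma b_main (hq : 2 ≤ q) (hn : 2 ≤ n) : 4 * (n^q)^2 ≤ 9 * q * (Mx q n)^2 * n^2 := by
  have hn1 : 1 ≤ n := by omega
  have hM1 : 1 ≤ Mx q n := Mx_pos q n (by omega) hn1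
  have hTpos : 0 < n^q := Nat.pow_pos (by omega)
  set A := n^q / (2 * Mx q n) with hA
  have hA1 : 2 * Mx q n * A ≤ n^q := Nat.mul_div_le (n^q) (2 * Mx q n)
  have hA2 : n^q < 2 * Mx q n * (A + 1) := Nat.lt_mul_div_succ (n^q) (by omega)
  have hshell := shell_main q n hn1 A
  have h16 : Mx q n * (16*A^3 + 2*A) ≤ 8*A^2*(n^q) + n^q := by
    have e1 : Mx q n * (16*A^3) = 8*A^2*(2*Mx q n*A) := by ring
    have e2 : Mx q n * (2*A) = 2 * Mx q n * A := by ring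
    have h3 := Nat.mul_le_mul_left (8*A^2) hA1
    linarith
  have h4 : (4*A^2) * n^q ≤ (q*(n^2-1)+1) * n^q := by
    have e3 : (4*A^2) * n^q + 8*A^2*(n^q) = 12 * n^q * A^2 := by ring
    have e4 : (q*(n^2-1)+1) * n^q = q*n^q*(n^2-1) + n^q := by ring
    linarith [hshell, h16]
  have hq1 : 4*A^2 ≤ q*(n^2-1) + 1 := Nat.le_of_mul_le_mul_right h4 hTpos
  have hdist : q*(n^2-1) + q = q*n^2 := by
    rw [← Nat.mul_succ]
    congr 1
    have : 1 ≤ n^2 := Nat.one_le_pow _ _ hn1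
    omega
  set m := 2*A with hm
  have hmm : m^2 = 4*A^2 := by rw [hm]; ring
  have hmsq : m^2 + q ≤ q*n^2 + 1 := by linarith [hq1, hdist, hmm]
  have hTm : 2*(n^q) < Mx q n*(2*m+4) := by
    have e : 2*(2*Mx q n*(A+1)) = Mx q n*(2*m+4) := by rw [hm]; ring
    omega
  have hqn : 8 ≤ q*n^2 := by
    calc (8:ℕ) = 2*2^2 := by norm_num
      _ ≤ q*n^2 := Nat.mul_le_mul hq (Nat.pow_le_pow_left hn 2)
  have hfin : (2*m+4)^2 ≤ 9*(q*n^2) := by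
    rcases Nat.lt_or_ge m 4 with hm4 | hm4
    · interval_cases m
      · linarith
      · linarith
      · linarith
      · -- m = 3
        rcases Nat.lt_or_ge n 3 with h3 | h3
        · have hn2 : n = 2 := by omega
          subst hn2
          norm_num at hmsq ⊢
          omega
        · have h18 : 18 ≤ q*n^2 := by
            calc (18:ℕ) = 2*3^2 := by norm_num
              _ ≤ q*n^2 := Nat.mul_le_mul hq (Nat.pow_le_pow_left h3 2)
          linarith
    · have h1 : 4*m ≤ m^2 := by
        calc 4*m ≤ m*m := Nat.mul_le_mul hm4 (le_refl m)
          _ = m^2 := (sq m).symm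
      have egoal : (2*m+4)^2 = 4*m^2+16*m+16 := by ring
      rw [egoal]
      linarith [hmsq, h1, hq]
  calc 4*(n^q)^2 = (2*(n^q))^2 := by ring
    _ ≤ (Mx q n*(2*m+4))^2 := Nat.pow_le_pow_left (by omega) 2
    _ = (Mx q n)^2 * (2*m+4)^2 := by ring
    _ ≤ (Mx q n)^2 * (9*(q*n^2)) := Nat.mul_le_mul_left _ hfin
    _ = 9 * q * (Mx q n)^2 * n^2 := by ring

end Shell


section D
variable (q n : ℕ)

lemma antichain_layer (x y : Fin q → Fin n) (hs : sV q n x = sV q n y)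
    (hle : ∀ i, x i ≤ y i) : x = y := by
  by_contra hne
  have hex : ∃ i, x i < y i := by
    by_contra hall
    push_neg at hall
    exact hne (funext fun i => le_antisymm (hle i) (hall i))
  obtain ⟨i0, hi0⟩ := hex
  have : sV q n x < sV q n y := by
    apply Finset.sum_lt_sum (fun i _ => by exact_mod_cast hle i)
    exact ⟨i0, Finset.mem_univ i0, by exact_mod_cast hi0⟩
  omega

/-- Construction of a path-free coloring on `N ≤ 2^(size of an antichain)` vertices. -/
lemma d_construct (hq : 1 ≤ q) (hn : 1 ≤ n) (AC : Finset (Fin q → Fin n))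
    (hAC : ∀ x ∈ AC, ∀ y ∈ AC, (∀ i, x i ≤ y i) → x = y)
    (N : ℕ) (hN : N ≤ 2^(AC.card)) :
    ∃ c : Fin N → Fin N → Fin N → Fin q, ¬ HasMonoPath3 n c := by
  classical
  set le : Finset (Fin q → Fin n) → Finset (Fin q → Fin n) → Bool :=
    fun s t => s.card ≤ t.card with hle
  set L : List (Finset (Fin q → Fin n)) := AC.powerset.toList.mergeSort le with hL
  have hperm : L.Perm AC.powerset.toList := List.mergeSort_perm _ _
  have hlen : L.length = 2^(AC.card) := by
    rw [hperm.length_eq, Finset.length_toList, Finset.card_powerset]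
  have hnodup : L.Nodup := (hperm.nodup_iff).mpr (Finset.nodup_toList _)
  have hsorted : List.Pairwise (fun a b => le a b = true) L :=
    List.pairwise_mergeSort (le := le)
      (fun a b c hab hbc => by
        simp only [hle, decide_eq_true_eq] at *; omega)
      (fun a b => by simp only [hle, Bool.or_eq_true, decide_eq_true_eq]; omega)
      AC.powerset.toList
  have hget : ∀ i : Fin N, (i : ℕ) < L.length := fun i => by
    have := i.isLt; omega
  set e : Fin N → Finset (Fin q → Fin n) := fun i => L.get ⟨i, hget i⟩ with he
  have hsubAC : ∀ i, e i ⊆ AC := by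
    intro i
    have : e i ∈ AC.powerset := by
      rw [he]
      have : L.get ⟨i, hget i⟩ ∈ L := List.get_mem _ _
      have := hperm.mem_iff.mp this
      rw [Finset.mem_toList] at this
      exact this
    exact Finset.mem_powerset.mp this
  have hcardmono : ∀ i j : Fin N, i < j → (e i).card ≤ (e j).card := by
    intro i j hij
    have h := List.pairwise_iff_get.mp hsorted ⟨i, hget i⟩ ⟨j, hget j⟩ (by
      simp only [Fin.mk_lt_mk]; exact hij)
    simpa [hle, he, decide_eq_true_eq] using h
  have hinj : ∀ i j : Fin N, e i = e j → i = j := by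
    intro i j hij
    have h1 := (List.Nodup.get_inj_iff hnodup).mp hij
    have h2 : (i:ℕ) = (j:ℕ) := by simpa using h1
    exact Fin.ext h2
  have hnsub : ∀ i j : Fin N, i < j → ¬ e j ⊆ e i := by
    intro i j hij hsub
    have hc := hcardmono i j hij
    have : e j = e i := Finset.eq_of_subset_of_card_le hsub hc
    have := hinj j i this
    subst this
    exact lt_irrefl _ hij
  -- the witness function
  set w : Fin N → Fin N → (Fin q → Fin n) := fun i j =>
    if h : ¬ e j ⊆ e i then (Finset.sdiff_nonempty.mpr h).choose else fun _ => ⟨0, hn⟩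
    with hw
  have hwmem : ∀ i j : Fin N, i < j → w i j ∈ e j \ e i := by
    intro i j hij
    rw [hw]
    simp only [hnsub i j hij, not_false_iff, dif_pos]
    exact (Finset.sdiff_nonempty.mpr (hnsub i j hij)).choose_spec
  have key : ∀ i j k : Fin N, i < j → j < k → ∃ m, w i j m < w j k m := by
    intro i j k hij hjk
    by_contra hcon
    push_neg at hcon
    have h1 := hwmem i j hij
    have h2 := hwmem j k hjk
    rw [Finset.mem_sdiff] at h1 h2
    have hWij : w i j ∈ AC := hsubAC j h1.1
    have hWjk : w j k ∈ AC := hsubAC k h2.1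
    have : w j k = w i j := hAC _ hWjk _ hWij (fun i => hcon i)
    exact h2.2 (this ▸ h1.1)
  refine ⟨fun i j k => if h : i < j ∧ j < k then (key i j k h.1 h.2).choose else ⟨0, hq⟩, ?_⟩
  rintro ⟨x, hmono, col, hcol⟩
  -- F i = value in coordinate col of the witness for the i-th edge
  have hstep : ∀ i : ℕ, ∀ h1 : i < n,
      (w (x ⟨i, by omega⟩) (x ⟨i+1, by omega⟩) col : ℕ)
        < (w (x ⟨i+1, by omega⟩) (x ⟨i+2, by omega⟩) col : ℕ) := by
    intro i h1
    have hx1 : x ⟨i, by omega⟩ < x ⟨i+1, by omega⟩ := hmono (by simp [Fin.mk_lt_mk])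
    have hx2 : x ⟨i+1, by omega⟩ < x ⟨i+2, by omega⟩ := hmono (by simp [Fin.mk_lt_mk])
    have hc := hcol i h1
    simp only [] at hc
    rw [dif_pos ⟨hx1, hx2⟩] at hc
    have hspec := (key _ _ _ hx1 hx2).choose_spec
    rw [hc] at hspec
    exact_mod_cast hspec
  -- iterate
  have hchain : ∀ i : ℕ, ∀ _h : i ≤ n,
      i ≤ (w (x ⟨i, by omega⟩) (x ⟨i+1, by omega⟩) col : ℕ) := by
    intro i
    induction i with
    | zero => intro _; omega
    | succ p ih =>
      intro hp
      have h1 := ih (by omega)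
      have h2 := hstep p (by omega)
      show p+1 ≤ ((w (x ⟨p+1, by omega⟩) (x ⟨p+2, by omega⟩) col : Fin n) : ℕ)
      omega
  have hfin := hchain n (le_refl n)
  have := (w (x ⟨n, by omega⟩) (x ⟨n+1, by omega⟩) col).isLt
  omega

end D

section E
variable {q : ℕ} (c' : ℕ → ℕ → ℕ → Fin q)

noncomputable def glen : ℕ → ℕ → Fin q → ℕ
  | j, k, m => (Finset.range j).attach.sup fun i =>
      if c' i.1 j k = m then glen i.1 j m + 1 else 0
  termination_by j _ _ => j
  decreasing_by exact Finset.mem_range.mp i.2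

lemma glen_eq (j k : ℕ) (m : Fin q) : glen c' j k m = (Finset.range j).attach.sup fun i =>
    if c' i.1 j k = m then glen c' i.1 j m + 1 else 0 := by rw [glen]

lemma glen_step (i j k : ℕ) (m : Fin q) (hij : i < j) (hc : c' i j k = m) :
    glen c' i j m + 1 ≤ glen c' j k m := by
  rw [glen_eq c' j k m]
  have h := Finset.le_sup
    (f := fun i : {x // x ∈ Finset.range j} => if c' i.1 j k = m then glen c' i.1 j m + 1 else 0)
    (Finset.mem_attach _ ⟨i, Finset.mem_range.mpr hij⟩)
  simpa [hc] using h

lemma glen_descent (j k : ℕ) (m : Fin q) (L : ℕ) (h : L + 1 ≤ glen c' j k m) :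
    ∃ i, i < j ∧ c' i j k = m ∧ L + 1 ≤ glen c' i j m + 1 := by
  rw [glen_eq] at h
  have hj : j ≠ 0 := by
    rintro rfl
    simp at h
  have hne : (Finset.range j).attach.Nonempty := by
    rw [Finset.attach_nonempty_iff, Finset.nonempty_range_iff]
    exact hj
  obtain ⟨i, _, hsup⟩ := Finset.exists_mem_eq_sup _ hne
    (fun i : {x // x ∈ Finset.range j} => if c' i.1 j k = m then glen c' i.1 j m + 1 else 0)
  rw [hsup] at h
  by_cases hc : c' i.1 j k = m
  · rw [if_pos hc] at h
    exact ⟨i.1, Finset.mem_range.mp i.2, hc, h⟩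
  · rw [if_neg hc] at h
    omega

/-- build a path realizing `glen` -/
lemma glen_path (L : ℕ) : ∀ j k : ℕ, ∀ m : Fin q, j < k → L ≤ glen c' j k m →
    ∃ x : ℕ → ℕ, (∀ a, a < L + 1 → x a < x (a+1)) ∧ x L = j ∧ x (L+1) = k ∧
      (∀ a, a < L → c' (x a) (x (a+1)) (x (a+2)) = m) := by
  induction L with
  | zero =>
    intro j k m hjk _
    exact ⟨fun a => if a = 0 then j else k, by
      intro a ha
      have : a = 0 := by omega
      subst this
      simpa using hjk, by simp, by simp, by omega⟩
  | succ L ih =>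
    intro j k m hjk hg
    obtain ⟨i, hij, hc, hgi⟩ := glen_descent c' j k m L (by omega)
    obtain ⟨y, hy1, hy2, hy3, hy4⟩ := ih i j m hij (by omega)
    refine ⟨fun a => if a = L + 2 then k else y a, ?_, ?_, ?_, ?_⟩
    · intro a ha
      dsimp only
      by_cases h3 : a + 1 = L + 2
      · have h4 : a = L + 1 := by omega
        subst h4
        rw [if_pos (by omega : L + 1 + 1 = L + 2), if_neg (by omega : L + 1 ≠ L + 2)]
        rw [hy3]
        exact hjk
      · rw [if_neg (by omega : a ≠ L + 2), if_neg h3]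
        exact hy1 a (by omega)
    · dsimp only
      rw [if_neg (by omega : L + 1 ≠ L + 2)]
      exact hy3
    · dsimp only
      rw [if_pos rfl]
    · intro a ha
      dsimp only
      by_cases h3 : a = L
      · rw [if_neg (by omega : a ≠ L + 2), if_neg (by omega : a + 1 ≠ L + 2),
          if_pos (by omega : a + 2 = L + 2), h3, hy2, hy3]
        exact hc
      · rw [if_neg (by omega : a ≠ L + 2), if_neg (by omega : a + 1 ≠ L + 2),
          if_neg (by omega : a + 2 ≠ L + 2)]
        exact hy4 a (by omega)

end E

section E2
variable (q n : ℕ)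

lemma down_fin_iff (s : Finset (Fin n)) (hdown : ∀ b ∈ s, ∀ b' : Fin n, b' ≤ b → b' ∈ s)
    (b : Fin n) : b ∈ s ↔ (b : ℕ) < s.card := by
  constructor
  · intro hb
    have hsub : Finset.Iic b ⊆ s := fun b' hb' => hdown b hb b' (Finset.mem_Iic.mp hb')
    have := Finset.card_le_card hsub
    rw [Fin.card_Iic] at this
    omega
  · intro hb
    by_contra hnb
    have hsub : s ⊆ Finset.Iio b := by
      intro x hx
      rw [Finset.mem_Iio]
      rcases lt_or_ge x b with h | h
      · exact h
      · exact absurd (hdown x hx b h) hnb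
    have := Finset.card_le_card hsub
    rw [Fin.card_Iio] at this
    omega

def IsDown (S : Finset (Fin q → Fin n)) : Prop :=
  ∀ v ∈ S, ∀ v' : Fin q → Fin n, (∀ m, v' m ≤ v m) → v' ∈ S

instance : DecidablePred (IsDown q n) := fun _ => by unfold IsDown; infer_instance

def extz (hq : 2 ≤ q) (z : Fin (q-2) → Fin n) (a b : Fin n) : Fin q → Fin n :=
  fun j => if _h0 : j.val = 0 then a else if _h1 : j.val = 1 then b
    else z ⟨j.val - 2, by have := j.isLt; omega⟩

def restz (hq : 2 ≤ q) (y : Fin q → Fin n) : Fin (q-2) → Fin n :=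
  fun i => y ⟨i.val + 2, by have := i.isLt; omega⟩

lemma extz_restz (hq : 2 ≤ q) (y : Fin q → Fin n) :
    extz q n hq (restz q n hq y) (y ⟨0, by omega⟩) (y ⟨1, by omega⟩) = y := by
  funext j
  rw [extz]
  by_cases h0 : j.val = 0
  · rw [dif_pos h0]
    congr 1
    exact Fin.ext (by simp; omega)
  · rw [dif_neg h0]
    by_cases h1 : j.val = 1
    · rw [dif_pos h1]
      congr 1
      exact Fin.ext (by simp; omega)
    · rw [dif_neg h1, restz]
      congr 1
      exact Fin.ext (by simp; omega)

lemma extz_mono (hq : 2 ≤ q) (z : Fin (q-2) → Fin n) (a b a' b' : Fin n)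
    (ha : a ≤ a') (hb : b ≤ b') (m : Fin q) :
    extz q n hq z a b m ≤ extz q n hq z a' b' m := by
  rw [extz, extz]
  by_cases h0 : m.val = 0
  · rw [dif_pos h0, dif_pos h0]; exact ha
  · rw [dif_neg h0, dif_neg h0]
    by_cases h1 : m.val = 1
    · rw [dif_pos h1, dif_pos h1]; exact hb
    · rw [dif_neg h1, dif_neg h1]

noncomputable def hgt (hq : 2 ≤ q) (S : Finset (Fin q → Fin n)) (z : Fin (q-2) → Fin n)
    (a : Fin n) : ℕ := (univ.filter (fun b : Fin n => extz q n hq z a b ∈ S)).card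

lemma hgt_le (hq : 2 ≤ q) (S : Finset (Fin q → Fin n)) (z : Fin (q-2) → Fin n) (a : Fin n) :
    hgt q n hq S z a ≤ n := by
  rw [hgt]
  calc (univ.filter (fun b : Fin n => extz q n hq z a b ∈ S)).card
      ≤ (univ : Finset (Fin n)).card := Finset.card_filter_le _ _
    _ = n := by simp

lemma hgt_anti (hq : 2 ≤ q) (S : Finset (Fin q → Fin n)) (hS : IsDown q n S)
    (z : Fin (q-2) → Fin n) (a a' : Fin n) (ha : a ≤ a') :
    hgt q n hq S z a' ≤ hgt q n hq S z a := by
  rw [hgt, hgt]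
  apply Finset.card_le_card
  intro b hb
  rw [Finset.mem_filter] at hb ⊢
  exact ⟨Finset.mem_univ b, hS _ hb.2 _ (fun m => extz_mono q n hq z a b a' b ha (le_refl b) m)⟩

lemma mem_iff_hgt (hq : 2 ≤ q) (S : Finset (Fin q → Fin n)) (hS : IsDown q n S)
    (z : Fin (q-2) → Fin n) (a b : Fin n) :
    extz q n hq z a b ∈ S ↔ (b : ℕ) < hgt q n hq S z a := by
  rw [hgt]
  rw [← down_fin_iff n (univ.filter (fun b : Fin n => extz q n hq z a b ∈ S))
    (fun b1 hb1 b2 hb2 => ?_) b]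
  · simp
  · rw [Finset.mem_filter] at hb1 ⊢
    exact ⟨Finset.mem_univ _, hS _ hb1.2 _
      (fun m => extz_mono q n hq z a b2 a b1 (le_refl a) hb2 m)⟩

noncomputable def rev (i : Fin n) : Fin n := ⟨n - 1 - i.val, by have := i.isLt; omega⟩

lemma rev_rev (i : Fin n) : rev n (rev n i) = i := by
  rw [rev, rev]
  exact Fin.ext (by simp; have := i.isLt; omega)

noncomputable def encf (hq : 2 ≤ q) (hn : 1 ≤ n) (S : Finset (Fin q → Fin n))
    (z : Fin (q-2) → Fin n) (a : Fin n) : Fin (2*n) :=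
  ⟨hgt q n hq S z a + (n - 1 - a.val), by
    have h1 := hgt_le q n hq S z a
    have h2 := a.isLt
    omega⟩

noncomputable def enc (hq : 2 ≤ q) (hn : 1 ≤ n) (S : Finset (Fin q → Fin n))
    (z : Fin (q-2) → Fin n) : Finset (Fin (2*n)) :=
  Finset.image (encf q n hq hn S z) univ

lemma enc_nonempty (hq : 2 ≤ q) (hn : 1 ≤ n) (S : Finset (Fin q → Fin n))
    (z : Fin (q-2) → Fin n) : (enc q n hq hn S z).Nonempty := by
  rw [enc]
  apply Finset.Nonempty.image
  exact ⟨⟨0, hn⟩, Finset.mem_univ _⟩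

noncomputable def fasc (hq : 2 ≤ q) (hn : 1 ≤ n) (S : Finset (Fin q → Fin n))
    (z : Fin (q-2) → Fin n) (i : Fin n) : Fin (2*n) := encf q n hq hn S z (rev n i)

lemma fasc_strictMono (hq : 2 ≤ q) (hn : 1 ≤ n) (S : Finset (Fin q → Fin n))
    (hS : IsDown q n S) (z : Fin (q-2) → Fin n) : StrictMono (fasc q n hq hn S z) := by
  intro i i' hii
  rw [fasc, fasc, encf, encf]
  rw [Fin.lt_def]
  simp only
  have h1 : rev n i' ≤ rev n i := by
    rw [rev, rev, Fin.le_def]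
    simp only
    have := i'.isLt
    omega
  have h2 := hgt_anti q n hq S hS z (rev n i') (rev n i) h1
  have h3 : (rev n i).val = n - 1 - i.val := rfl
  have h4 : (rev n i').val = n - 1 - i'.val := rfl
  rw [h3, h4]
  have hi := i.isLt
  have hi' := i'.isLt
  have : i.val < i'.val := hii
  omega

lemma fasc_image (hq : 2 ≤ q) (hn : 1 ≤ n) (S : Finset (Fin q → Fin n))
    (z : Fin (q-2) → Fin n) :
    Finset.image (fasc q n hq hn S z) univ = enc q n hq hn S z := by
  rw [enc]
  apply Finset.Subset.antisymm
  · intro v hv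
    rw [Finset.mem_image] at hv ⊢
    obtain ⟨i, _, hi⟩ := hv
    exact ⟨rev n i, Finset.mem_univ _, hi⟩
  · intro v hv
    rw [Finset.mem_image] at hv ⊢
    obtain ⟨a, _, ha⟩ := hv
    refine ⟨rev n a, Finset.mem_univ _, ?_⟩
    rw [fasc, rev_rev]
    exact ha

lemma enc_card (hq : 2 ≤ q) (hn : 1 ≤ n) (S : Finset (Fin q → Fin n)) (hS : IsDown q n S)
    (z : Fin (q-2) → Fin n) : (enc q n hq hn S z).card = n := by
  rw [← fasc_image q n hq hn S z,
    Finset.card_image_of_injective _ (fasc_strictMono q n hq hn S hS z).injective]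
  simp

lemma hgt_of_enc_eq (hq : 2 ≤ q) (hn : 1 ≤ n) (S₁ S₂ : Finset (Fin q → Fin n))
    (h1 : IsDown q n S₁) (h2 : IsDown q n S₂) (z : Fin (q-2) → Fin n)
    (henc : enc q n hq hn S₁ z = enc q n hq hn S₂ z) (a : Fin n) :
    hgt q n hq S₁ z a = hgt q n hq S₂ z a := by
  have hmem1 : ∀ i : Fin n, fasc q n hq hn S₁ z i ∈ enc q n hq hn S₁ z := by
    intro i
    rw [← fasc_image q n hq hn S₁ z]
    exact Finset.mem_image_of_mem _ (Finset.mem_univ i)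
  have hmem2 : ∀ i : Fin n, fasc q n hq hn S₂ z i ∈ enc q n hq hn S₁ z := by
    intro i
    rw [henc, ← fasc_image q n hq hn S₂ z]
    exact Finset.mem_image_of_mem _ (Finset.mem_univ i)
  have hcard : (enc q n hq hn S₁ z).card = n := enc_card q n hq hn S₁ h1 z
  have e1 := Finset.orderEmbOfFin_unique hcard hmem1 (fasc_strictMono q n hq hn S₁ h1 z)
  have e2 := Finset.orderEmbOfFin_unique hcard hmem2 (fasc_strictMono q n hq hn S₂ h2 z)
  have e3 : fasc q n hq hn S₁ z = fasc q n hq hn S₂ z := by rw [e1, e2]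
  have e4 := congrFun e3 (rev n a)
  rw [fasc, fasc, rev_rev] at e4
  have e5 : (encf q n hq hn S₁ z a).val = (encf q n hq hn S₂ z a).val := by rw [e4]
  rw [encf, encf] at e5
  simp only at e5
  omega

lemma eq_of_enc_eq (hq : 2 ≤ q) (hn : 1 ≤ n) (S₁ S₂ : Finset (Fin q → Fin n))
    (h1 : IsDown q n S₁) (h2 : IsDown q n S₂)
    (henc : ∀ z, enc q n hq hn S₁ z = enc q n hq hn S₂ z) : S₁ = S₂ := by
  ext y
  have hy0 : (0:ℕ) < q := by omega
  have hy1 : (1:ℕ) < q := by omega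
  have e := extz_restz q n hq y
  constructor
  · intro hy
    rw [← e] at hy ⊢
    rw [mem_iff_hgt q n hq S₁ h1] at hy
    rw [mem_iff_hgt q n hq S₂ h2,
      ← hgt_of_enc_eq q n hq hn S₁ S₂ h1 h2 _ (henc _)]
    exact hy
  · intro hy
    rw [← e] at hy ⊢
    rw [mem_iff_hgt q n hq S₂ h2] at hy
    rw [mem_iff_hgt q n hq S₁ h1,
      hgt_of_enc_eq q n hq hn S₁ S₂ h1 h2 _ (henc _)]
    exact hy

lemma card_nonempty_finset (m : ℕ) :
    Fintype.card {F : Finset (Fin m) // F.Nonempty} = 2^m - 1 := by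
  have e1 : Fintype.card {F : Finset (Fin m) // F.Nonempty}
      = Fintype.card {F : Finset (Fin m) // ¬ F = ∅} :=
    Fintype.card_congr (Equiv.subtypeEquivRight (fun F =>
      Finset.nonempty_iff_ne_empty))
  rw [e1, Fintype.card_subtype_compl, Fintype.card_subtype_eq]
  rw [Fintype.card_finset, Fintype.card_fin]

/-- counting the family of downsets -/
lemma dfam_card (hq : 2 ≤ q) (hn : 1 ≤ n) :
    (univ.filter (IsDown q n)).card ≤ 2^(2*n^(q-1)) - 1 := by
  classical
  have hinj : ∀ S₁ ∈ univ.filter (IsDown q n), ∀ S₂ ∈ univ.filter (IsDown q n),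
      (fun z => (⟨enc q n hq hn S₁ z, enc_nonempty q n hq hn S₁ z⟩ :
        {F : Finset (Fin (2*n)) // F.Nonempty}))
      = (fun z => ⟨enc q n hq hn S₂ z, enc_nonempty q n hq hn S₂ z⟩) → S₁ = S₂ := by
    intro S₁ hS₁ S₂ hS₂ h
    rw [Finset.mem_filter] at hS₁ hS₂
    apply eq_of_enc_eq q n hq hn S₁ S₂ hS₁.2 hS₂.2
    intro z
    have := congrFun h z
    exact congrArg Subtype.val this
  have hle := Finset.card_le_card_of_injOn
    (fun S => (fun z => (⟨enc q n hq hn S z, enc_nonempty q n hq hn S z⟩ :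
        {F : Finset (Fin (2*n)) // F.Nonempty})))
    (fun S _ => Finset.mem_univ _)
    (fun S₁ hS₁ S₂ hS₂ h => hinj S₁ hS₁ S₂ hS₂ h)
  calc (univ.filter (IsDown q n)).card
      ≤ (univ : Finset ((Fin (q-2) → Fin n) → {F : Finset (Fin (2*n)) // F.Nonempty})).card :=
        hle
    _ = (2^(2*n) - 1)^(n^(q-2)) := by
        rw [Finset.card_univ, Fintype.card_fun, card_nonempty_finset, Fintype.card_fun,
          Fintype.card_fin, Fintype.card_fin]
    _ ≤ 2^(2*n^(q-1)) - 1 := by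
        have hk : n^(q-2) ≠ 0 := by positivity
        have hlt : (2^(2*n) - 1)^(n^(q-2)) < (2^(2*n))^(n^(q-2)) :=
          Nat.pow_lt_pow_left (by have : 0 < 2^(2*n) := Nat.pow_pos (by omega); omega) hk
        have he : (2^(2*n))^(n^(q-2)) = 2^(2*n^(q-1)) := by
          rw [← pow_mul]
          congr 1
          have hq1 : q - 1 = (q-2) + 1 := by omega
          rw [hq1, pow_succ]
          ring
        omega

end E2

section E3
variable (q n : ℕ)

lemma e_main_gen (hq : 2 ≤ q) (hn : 2 ≤ n) (N : ℕ)
    (hNbig : (univ.filter (IsDown q n)).card < N)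
    (c : Fin N → Fin N → Fin N → Fin q) :
    HasMonoPath3 n c := by
  by_contra hnp
  set c' : ℕ → ℕ → ℕ → Fin q := fun i j k =>
    if h : i < N ∧ j < N ∧ k < N then c ⟨i, h.1⟩ ⟨j, h.2.1⟩ ⟨k, h.2.2⟩ else ⟨0, by omega⟩
    with hc'
  -- no long paths
  have hbound : ∀ j k : ℕ, j < k → k < N → ∀ m : Fin q, glen c' j k m < n := by
    intro j k hjk hkN m
    by_contra hge
    push_neg at hge
    obtain ⟨x, hx1, hx2, hx3, hx4⟩ := glen_path c' n j k m hjk hge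
    -- monotonicity of x
    have hmono : ∀ b, b ≤ n + 1 → ∀ a, a ≤ b → x a ≤ x b := by
      intro b
      induction b with
      | zero =>
        intro _ a ha
        have h0 : a = 0 := by omega
        rw [h0]
      | succ p ih =>
        intro hp a ha
        rcases Nat.eq_or_lt_of_le ha with h | h
        · rw [h]
        · have h1 := ih (by omega) a (by omega)
          have h2 := hx1 p (by omega)
          omega
    have hstrict : ∀ a b, a < b → b ≤ n + 1 → x a < x b := by
      intro a b hab hb
      have h1 : x a ≤ x (b-1) := hmono (b-1) (by omega) a (by omega)
      have h2 := hx1 (b-1) (by omega)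
      have h3 : b - 1 + 1 = b := by omega
      rw [h3] at h2
      omega
    have hxN : ∀ a, a ≤ n + 1 → x a < N := by
      intro a ha
      have := hmono (n+1) (le_refl _) a ha
      rw [hx3] at this
      omega
    set xf : Fin (n+2) → Fin N := fun a => ⟨x a.val, hxN a.val (by have := a.isLt; omega)⟩
      with hxf
    apply hnp
    refine ⟨xf, ?_, m, ?_⟩
    · intro a b hab
      have : x a.val < x b.val := hstrict a.val b.val hab (by have := b.isLt; omega)
      exact this
    · intro i hi
      have hcol := hx4 i hi
      rw [hc'] at hcol
      simp only at hcol
      rw [dif_pos (⟨hxN i (by omega), hxN (i+1) (by omega), hxN (i+2) (by omega)⟩ :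
        x i < N ∧ x (i+1) < N ∧ x (i+2) < N)] at hcol
      exact hcol
  -- the down-sets
  set DD : Fin N → Finset (Fin q → Fin n) := fun j =>
    @Finset.filter _
      (fun v => ∀ k ∈ Finset.Ico (j.val+1) N, ∃ m, (v m : ℕ) < glen c' j.val k m)
      (Classical.decPred _) univ
    with hDD
  have hDDdown : ∀ j, IsDown q n (DD j) := by
    intro j v hv v' hv'
    simp only [hDD, Finset.mem_filter] at hv ⊢
    refine ⟨Finset.mem_univ _, fun k hk => ?_⟩
    obtain ⟨m, hm⟩ := hv.2 k hk
    refine ⟨m, ?_⟩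
    have h1 : (v' m : ℕ) ≤ (v m : ℕ) := hv' m
    omega
  have hDDne : ∀ j1 j2 : Fin N, j1 < j2 → DD j1 ≠ DD j2 := by
    intro j1 j2 hlt
    have hj12 : (j1:ℕ) < (j2:ℕ) := hlt
    have hj2N : (j2:ℕ) < N := j2.isLt
    set vstar : Fin q → Fin n := fun m => ⟨glen c' j1.val j2.val m,
      hbound j1.val j2.val hj12 hj2N m⟩ with hvstar
    have hin : vstar ∈ DD j2 := by
      simp only [hDD, Finset.mem_filter]
      refine ⟨Finset.mem_univ _, fun k hk => ?_⟩
      rw [Finset.mem_Ico] at hk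
      refine ⟨c' j1.val j2.val k, ?_⟩
      have hstep := glen_step c' j1.val j2.val k _ hj12 rfl
      have he : (vstar (c' j1.val j2.val k) : ℕ) = glen c' j1.val j2.val (c' j1.val j2.val k) :=
        rfl
      omega
    have hout : vstar ∉ DD j1 := by
      simp only [hDD, Finset.mem_filter]
      rintro ⟨-, h⟩
      obtain ⟨m, hm⟩ := h j2.val (Finset.mem_Ico.mpr ⟨by omega, hj2N⟩)
      have he : (vstar m : ℕ) = glen c' j1.val j2.val m := rfl
      omega
    intro heq
    exact hout (heq ▸ hin)
  have hDDinj : Set.InjOn DD (univ : Finset (Fin N)) := by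
    intro a _ b _ hab
    by_contra hne
    rcases lt_or_gt_of_ne hne with h | h
    · exact hDDne a b h hab
    · exact hDDne b a h hab.symm
  have hNle : N ≤ (univ.filter (IsDown q n)).card := by
    have h := Finset.card_le_card_of_injOn (t := univ.filter (IsDown q n)) DD
      (fun j _ => by
        rw [Finset.mem_coe, Finset.mem_filter]
        exact ⟨Finset.mem_univ _, hDDdown j⟩)
      hDDinj
    rw [Finset.card_univ, Fintype.card_fin] at h
    exact h
  omega

/-- Main upper bound: every coloring of `[2^(2 n^(q-1))]` has a monotone path of length n. -/
lemma e_main (hq : 2 ≤ q) (hn : 2 ≤ n)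
    (c : Fin (2^(2*n^(q-1))) → Fin (2^(2*n^(q-1))) → Fin (2^(2*n^(q-1))) → Fin q) :
    HasMonoPath3 n c := by
  apply e_main_gen q n hq hn _ _ c
  have h1 := dfam_card q n hq (by omega)
  have h2 : (1:ℕ) ≤ 2^(2*n^(q-1)) := Nat.one_le_two_pow
  omega

end E3

end P13

/-- For every `q ≥ 2` and `n ≥ 2`, `2^{(2/3)·n^{q-1}/√q} ≤ N_3(q,n) ≤ 2^{2n^{q-1}}`. -/
theorem stmt13 (q n : ℕ) (hq : 2 ≤ q) (hn : 2 ≤ n) :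
    (2 : ℝ) ^ ((2 / 3 : ℝ) * (n : ℝ) ^ (q - 1) / Real.sqrt q) ≤ (N3 q n : ℝ) ∧
    N3 q n ≤ 2 ^ (2 * n ^ (q - 1)) := by
  set S := {N : ℕ | ∀ c : Fin N → Fin N → Fin N → Fin q, HasMonoPath3 n c} with hS
  have hup_mem : (2^(2*n^(q-1))) ∈ S := fun c => P13.e_main q n hq hn c
  have hupper : N3 q n ≤ 2 ^ (2 * n ^ (q - 1)) := Nat.sInf_le hup_mem
  have hne : S.Nonempty := ⟨_, hup_mem⟩
  have hmem : N3 q n ∈ S := Nat.sInf_mem hne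
  -- lower bound, combinatorial part
  obtain ⟨t0, ht0⟩ := P13.Shell.exists_layer q n
  set AC : Finset (Fin q → Fin n) :=
    univ.filter (fun x : Fin q → Fin n => P13.sV q n x = t0) with hACdef
  have hACcard : AC.card = P13.Mx q n := by
    rw [hACdef, ← ht0]
    rfl
  have hACanti : ∀ x ∈ AC, ∀ y ∈ AC, (∀ i, x i ≤ y i) → x = y := by
    intro x hx y hy hle
    rw [hACdef, Finset.mem_filter] at hx hy
    exact P13.antichain_layer q n x y (by rw [hx.2, hy.2]) hle
  have hlow : 2 ^ (P13.Mx q n) < N3 q n := by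
    by_contra hcon
    push_neg at hcon
    obtain ⟨c, hc⟩ := P13.d_construct q n (by omega) (by omega) AC hACanti (N3 q n)
      (by rw [hACcard]; exact hcon)
    exact hc (hmem c)
  refine ⟨?_, hupper⟩
  -- real-number part
  have hMx := P13.Shell.b_main q n hq hn
  set M := P13.Mx q n with hM
  have hKEYn : 4 * n^(2*q-2) * n^2 ≤ (9*q*M^2) * n^2 := by
    have e1 : 4 * (n^q)^2 = 4 * n^(2*q-2) * n^2 := by
      rw [← pow_mul, show q*2 = (2*q-2)+2 by omega, pow_add]
      ring
    have e2 : 9*q*M^2*n^2 = (9*q*M^2) * n^2 := by ring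
    rw [e1, e2] at hMx
    exact hMx
  have hKEY : 4 * n^(2*q-2) ≤ 9*q*M^2 :=
    Nat.le_of_mul_le_mul_right hKEYn (by positivity)
  have hreal : (4:ℝ) * (n:ℝ)^(2*q-2) ≤ 9*(q:ℝ)*(M:ℝ)^2 := by exact_mod_cast hKEY
  have hsqpos : 0 < Real.sqrt q := Real.sqrt_pos.mpr (by positivity)
  have hsq1 : ((2/3:ℝ) * (n:ℝ)^(q-1))^2 ≤ ((M:ℝ) * Real.sqrt q)^2 := by
    have e1 : ((2/3:ℝ) * (n:ℝ)^(q-1))^2 = (4/9) * (n:ℝ)^(2*q-2) := by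
      rw [mul_pow, ← pow_mul]
      congr 2
      · norm_num
      · omega
    have e2 : ((M:ℝ) * Real.sqrt q)^2 = (M:ℝ)^2 * q := by
      rw [mul_pow, Real.sq_sqrt (by positivity : (0:ℝ) ≤ q)]
    rw [e1, e2]
    linarith
  have h2 : (2/3:ℝ) * (n:ℝ)^(q-1) ≤ (M:ℝ) * Real.sqrt q := by
    have ha : (0:ℝ) ≤ (2/3:ℝ) * (n:ℝ)^(q-1) := by positivity
    have hb : (0:ℝ) ≤ (M:ℝ) * Real.sqrt q := by positivity
    calc (2/3:ℝ) * (n:ℝ)^(q-1) = Real.sqrt (((2/3:ℝ) * (n:ℝ)^(q-1))^2) :=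
          (Real.sqrt_sq ha).symm
      _ ≤ Real.sqrt (((M:ℝ) * Real.sqrt q)^2) := Real.sqrt_le_sqrt hsq1
      _ = (M:ℝ) * Real.sqrt q := Real.sqrt_sq hb
  have h3 : (2/3:ℝ) * (n:ℝ)^(q-1) / Real.sqrt q ≤ (M:ℝ) := by
    rw [div_le_iff₀ hsqpos]
    exact h2
  have h4 : (2:ℝ) ^ ((2/3:ℝ) * (n:ℝ)^(q-1) / Real.sqrt q) ≤ (2:ℝ) ^ ((M:ℕ):ℝ) :=
    (Real.rpow_le_rpow_left_iff one_lt_two).mpr h3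
  have h5 : (2:ℝ) ^ ((M:ℕ):ℝ) = ((2^M : ℕ) : ℝ) := by
    rw [Real.rpow_natCast]
    push_cast
    ring
  have h6 : ((2^M : ℕ) : ℝ) ≤ (N3 q n : ℝ) := by
    exact_mod_cast le_of_lt hlow
  calc (2:ℝ) ^ ((2/3:ℝ) * (n:ℝ)^(q-1) / Real.sqrt q) ≤ (2:ℝ) ^ ((M:ℕ):ℝ) := h4
    _ = ((2^M : ℕ) : ℝ) := h5
    _ ≤ (N3 q n : ℝ) := h6
end

section
/- For every q ≥ 2 and n ≥ 2, every q-coloring of the edges (pairs) of the complete graph on vertex set {1,...,n^q + 1} contains a monochromatic monotone path with n edges; i.e., N_2(q,n) ≤ n^q + 1. Moreover this is tight: there is a q-coloring of the pairs of {1,...,n^q} with no monochromatic monotone path of n edges. -/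
/-- Monochromatic monotone path with `n` edges in a coloring of the pairs of
`{0,…,N-1}`: vertices `x_0 < x_1 < ⋯ < x_n` with all edges `{x_i, x_{i+1}}` of the
same color. -/
def HasMonoPath2 {N q : ℕ} (n : ℕ) (c : Fin N → Fin N → Fin q) : Prop :=
  ∃ x : Fin (n + 1) → Fin N, StrictMono x ∧ ∃ col : Fin q,
    ∀ i : ℕ, ∀ _ : i < n, c (x ⟨i, by omega⟩) (x ⟨i + 1, by omega⟩) = col

/-- Length of the longest monotone path of color `j` ending at `v`. -/
def pathLen {N q : ℕ} (c : Fin N → Fin N → Fin q) (j : Fin q) (v : Fin N) : ℕ :=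
  (Finset.univ.filter fun u : Fin N => u < v ∧ c u v = j).attach.sup
    fun u => pathLen c j u.1 + 1
termination_by v.val
decreasing_by
  exact (Finset.mem_filter.mp u.2).2.1

lemma pathLen_lt {N q : ℕ} (c : Fin N → Fin N → Fin q) (j : Fin q) {u v : Fin N}
    (huv : u < v) (hc : c u v = j) : pathLen c j u < pathLen c j v := by
  conv_rhs => rw [pathLen]
  have hm : u ∈ Finset.univ.filter fun u : Fin N => u < v ∧ c u v = j := by
    simp [huv, hc]
  have := Finset.le_sup (f := fun u' : {x // x ∈ Finset.univ.filter
      fun u : Fin N => u < v ∧ c u v = j} => pathLen c j u'.1 + 1)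
    (Finset.mem_attach _ ⟨u, hm⟩)
  dsimp only at this
  omega

lemma pathLen_path {N q : ℕ} (c : Fin N → Fin N → Fin q) (j : Fin q) :
    ∀ m : ℕ, ∀ v : Fin N, m ≤ pathLen c j v →
      ∃ x : Fin (m + 1) → Fin N, StrictMono x ∧ x (Fin.last m) = v ∧
        ∀ i : ℕ, ∀ h1 : i < m + 1, ∀ h2 : i + 1 < m + 1,
          c (x ⟨i, h1⟩) (x ⟨i + 1, h2⟩) = j := by
  intro m
  induction m with
  | zero =>
    intro v _
    refine ⟨fun _ => v, ?_, rfl, ?_⟩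
    · intro a b hab
      have : a.val < b.val := hab
      omega
    · intro i h1 h2; omega
  | succ m ih =>
    intro v hv
    -- the sup is positive, so attained at some u
    have hS : ((Finset.univ.filter fun u : Fin N => u < v ∧ c u v = j).attach).Nonempty := by
      by_contra h
      rw [Finset.not_nonempty_iff_eq_empty] at h
      rw [pathLen, h, Finset.sup_empty] at hv
      simp at hv
    obtain ⟨u', hu'mem, hu'⟩ := Finset.exists_mem_eq_sup _ hS
      (fun u : {x // x ∈ Finset.univ.filter fun u : Fin N => u < v ∧ c u v = j} =>
        pathLen c j u.1 + 1)
    rw [pathLen] at hv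
    rw [hu'] at hv
    obtain ⟨hult, hucol⟩ := (Finset.mem_filter.mp u'.2).2
    have hmu : m ≤ pathLen c j u'.1 := by omega
    obtain ⟨y, hy, hylast, hyedge⟩ := ih u'.1 hmu
    refine ⟨fun i => if h : i.val < m + 1 then y ⟨i.val, h⟩ else v, ?_, ?_, ?_⟩
    · intro a b hab
      have hab' : a.val < b.val := hab
      have hb2 : b.val < m + 2 := b.isLt
      by_cases hb : b.val < m + 1
      · have ha : a.val < m + 1 := by omega
        simp only [dif_pos ha, dif_pos hb]
        exact hy (show (⟨a.val, ha⟩ : Fin (m+1)) < ⟨b.val, hb⟩ from hab')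
      · have ha : a.val < m + 1 := by omega
        simp only [dif_pos ha, dif_neg hb]
        have h1 : y ⟨a.val, ha⟩ ≤ y (Fin.last m) :=
          hy.monotone (show (⟨a.val, ha⟩ : Fin (m+1)) ≤ Fin.last m from by
            simp [Fin.le_def, Fin.last]; omega)
        rw [hylast] at h1
        exact lt_of_le_of_lt h1 hult
    · simp [Fin.last]
    · intro i h1 h2
      by_cases hi : i + 1 < m + 1
      · have hi' : i < m + 1 := by omega
        simp only [dif_pos hi', dif_pos hi]
        exact hyedge i hi' hi
      · have hieq : i = m := by omega
        subst hieq
        have hi' : i < i + 1 := by omega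
        simp only [dif_pos (show i < i + 1 by omega), dif_neg (show ¬ (i + 1 < i + 1) by omega)]
        have : y ⟨i, by omega⟩ = u'.1 := by
          have : (⟨i, by omega⟩ : Fin (i + 1)) = Fin.last i := by
            simp [Fin.last]
          rw [this, hylast]
        rw [this, hucol]

/-- The coloring for the lower bound: color of the pair `{u,v}` (`u < v`) is the
most significant base-`n` digit in which they differ. -/
def lbColor (q n : ℕ) (hq : 2 ≤ q) (u v : Fin (n ^ q)) : Fin q :=
  ⟨Nat.findGreatest (fun i => u.val / n ^ i < v.val / n ^ i) (q - 1), by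
    have := Nat.findGreatest_le (P := fun i => u.val / n ^ i < v.val / n ^ i) (q - 1)
    omega⟩

lemma lbColor_digit {q n : ℕ} (hq : 2 ≤ q) (hn : 2 ≤ n) {u v : Fin (n ^ q)} (huv : u < v) :
    u.val / n ^ (lbColor q n hq u v).val % n < v.val / n ^ (lbColor q n hq u v).val % n := by
  set P : ℕ → Prop := fun i => u.val / n ^ i < v.val / n ^ i with hP
  have hP0 : P 0 := by simpa [hP] using huv
  set k := Nat.findGreatest P (q - 1) with hk
  have hkq : k ≤ q - 1 := Nat.findGreatest_le _
  have hPk : P k := Nat.findGreatest_spec (Nat.zero_le _) hP0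
  have hPk1 : ¬ P (k + 1) := by
    by_cases h : k + 1 ≤ q - 1
    · exact Nat.findGreatest_is_greatest (by omega) h
    · have hkq1 : k + 1 = q := by omega
      intro hcontra
      have h1 : u.val / n ^ (k + 1) = 0 := Nat.div_eq_of_lt (by rw [hkq1]; exact u.isLt)
      have h2 : v.val / n ^ (k + 1) = 0 := Nat.div_eq_of_lt (by rw [hkq1]; exact v.isLt)
      simp only [hP] at hcontra
      omega
  -- quotients at level k+1 are equal
  have hle : u.val / n ^ (k + 1) ≤ v.val / n ^ (k + 1) :=
    Nat.div_le_div_right (le_of_lt huv)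
  have heq : u.val / n ^ (k + 1) = v.val / n ^ (k + 1) := by
    simp only [hP, not_lt] at hPk1
    omega
  -- deduce digit inequality
  have hdd : ∀ w : ℕ, w / n ^ (k + 1) = (w / n ^ k) / n := by
    intro w
    rw [pow_succ, Nat.div_div_eq_div_mul]
  rw [hdd, hdd] at heq
  have hcol : (lbColor q n hq u v).val = k := rfl
  rw [hcol]
  set a := u.val / n ^ k with ha
  set b := v.val / n ^ k with hb
  have hab : a < b := hPk
  have h1 : n * (a / n) + a % n = a := Nat.div_add_mod a n
  have h2 : n * (b / n) + b % n = b := Nat.div_add_mod b n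
  have h3 : n * (a / n) = n * (b / n) := by rw [heq]
  omega

/-- For `q ≥ 2`, `n ≥ 2`: every `q`-coloring of the pairs of `{1,…,n^q+1}` contains a
monochromatic monotone path with `n` edges (so `N_2(q,n) ≤ n^q + 1`), and this is
tight: some `q`-coloring of the pairs of `{1,…,n^q}` has no such path. -/
theorem stmt14 (q n : ℕ) (hq : 2 ≤ q) (hn : 2 ≤ n) :
    (∀ c : Fin (n ^ q + 1) → Fin (n ^ q + 1) → Fin q, HasMonoPath2 n c) ∧
    (∃ c : Fin (n ^ q) → Fin (n ^ q) → Fin q, ¬ HasMonoPath2 n c) := by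
  constructor
  · intro c
    by_contra hno
    -- all path lengths are < n
    have hlen : ∀ j : Fin q, ∀ v : Fin (n ^ q + 1), pathLen c j v < n := by
      intro j v
      by_contra h
      push_neg at h
      obtain ⟨x, hx, hxlast, hxedge⟩ := pathLen_path c j n v h
      exact hno ⟨x, hx, j, fun i hi => hxedge i (by omega) (by omega)⟩
    -- pigeonhole
    set F : Fin (n ^ q + 1) → (Fin q → Fin n) :=
      fun v j => ⟨pathLen c j v, hlen j v⟩ with hF
    have hcard : Fintype.card (Fin q → Fin n) < Fintype.card (Fin (n ^ q + 1)) := by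
      simp [Fintype.card_fun]
    obtain ⟨a, b, hab, hFab⟩ := Fintype.exists_ne_map_eq_of_card_lt F hcard
    rcases lt_or_gt_of_ne hab with h | h
    · have := pathLen_lt c (c a b) h rfl
      have heq : pathLen c (c a b) a = pathLen c (c a b) b := by
        have := congrFun hFab (c a b)
        simpa [hF, Fin.ext_iff] using this
      omega
    · have := pathLen_lt c (c b a) h rfl
      have heq : pathLen c (c b a) b = pathLen c (c b a) a := by
        have := congrFun hFab.symm (c b a)
        simpa [hF, Fin.ext_iff] using this
      omega
  · refine ⟨lbColor q n hq, ?_⟩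
    rintro ⟨x, hx, col, hcol⟩
    -- digit at position col is strictly increasing along the path
    have key : ∀ i : ℕ, ∀ hi : i ≤ n, i ≤ (x ⟨i, by omega⟩).val / n ^ col.val % n := by
      intro i
      induction i with
      | zero => intro _; omega
      | succ i ih =>
        intro hi
        have hstep := hcol i (by omega)
        have hlt : x ⟨i, by omega⟩ < x ⟨i + 1, by omega⟩ :=
          hx (show (⟨i, by omega⟩ : Fin (n + 1)) < ⟨i + 1, by omega⟩ from by
            simp [Fin.lt_def])
        have hdig := lbColor_digit hq hn hlt
        rw [hstep] at hdig
        have := ih (by omega)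
        omega
    have := key n (le_refl n)
    have hmod : (x ⟨n, by omega⟩).val / n ^ col.val % n < n := Nat.mod_lt _ (by omega)
    omega
end

section
/- For every k ≥ 4, q ≥ 2, and n ≥ 2, N_k(q,n) ≤ N_{k-2}(N_3(q,n) − 1, 2), where N_k(q,n) is the smallest N such that every q-coloring of the k-subsets of {1,...,N} contains a monochromatic monotone path of length n. -/
set_option maxRecDepth 8000


/-- Monochromatic monotone path of length `n` in a `q`-coloring of the `k`-subsets of
`{0,…,N-1}`: vertices `x_0 < ⋯ < x_{n+k-2}` such that all `n` consecutive `k`-tuples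
receive the same color. -/
def HasMonoPathK (k : ℕ) {N q : ℕ} (n : ℕ) (c : (Fin k → Fin N) → Fin q) : Prop :=
  ∃ x : Fin (n + k - 1) → Fin N, StrictMono x ∧ ∃ col : Fin q,
    ∀ i : ℕ, ∀ _ : i < n,
      c (fun j => x ⟨i + j.1, by have := j.2; omega⟩) = col


namespace Stmt15Aux

variable {m n N q : ℕ}

/-- A monochromatic (color `i`) monotone path with `L` edges in the `(m+3)`-uniform
hypergraph, whose last `m+2` vertices are `w`. -/
def PE (c : (Fin (m+3) → Fin N) → Fin q) (i : Fin q) (L : ℕ) (w : Fin (m+2) → Fin N) : Prop :=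
  ∃ x : Fin (L + (m+2)) → Fin N, StrictMono x ∧
    (∀ r : Fin (m+2), x ⟨L + r.1, by have := r.2; omega⟩ = w r) ∧
    (∀ j : ℕ, ∀ hj : j < L,
      c (fun s : Fin (m+3) => x ⟨j + s.1, by have := s.2; omega⟩) = i)

theorem PE_zero (c : (Fin (m+3) → Fin N) → Fin q) (i : Fin q)
    (w : Fin (m+2) → Fin N) (hw : StrictMono w) : PE c i 0 w := by
  refine ⟨fun r => w ⟨r.1, by have := r.2; omega⟩, ?_, ?_, ?_⟩
  · intro a b hab
    have hab' : a.1 < b.1 := hab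
    exact hw (show (⟨a.1, _⟩ : Fin (m+2)) < ⟨b.1, _⟩ from hab')
  · intro r
    exact congrArg w (Fin.ext (by simp))
  · intro j hj; omega

/-- append one vertex to a tuple -/
def app1 (w : Fin (m+2) → Fin N) (z : Fin N) : Fin (m+3) → Fin N :=
  fun s => if h : s.1 < m+2 then w ⟨s.1, h⟩ else z

/-- drop the first vertex and append `z` -/
def shf (w : Fin (m+2) → Fin N) (z : Fin N) : Fin (m+2) → Fin N :=
  fun r => if h : r.1 + 1 < m+2 then w ⟨r.1+1, h⟩ else z

theorem PE_extend {c : (Fin (m+3) → Fin N) → Fin q} {i : Fin q} {L : ℕ}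
    {w : Fin (m+2) → Fin N} (hPE : PE c i L w) {z : Fin N}
    (hz : w ⟨m+1, by omega⟩ < z) (hc : c (app1 w z) = i) :
    PE c i (L+1) (shf w z) := by
  obtain ⟨x, hx, hend, hedge⟩ := hPE
  refine ⟨fun r => if h : r.1 < L + (m+2) then x ⟨r.1, h⟩ else z, ?_, ?_, ?_⟩
  · intro a b hab
    have hab' : a.1 < b.1 := hab
    by_cases hb : b.1 < L + (m+2)
    · have ha : a.1 < L + (m+2) := by omega
      simp only [dif_pos ha, dif_pos hb]
      exact hx (show a.1 < b.1 from hab')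
    · have ha : a.1 < L + (m+2) := by have hb2 := b.2; omega
      simp only [dif_pos ha, dif_neg hb]
      calc x ⟨a.1, ha⟩ ≤ x ⟨L + (m+1), by omega⟩ :=
            hx.monotone (show a.1 ≤ L + (m+1) by have hb2 := b.2; omega)
        _ = w ⟨m+1, by omega⟩ := hend ⟨m+1, by omega⟩
        _ < z := hz
  · intro r
    by_cases hr : r.1 + 1 < m + 2
    · have h1 : L + 1 + r.1 < L + (m+2) := by omega
      simp only [dif_pos h1, shf, dif_pos hr]
      have h2 := hend ⟨r.1 + 1, hr⟩
      rw [← h2]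
      exact congrArg x (Fin.ext (by simp; omega))
    · have h1 : ¬ (L + 1 + r.1 < L + (m+2)) := by have := r.2; omega
      simp only [dif_neg h1, shf, dif_neg hr]
  · intro j hj
    by_cases hjL : j < L
    · have heq : (fun s : Fin (m+3) => (fun r : Fin (L+1+(m+2)) =>
          if h : r.1 < L + (m+2) then x ⟨r.1, h⟩ else z) ⟨j + s.1, by have := s.2; omega⟩)
          = (fun s : Fin (m+3) => x ⟨j + s.1, by have := s.2; omega⟩) := by
        funext s
        have hs : j + s.1 < L + (m+2) := by have := s.2; omega
        simp only [dif_pos hs]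
      rw [heq]
      exact hedge j hjL
    · have hjL' : j = L := by omega
      subst hjL'
      have heq : (fun s : Fin (m+3) => (fun r : Fin (j+1+(m+2)) =>
          if h : r.1 < j + (m+2) then x ⟨r.1, h⟩ else z) ⟨j + s.1, by have := s.2; omega⟩)
          = app1 w z := by
        funext s
        by_cases hs : s.1 < m + 2
        · have hs' : j + s.1 < j + (m+2) := by omega
          simp only [dif_pos hs', app1, dif_pos hs]
          exact hend ⟨s.1, hs⟩
        · have hs' : ¬ (j + s.1 < j + (m+2)) := by omega
          simp only [dif_neg hs', app1, dif_neg hs]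
      rw [heq]
      exact hc

theorem PE_bound {c : (Fin (m+3) → Fin N) → Fin q} {i : Fin q} {L : ℕ}
    {w : Fin (m+2) → Fin N} (hnp : ¬ HasMonoPathK (m+3) n c) (hPE : PE c i L w) :
    L < n := by
  by_contra hL
  push_neg at hL
  obtain ⟨x, hx, hend, hedge⟩ := hPE
  apply hnp
  refine ⟨fun r => x ⟨r.1, by have := r.2; omega⟩, ?_, i, ?_⟩
  · intro a b hab
    have hab' : a.1 < b.1 := hab
    exact hx (show (⟨a.1, _⟩ : Fin (L+(m+2))) < ⟨b.1, _⟩ from hab')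
  · intro i0 hi0
    exact hedge i0 (by omega)

end Stmt15Aux

namespace Stmt15Aux

variable {m n N q : ℕ}

/-- Longest monochromatic color-`i` path ending with `w`. -/
noncomputable def aV (c : (Fin (m+3) → Fin N) → Fin q) (i : Fin q)
    (w : Fin (m+2) → Fin N) : ℕ :=
  sSup {L | PE c i L w}

theorem aV_mem {c : (Fin (m+3) → Fin N) → Fin q} (hnp : ¬ HasMonoPathK (m+3) n c)
    {i : Fin q} {w : Fin (m+2) → Fin N} (hw : StrictMono w) :
    PE c i (aV c i w) w :=
  Nat.sSup_mem ⟨0, PE_zero c i w hw⟩ ⟨n, fun _ hL => le_of_lt (PE_bound hnp hL)⟩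

theorem aV_lt {c : (Fin (m+3) → Fin N) → Fin q} (hnp : ¬ HasMonoPathK (m+3) n c)
    {i : Fin q} {w : Fin (m+2) → Fin N} (hw : StrictMono w) :
    aV c i w < n :=
  PE_bound hnp (aV_mem hnp hw)

theorem le_aV {c : (Fin (m+3) → Fin N) → Fin q} (hnp : ¬ HasMonoPathK (m+3) n c)
    {i : Fin q} {L : ℕ} {w : Fin (m+2) → Fin N} (hPE : PE c i L w) :
    L ≤ aV c i w :=
  le_csSup ⟨n, fun _ hL => le_of_lt (PE_bound hnp hL)⟩ hPE

/-- prepend one vertex -/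
def con1 (u : Fin N) (e : Fin (m+1) → Fin N) : Fin (m+2) → Fin N :=
  fun r => if h : 0 < r.1 then e ⟨r.1 - 1, by have := r.2; omega⟩ else u

/-- The key reduction: if every `T`-coloring of the `(m+1)`-subsets of `[N]` has a
monochromatic path of length 2, and `T` is at least the number of down-sets of the grid
`Fin q → Fin n`, then every `q`-coloring of the `(m+3)`-subsets of `[N]` has a
monochromatic path of length `n`. -/
theorem RED (hn : 2 ≤ n)
    (hT : Nat.card {A : Set (Fin q → Fin n) // IsLowerSet A} ≤ T)
    (hN : ∀ ψ : (Fin (m+1) → Fin N) → Fin T, HasMonoPathK (m+1) 2 ψ)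
    (c : (Fin (m+3) → Fin N) → Fin q) : HasMonoPathK (m+3) n c := by
  by_contra hnp
  set G := Fin q → Fin n with hG
  set σ := {A : Set G // IsLowerSet A} with hσ
  have hσne : Nonempty σ := ⟨⟨∅, isLowerSet_empty⟩⟩
  -- the down-set associated to an (m+1)-tuple
  set DS : (Fin (m+1) → Fin N) → Set G := fun e =>
    {v | ∃ u : Fin N, u < e 0 ∧ StrictMono (con1 u e) ∧
      ∀ i : Fin q, (v i : ℕ) ≤ aV c i (con1 u e)} with hDS
  have hDSlow : ∀ e, IsLowerSet (DS e) := by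
    intro e v' v hle hv
    obtain ⟨u, hu, hsm, hall⟩ := hv
    exact ⟨u, hu, hsm, fun i => le_trans (by exact_mod_cast hle i) (hall i)⟩
  set toIdx : σ → Fin T := fun A => Fin.castLE hT (Finite.equivFin σ A) with htoIdx
  have htoIdxInj : Function.Injective toIdx := by
    intro a b hab
    apply (Finite.equivFin σ).injective
    have h' := congrArg Fin.val hab
    exact Fin.ext h'
  set ψ : (Fin (m+1) → Fin N) → Fin T := fun e =>
    if h : StrictMono e then toIdx ⟨DS e, hDSlow e⟩ else toIdx ⟨∅, isLowerSet_empty⟩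
    with hψ
  obtain ⟨x, hx, col, hcol⟩ := hN ψ
  -- the two windows
  have hbd : ∀ r : ℕ, r < m + 2 → r < 2 + (m+1) - 1 := by omega
  set W0 : Fin (m+1) → Fin N := fun j => x ⟨0 + j.1, by have := j.2; omega⟩ with hW0
  set W1 : Fin (m+1) → Fin N := fun j => x ⟨1 + j.1, by have := j.2; omega⟩ with hW1
  have hW0sm : StrictMono W0 := by
    intro a b hab
    exact hx (show (0:ℕ) + a.1 < 0 + b.1 from by have : a.1 < b.1 := hab; omega)
  have hW1sm : StrictMono W1 := by
    intro a b hab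
    exact hx (show (1:ℕ) + a.1 < 1 + b.1 from by have : a.1 < b.1 := hab; omega)
  have h0 := hcol 0 (by omega)
  have h1 := hcol 1 (by omega)
  have hDSeq : DS W0 = DS W1 := by
    have e0 : ψ W0 = col := h0
    have e1 : ψ W1 = col := h1
    rw [hψ] at e0 e1
    simp only [dif_pos hW0sm, dif_pos hW1sm] at e0 e1
    have := htoIdxInj (e0.trans e1.symm)
    exact congrArg Subtype.val this
  -- the full (m+2)-window
  set ys : Fin (m+2) → Fin N := fun r => x ⟨r.1, by have := r.2; omega⟩ with hys
  have hyssm : StrictMono ys := by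
    intro a b hab
    exact hx (show a.1 < b.1 from hab)
  have hconW1 : con1 (ys 0) W1 = ys := by
    funext r
    by_cases hr : 0 < r.1
    · show (if h : 0 < r.1 then W1 ⟨r.1 - 1, _⟩ else ys 0) = ys r
      rw [dif_pos hr]
      show x ⟨1 + (r.1 - 1), _⟩ = x ⟨r.1, _⟩
      exact congrArg x (Fin.ext (by simp; omega))
    · show (if h : 0 < r.1 then W1 ⟨r.1 - 1, _⟩ else ys 0) = ys r
      rw [dif_neg hr]
      show x ⟨(0:ℕ), _⟩ = x ⟨r.1, _⟩
      exact congrArg x (Fin.ext (by simp; omega))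
  -- the vector of longest path-lengths ending at ys
  set vstar : G := fun i => ⟨aV c i ys, aV_lt hnp hyssm⟩ with hvstar
  have hv1 : vstar ∈ DS W1 := by
    refine ⟨ys 0, ?_, ?_, ?_⟩
    · show x ⟨(0:ℕ), _⟩ < x ⟨1 + (0 : Fin (m+1)).1, _⟩
      exact hx (show (0:ℕ) < 1 + (0 : Fin (m+1)).1 by omega)
    · rw [hconW1]; exact hyssm
    · rw [hconW1]; exact fun i => le_refl _
  have hv0 : vstar ∈ DS W0 := hDSeq ▸ hv1
  obtain ⟨u, hu, hsm, hall⟩ := hv0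
  -- extend the longest path of the color of the new edge
  set w1 : Fin (m+2) → Fin N := con1 u W0 with hw1
  set z : Fin N := ys ⟨m+1, by omega⟩ with hz0
  have hzlt : w1 ⟨m+1, by omega⟩ < z := by
    show (if h : 0 < (m+1) then W0 ⟨m+1-1, _⟩ else u) < z
    rw [dif_pos (by omega : 0 < m+1)]
    show x ⟨0 + (m+1-1), _⟩ < x ⟨m+1, _⟩
    exact hx (show 0 + (m+1-1) < m+1 by omega)
  set ccol : Fin q := c (app1 w1 z) with hccol
  have hext : PE c ccol (aV c ccol w1 + 1) (shf w1 z) :=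
    PE_extend (aV_mem hnp hsm) hzlt rfl
  have hshf : shf w1 z = ys := by
    funext r
    by_cases hr : r.1 + 1 < m + 2
    · show (if h : r.1 + 1 < m+2 then w1 ⟨r.1+1, h⟩ else z) = ys r
      rw [dif_pos hr]
      show (if h : 0 < r.1+1 then W0 ⟨r.1+1-1, _⟩ else u) = ys r
      rw [dif_pos (by omega : 0 < r.1+1)]
      show x ⟨0 + (r.1+1-1), _⟩ = x ⟨r.1, _⟩
      exact congrArg x (Fin.ext (show 0 + (r.1+1-1) = r.1 by omega))
    · show (if h : r.1 + 1 < m+2 then w1 ⟨r.1+1, h⟩ else z) = ys r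
      rw [dif_neg hr]
      show x ⟨m+1, _⟩ = x ⟨r.1, _⟩
      exact congrArg x (Fin.ext (show m+1 = r.1 by have := r.2; omega))
  rw [hshf] at hext
  have h2 : aV c ccol w1 + 1 ≤ aV c ccol ys := le_aV hnp hext
  have h3 : aV c ccol ys ≤ aV c ccol w1 := hall ccol
  omega


/-- Lower bound: a `q`-coloring of the triples of a set of size equal to the
number of down-sets of the grid `Fin q → Fin n`, with no monochromatic monotone path of
length `n`. -/
theorem LOW {q n : ℕ} (hq : 1 ≤ q) (hn : 1 ≤ n) :
    ∃ c : (Fin 3 → Fin (Nat.card {A : Set (Fin q → Fin n) // IsLowerSet A})) → Fin q,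
      ¬ HasMonoPathK 3 n c := by
  classical
  set G := Fin q → Fin n with hGdef
  set σ := {A : Set G // IsLowerSet A} with hσdef
  set D := Nat.card σ with hDdef
  letI : Fintype σ := Fintype.ofFinite σ
  letI : Fintype (LinearExtension σ) := (inferInstance : Fintype σ)
  have hcard : Fintype.card (LinearExtension σ) = D := by
    show Fintype.card σ = Nat.card σ
    exact Nat.card_eq_fintype_card.symm
  set vert := monoEquivOfFin (LinearExtension σ) hcard with hvert
  set sets : LinearExtension σ → Set G := fun a => (show σ from a).1 with hsets
  have lower : ∀ a, IsLowerSet (sets a) := fun a => (show σ from a).2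
  have key : ∀ a b : LinearExtension σ, a < b → (sets b \ sets a).Nonempty := by
    intro a b hab
    rw [Set.diff_nonempty]
    intro hsub
    have hba := toLinearExtension.monotone'
      (show (⟨sets b, lower b⟩ : σ) ≤ ⟨sets a, lower a⟩ from hsub)
    have hba' : b ≤ a := hba
    exact absurd (lt_of_lt_of_le hab hba') (lt_irrefl a)
  set pt : LinearExtension σ → LinearExtension σ → G := fun a b =>
    if h : (sets b \ sets a).Nonempty then h.some else (fun _ => ⟨0, hn⟩) with hpt
  have hptmem : ∀ a b : LinearExtension σ, a < b → pt a b ∈ sets b \ sets a := by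
    intro a b hab
    show (if h : (sets b \ sets a).Nonempty then h.some else (fun _ => ⟨0, hn⟩)) ∈ _
    rw [dif_pos (key a b hab)]
    exact (key a b hab).some_mem
  set coordOf : LinearExtension σ → LinearExtension σ → LinearExtension σ → Fin q :=
    fun a b c' => if h : ∃ i, pt a b i < pt b c' i then h.choose else ⟨0, hq⟩ with hcoordOf
  have hcoord : ∀ a b c' : LinearExtension σ, a < b → b < c' →
      pt a b (coordOf a b c') < pt b c' (coordOf a b c') := by
    intro a b c' hab hbc
    have h1 := hptmem a b hab
    have h2 := hptmem b c' hbc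
    have hnle : ¬ (pt b c' ≤ pt a b) := by
      intro hle
      exact h2.2 (lower b hle h1.1)
    have hex : ∃ i, pt a b i < pt b c' i := by
      rw [Pi.le_def] at hnle
      push_neg at hnle
      exact hnle
    show pt a b (if h : ∃ i, pt a b i < pt b c' i then h.choose else ⟨0, hq⟩) <
      pt b c' (if h : ∃ i, pt a b i < pt b c' i then h.choose else ⟨0, hq⟩)
    rw [dif_pos hex]
    exact hex.choose_spec
  refine ⟨fun f => coordOf (vert (f 0)) (vert (f 1)) (vert (f 2)), ?_⟩
  rintro ⟨x, hx, col, hcol⟩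
  -- `x : Fin (n + 3 - 1) → Fin D`
  have hminbd : ∀ j : ℕ, min j (n+1) < n + 3 - 1 := by omega
  set u : ℕ → LinearExtension σ := fun j => vert (x ⟨min j (n+1), hminbd j⟩) with hu
  set Q : ℕ → ℕ := fun j => (pt (u j) (u (j+1)) col).1 with hQ
  have step : ∀ j : ℕ, ∀ hj : j < n, Q j < Q (j+1) := by
    intro j hj
    have e0 : u j = vert (x ⟨j, by omega⟩) :=
      congrArg vert (congrArg x (Fin.ext (show min j (n+1) = j by omega)))
    have e1 : u (j+1) = vert (x ⟨j+1, by omega⟩) :=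
      congrArg vert (congrArg x (Fin.ext (show min (j+1) (n+1) = j+1 by omega)))
    have e2 : u (j+2) = vert (x ⟨j+2, by omega⟩) :=
      congrArg vert (congrArg x (Fin.ext (show min (j+2) (n+1) = j+2 by omega)))
    have hc : coordOf (vert (x ⟨j, by omega⟩)) (vert (x ⟨j+1, by omega⟩))
        (vert (x ⟨j+2, by omega⟩)) = col := hcol j hj
    have hcu : coordOf (u j) (u (j+1)) (u (j+2)) = col := by
      rw [e0, e1, e2]; exact hc
    have h01 : u j < u (j+1) :=
      vert.strictMono (hx (show min j (n+1) < min (j+1) (n+1) by omega))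
    have h12 : u (j+1) < u (j+2) :=
      vert.strictMono (hx (show min (j+1) (n+1) < min (j+2) (n+1) by omega))
    have hlt := hcoord _ _ _ h01 h12
    rw [hcu] at hlt
    exact hlt
  have mono : ∀ j : ℕ, j ≤ n → j ≤ Q j := by
    intro j
    induction j with
    | zero => intro _; omega
    | succ j ih =>
      intro hj
      have h1 := ih (by omega)
      have h2 := step j (by omega)
      omega
  have hfin := mono n (le_refl n)
  have hQlt : Q n < n := (pt (u n) (u (n+1)) col).2
  omega


/-- Transport a path along `Fin.castLE`. -/
theorem TRANS {k n q N M : ℕ} (h : N ≤ M) (c : (Fin k → Fin M) → Fin q)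
    (hp : HasMonoPathK k n (fun v : Fin k → Fin N => c (fun j => Fin.castLE h (v j)))) :
    HasMonoPathK k n c := by
  obtain ⟨x, hx, col, hcol⟩ := hp
  refine ⟨fun r => Fin.castLE h (x r), ?_, col, ?_⟩
  · intro a b hab
    exact hx hab
  · intro i0 hi0
    exact hcol i0 hi0

/-- One-vertex path helper for uniformity 1. -/
theorem base1 (T : ℕ) : ∀ ψ : (Fin 1 → Fin (T+1)) → Fin T, HasMonoPathK 1 2 ψ := by
  intro ψ
  have hpig := Fintype.exists_ne_map_eq_of_card_lt
    (fun v : Fin (T+1) => ψ (fun _ => v)) (by simp)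
  have main : ∀ v w : Fin (T+1), v < w →
      ψ (fun _ => v) = ψ (fun _ => w) → HasMonoPathK 1 2 ψ := by
    intro v w hvw heq
    refine ⟨fun r : Fin (2+1-1) => if r.1 = 0 then v else w, ?_, ψ (fun _ => v), ?_⟩
    · intro a b hab
      have hab' : a.1 < b.1 := hab
      have hb2 : b.1 < 2 := b.2
      have ha : a.1 = 0 := by omega
      have hb : ¬ (b.1 = 0) := by omega
      show (if a.1 = 0 then v else w) < (if b.1 = 0 then v else w)
      rw [if_pos ha, if_neg hb]
      exact hvw
    · intro i0 hi0
      interval_cases i0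
      · have : (fun j : Fin 1 => if (0 + j.1 = 0) then v else w) = (fun _ : Fin 1 => v) := by
          funext j
          have := j.2
          rw [if_pos (by omega)]
        show ψ (fun j : Fin 1 => if (0 + j.1 = 0) then v else w) = _
        rw [this]
      · have : (fun j : Fin 1 => if (1 + j.1 = 0) then v else w) = (fun _ : Fin 1 => w) := by
          funext j
          rw [if_neg (by omega)]
        show ψ (fun j : Fin 1 => if (1 + j.1 = 0) then v else w) = _
        rw [this]
        exact heq.symm
  obtain ⟨v, w, hne, heq⟩ := hpig
  rcases lt_or_gt_of_ne hne with hvw | hvw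
  · exact main v w hvw heq
  · exact main w v hvw heq.symm

/-- Pair-path helper for uniformity 2. -/
theorem base2 (T : ℕ) : ∀ ψ : (Fin 2 → Fin (2^T+1)) → Fin T, HasMonoPathK 2 2 ψ := by
  classical
  intro ψ
  set pr : Fin (2^T+1) → Fin (2^T+1) → (Fin 2 → Fin (2^T+1)) :=
    fun a b => (fun r => if r.1 = 0 then a else b) with hpr
  set g : Fin (2^T+1) → (Fin T → Bool) :=
    fun v i => decide (∃ u, u < v ∧ ψ (pr u v) = i) with hg
  have hpig := Fintype.exists_ne_map_eq_of_card_lt g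
    (by simp)
  have main : ∀ v w : Fin (2^T+1), v < w → g v = g w → HasMonoPathK 2 2 ψ := by
    intro v w hvw heq
    have hgw : g w (ψ (pr v w)) = true := decide_eq_true ⟨v, hvw, rfl⟩
    have hgv : g v (ψ (pr v w)) = true := by
      rw [congrFun heq (ψ (pr v w))]
      exact hgw
    obtain ⟨u, huv, hu⟩ := of_decide_eq_true hgv
    refine ⟨fun r : Fin (2+2-1) => if r.1 = 0 then u else if r.1 = 1 then v else w, ?_,
      ψ (pr v w), ?_⟩
    · intro a b hab
      have hab' : a.1 < b.1 := hab
      have hb2 : b.1 < 3 := b.2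
      show (if a.1 = 0 then u else if a.1 = 1 then v else w) <
        (if b.1 = 0 then u else if b.1 = 1 then v else w)
      rcases (show (a.1 = 0 ∧ b.1 = 1) ∨ (a.1 = 0 ∧ b.1 = 2) ∨ (a.1 = 1 ∧ b.1 = 2)
        from by omega) with h | h | h
      · rw [if_pos h.1, if_neg (by omega), if_pos (by omega : b.1 = 1)]
        exact huv
      · rw [if_pos h.1, if_neg (by omega), if_neg (by omega)]
        exact lt_trans huv hvw
      · rw [if_neg (by omega), if_pos h.1, if_neg (by omega), if_neg (by omega)]
        exact hvw
    · intro i0 hi0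
      interval_cases i0
      · have hwin : (fun j : Fin 2 => if (0 + j.1 = 0) then u else if (0 + j.1 = 1) then v else w)
            = pr u v := by
          funext j
          have hj2 : j.1 < 2 := j.2
          rcases (show j.1 = 0 ∨ j.1 = 1 from by omega) with h | h
          · rw [if_pos (by omega)]
            show _ = (if j.1 = 0 then u else v)
            rw [if_pos h]
          · rw [if_neg (by omega), if_pos (by omega)]
            show _ = (if j.1 = 0 then u else v)
            rw [if_neg (by omega)]
        show ψ (fun j : Fin 2 => if (0 + j.1 = 0) then u else if (0 + j.1 = 1) then v else w) = _
        rw [hwin]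
        exact hu
      · have hwin : (fun j : Fin 2 => if (1 + j.1 = 0) then u else if (1 + j.1 = 1) then v else w)
            = pr v w := by
          funext j
          have hj2 : j.1 < 2 := j.2
          rcases (show j.1 = 0 ∨ j.1 = 1 from by omega) with h | h
          · rw [if_neg (by omega), if_pos (by omega)]
            show _ = (if j.1 = 0 then v else w)
            rw [if_pos h]
          · rw [if_neg (by omega), if_neg (by omega)]
            show _ = (if j.1 = 0 then v else w)
            rw [if_neg (by omega)]
        show ψ (fun j : Fin 2 => if (1 + j.1 = 0) then u else if (1 + j.1 = 1) then v else w) = _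
        rw [hwin]
  obtain ⟨v, w, hne, heq⟩ := hpig
  rcases lt_or_gt_of_ne hne with hvw | hvw
  · exact main v w hvw heq
  · exact main w v hvw heq.symm

/-- Existence of Ramsey numbers for monotone paths of length 2. -/
theorem EXIST : ∀ k : ℕ, ∀ T : ℕ, 1 ≤ k →
    ∃ N : ℕ, ∀ ψ : (Fin k → Fin N) → Fin T, HasMonoPathK k 2 ψ := by
  intro k
  induction k using Nat.strong_induction_on with
  | _ k IH =>
    intro T hk
    match k, hk with
    | 1, _ => exact ⟨T+1, base1 T⟩
    | 2, _ => exact ⟨2^T+1, base2 T⟩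
    | (m+3), _ =>
      obtain ⟨N, hN⟩ := IH (m+1) (by omega)
        (Nat.card {A : Set (Fin T → Fin 2) // IsLowerSet A}) (by omega)
      exact ⟨N, fun ψ => RED (by omega) (le_refl _) hN ψ⟩

end Stmt15Aux

open Stmt15Aux

/-- `N_k(q,n)`: the least `N` such that every `q`-coloring of the `k`-subsets of
`{1,…,N}` contains a monochromatic monotone path of length `n`. -/
noncomputable def Nk (k q n : ℕ) : ℕ :=
  sInf {N : ℕ | ∀ c : (Fin k → Fin N) → Fin q, HasMonoPathK k n c}

/-- For every `k ≥ 4`, `q ≥ 2`, `n ≥ 2`: `N_k(q,n) ≤ N_{k-2}(N_3(q,n) − 1, 2)`. -/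
theorem stmt15 (k q n : ℕ) (hk : 4 ≤ k) (hq : 2 ≤ q) (hn : 2 ≤ n) :
    Nk k q n ≤ Nk (k - 2) (Nk 3 q n - 1) 2 := by
  classical
  by_cases h3 : {N : ℕ | ∀ c : (Fin 3 → Fin N) → Fin q, HasMonoPathK 3 n c}.Nonempty
  · obtain ⟨m, rfl⟩ : ∃ m, k = m + 3 := ⟨k - 3, by omega⟩
    have hmem3 : Nk 3 q n ∈ {N : ℕ | ∀ c : (Fin 3 → Fin N) → Fin q, HasMonoPathK 3 n c} :=
      Nat.sInf_mem h3
    obtain ⟨cbad, hcbad⟩ := LOW (q := q) (n := n) (by omega) (by omega)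
    have hD1 : Nat.card {A : Set (Fin q → Fin n) // IsLowerSet A} + 1 ≤ Nk 3 q n := by
      by_contra hcon
      push_neg at hcon
      have hle : Nk 3 q n ≤ Nat.card {A : Set (Fin q → Fin n) // IsLowerSet A} := by omega
      exact hcbad (TRANS hle cbad (hmem3 _))
    have hT : Nat.card {A : Set (Fin q → Fin n) // IsLowerSet A} ≤ Nk 3 q n - 1 := by omega
    obtain ⟨N0, hN0⟩ := EXIST (m+1) (Nk 3 q n - 1) (by omega)
    have hne' : {N : ℕ | ∀ ψ : (Fin (m+3-2) → Fin N) → Fin (Nk 3 q n - 1),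
        HasMonoPathK (m+3-2) 2 ψ}.Nonempty := ⟨N0, hN0⟩
    have hM := Nat.sInf_mem hne'
    apply Nat.sInf_le
    show ∀ c : (Fin (m+3) → Fin (Nk (m+3-2) (Nk 3 q n - 1) 2)) → Fin q,
      HasMonoPathK (m+3) n c
    intro c
    exact RED hn hT hM c
  · have hempty : {N : ℕ | ∀ c : (Fin k → Fin N) → Fin q, HasMonoPathK k n c} = ∅ := by
      rw [Set.eq_empty_iff_forall_notMem]
      intro N hN
      apply h3
      refine ⟨N, ?_⟩
      intro ψ
      obtain ⟨x, hx, col, hcol⟩ :=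
        hN (fun v => ψ (fun j : Fin 3 => v (Fin.castLE (by omega : 3 ≤ k) j)))
      refine ⟨fun r : Fin (n+3-1) => x ⟨r.1, by have := r.2; omega⟩, ?_, col, ?_⟩
      · intro a b hab
        exact hx (show a.1 < b.1 from hab)
      · intro i0 hi0
        exact hcol i0 hi0
    show Nk k q n ≤ _
    unfold Nk
    rw [hempty, Nat.sInf_empty]
    exact Nat.zero_le _
end
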